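/- arXiv:1610.00341 — 4 statements merged into one kernel-verified Lean document; each statement's English description precedes it below -/
import Mathlib

section
/- Let P be a lattice (d,k)-polytope, let u be a vertex of P, and let c ∈ ℤ^d. Set γ = min{c·x : x ∈ P} and F = {x ∈ P : c·x = γ}. Then the graph distance from u to the face F satisfies d(u,F) ≤ c·u − γ. -/
open scoped BigOperators

/-- A lattice `(d,k)`-polytope: the convex hull in `ℝ^d` of a finite set of points
all of whose coordinates are integers between `0` and `k`. -/
def IsLatticePolytope (d k : ℕ) (P : Set (Fin d → ℝ)) : Prop :=
  ∃ V : Finset (Fin d → ℝ),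
    (∀ v ∈ V, ∀ i : Fin d, ∃ n : ℕ, n ≤ k ∧ v i = n) ∧
    P = convexHull ℝ (V : Set (Fin d → ℝ))

/-- The graph of a polytope `P`: its nodes are the vertices (extreme points) of `P`,
and `u`, `v` are adjacent when the segment `[u,v]` is a `1`-dimensional face
(an extreme subset) of `P`. -/
def polytopeGraph {d : ℕ} (P : Set (Fin d → ℝ)) : SimpleGraph (Fin d → ℝ) where
  Adj u v := u ≠ v ∧ u ∈ P.extremePoints ℝ ∧ v ∈ P.extremePoints ℝ ∧
    IsExtreme ℝ P (segment ℝ u v)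
  symm := by
    constructor
    rintro u v ⟨h1, h2, h3, h4⟩
    exact ⟨h1.symm, h3, h2, by rwa [segment_symm]⟩
  loopless := by constructor; rintro u ⟨h1, -⟩; exact h1 rfl

/-- The diameter `δ(P)` of the graph of a polytope `P`. -/
noncomputable def polyDiam {d : ℕ} (P : Set (Fin d → ℝ)) : ℕ :=
  sSup { n : ℕ | ∃ u ∈ P.extremePoints ℝ, ∃ v ∈ P.extremePoints ℝ,
    (polytopeGraph P).dist u v = n }

/-- The distance `d(u,F)` from a vertex `u` of `P` to a face `F` of `P`:
the minimum over the vertices `v` of `F` of the graph distance `d(u,v)`. -/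
noncomputable def distToFace {d : ℕ} (P : Set (Fin d → ℝ)) (u : Fin d → ℝ)
    (F : Set (Fin d → ℝ)) : ℕ :=
  sInf { n : ℕ | ∃ v ∈ F.extremePoints ℝ, (polytopeGraph P).dist u v = n }

/-- `δ(d,k)`: the largest possible diameter of the graph of a lattice `(d,k)`-polytope. -/
noncomputable def latticeDiam (d k : ℕ) : ℕ :=
  sSup { n : ℕ | ∃ P : Set (Fin d → ℝ), IsLatticePolytope d k P ∧ polyDiam P = n }

namespace DTFAux

variable {d : ℕ}

lemma le_on_hull (W : Finset (Fin d → ℝ)) (l : (Fin d → ℝ) →L[ℝ] ℝ) (m : ℝ)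
    (h : ∀ w ∈ W, m ≤ l w) :
    ∀ x ∈ convexHull ℝ (W : Set (Fin d → ℝ)), m ≤ l x := by
  intro x hx
  have hsub : convexHull ℝ (W : Set (Fin d → ℝ)) ⊆ {y | m ≤ l y} := by
    apply convexHull_min
    · intro w hw
      exact h w (Finset.mem_coe.mp hw)
    · exact convex_halfSpace_ge (l.toLinearMap.isLinear) m
  exact hsub hx

lemma face_hull_eq (W : Finset (Fin d → ℝ)) (l : (Fin d → ℝ) →L[ℝ] ℝ) (m : ℝ)
    (hm : ∀ w ∈ W, m ≤ l w) :
    {x ∈ convexHull ℝ (W : Set (Fin d → ℝ)) | l x = m}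
      = convexHull ℝ ((W.filter (fun w => l w = m) : Finset (Fin d → ℝ)) : Set (Fin d → ℝ)) := by
  ext x
  constructor
  · rintro ⟨hxh, hxm⟩
    rw [Finset.convexHull_eq] at hxh
    obtain ⟨wt, hwt0, hwt1, hcm⟩ := hxh
    have hxeq : x = ∑ y ∈ W, wt y • y := by
      rw [← hcm, Finset.centerMass, hwt1, inv_one, one_smul]
      simp
    have hlx : l x = ∑ y ∈ W, wt y * l y := by
      rw [hxeq, map_sum]
      simp [smul_eq_mul]
    have hzero : ∑ y ∈ W, wt y * (l y - m) = 0 := by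
      have : ∑ y ∈ W, wt y * (l y - m) = (∑ y ∈ W, wt y * l y) - (∑ y ∈ W, wt y) * m := by
        rw [Finset.sum_mul, ← Finset.sum_sub_distrib]
        congr 1; ext y; ring
      rw [this, ← hlx, hxm, hwt1, one_mul, sub_self]
    have hterm : ∀ y ∈ W, wt y * (l y - m) = 0 :=
      (Finset.sum_eq_zero_iff_of_nonneg (fun y hy =>
        mul_nonneg (hwt0 y hy) (sub_nonneg.mpr (hm y hy)))).mp hzero
    have hsupp : ∀ y ∈ W, wt y ≠ 0 → l y = m := by
      intro y hy hne
      have := hterm y hy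
      rcases mul_eq_zero.mp this with h | h
      · exact absurd h hne
      · linarith [sub_eq_zero.mp h]
    have hx2 : x = (W.filter (fun y => wt y ≠ 0)).centerMass wt id := by
      rw [Finset.centerMass_filter_ne_zero, hcm]
    rw [hx2]
    apply Finset.centerMass_mem_convexHull
    · intro i hi
      exact hwt0 i (Finset.mem_filter.mp hi).1
    · rw [Finset.sum_filter_ne_zero, hwt1]; exact one_pos
    · intro i hi
      obtain ⟨hiW, hine⟩ := Finset.mem_filter.mp hi
      exact Finset.mem_coe.mpr (Finset.mem_filter.mpr ⟨hiW, hsupp i hiW hine⟩)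
  · intro hx
    have hsub : (W.filter (fun w => l w = m) : Finset (Fin d → ℝ)) ⊆ W := Finset.filter_subset _ _
    refine ⟨convexHull_mono (Finset.coe_subset.mpr hsub) hx, ?_⟩
    have h1 : m ≤ l x := le_on_hull _ l m (fun w hw => (Finset.mem_filter.mp hw).2.symm.le) x hx
    have h2' : ∀ w ∈ W.filter (fun w => l w = m), -m ≤ (-l) w := by
      intro w hw
      simp [(Finset.mem_filter.mp hw).2]
    have := le_on_hull _ (-l) (-m) h2' x hx
    simp only [ContinuousLinearMap.neg_apply, neg_le_neg_iff] at this
    linarith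

lemma isExtreme_min_face (W : Finset (Fin d → ℝ)) (l : (Fin d → ℝ) →L[ℝ] ℝ) (m : ℝ)
    (hm : ∀ w ∈ W, m ≤ l w) (hmem : ∃ w ∈ W, l w = m) :
    IsExtreme ℝ (convexHull ℝ (W : Set (Fin d → ℝ)))
      {x ∈ convexHull ℝ (W : Set (Fin d → ℝ)) | l x = m} := by
  obtain ⟨w0, hw0W, hw0m⟩ := hmem
  have hexp : IsExposed ℝ (convexHull ℝ (W : Set (Fin d → ℝ)))
      {x ∈ convexHull ℝ (W : Set (Fin d → ℝ)) | l x = m} := by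
    intro _
    refine ⟨-l, ?_⟩
    ext x
    simp only [Set.mem_setOf_eq, ContinuousLinearMap.neg_apply, neg_le_neg_iff]
    constructor
    · rintro ⟨hxP, hxm⟩
      exact ⟨hxP, fun y hy => by rw [hxm]; exact le_on_hull W l m hm y hy⟩
    · rintro ⟨hxP, hxmin⟩
      refine ⟨hxP, le_antisymm ?_ (le_on_hull W l m hm x hxP)⟩
      have := hxmin w0 (subset_convexHull ℝ _ (Finset.mem_coe.mpr hw0W))
      rwa [hw0m] at this
  exact hexp.isExtreme

lemma uniqueMin_extremePoint (W : Finset (Fin d → ℝ)) (l : (Fin d → ℝ) →L[ℝ] ℝ)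
    (v : Fin d → ℝ) (hv : v ∈ W) (h : ∀ w ∈ W, w ≠ v → l v < l w) :
    v ∈ (convexHull ℝ (W : Set (Fin d → ℝ))).extremePoints ℝ := by
  have hm : ∀ w ∈ W, l v ≤ l w := by
    intro w hw
    rcases eq_or_ne w v with rfl | hne
    · exact le_rfl
    · exact (h w hw hne).le
  have hface := isExtreme_min_face W l (l v) hm ⟨v, hv, rfl⟩
  have hfilter : W.filter (fun w => l w = l v) = {v} := by
    ext w
    simp only [Finset.mem_filter, Finset.mem_singleton]
    constructor
    · rintro ⟨hwW, hwl⟩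
      by_contra hne
      exact absurd hwl (ne_of_gt (h w hwW hne))
    · rintro rfl
      exact ⟨hv, rfl⟩
  have hset : {x ∈ convexHull ℝ (W : Set (Fin d → ℝ)) | l x = l v} = {v} := by
    rw [face_hull_eq W l (l v) hm, hfilter]
    simp
  rw [hset] at hface
  exact hface.mem_extremePoints

lemma exists_separator (W : Finset (Fin d → ℝ)) (u : Fin d → ℝ)
    (hu : u ∉ convexHull ℝ ((W.erase u : Finset (Fin d → ℝ)) : Set (Fin d → ℝ))) :
    ∃ ψ : (Fin d → ℝ) →L[ℝ] ℝ, ∀ v ∈ W, v ≠ u → ψ u < ψ v := by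
  obtain ⟨ψ, s, hus, hs⟩ := geometric_hahn_banach_point_closed
    (convex_convexHull ℝ _) ((W.erase u).finite_toSet.isClosed_convexHull (𝕜 := ℝ)) hu
  refine ⟨ψ, fun v hv hne => lt_trans hus (hs v ?_)⟩
  exact subset_convexHull ℝ _ (Finset.mem_coe.mpr (Finset.mem_erase.mpr ⟨hne, hv⟩))

lemma tilt (W : Finset (Fin d → ℝ)) (u : Fin d → ℝ) (hu : u ∈ W)
    (ψ φ : (Fin d → ℝ) →L[ℝ] ℝ)
    (hψ : ∀ v ∈ W, v ≠ u → ψ u < ψ v) (hφ : ∃ v ∈ W, φ v < φ u) :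
    ∃ t : ℝ, 0 < t ∧ t < 1 ∧
      (∀ v ∈ W, (1-t) * ψ u + t * φ u ≤ (1-t) * ψ v + t * φ v) ∧
      (∀ v ∈ W, v ≠ u → (1-t) * ψ v + t * φ v = (1-t) * ψ u + t * φ u → φ v < φ u) ∧
      (∃ v ∈ W, v ≠ u ∧ (1-t) * ψ v + t * φ v = (1-t) * ψ u + t * φ u) := by
  classical
  set S : Finset (Fin d → ℝ) := W.filter (fun v => φ v < φ u) with hS
  have hSne : S.Nonempty := by
    obtain ⟨v, hvW, hvφ⟩ := hφ
    exact ⟨v, Finset.mem_filter.mpr ⟨hvW, hvφ⟩⟩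
  have hSneu : ∀ v ∈ S, v ≠ u := by
    intro v hv
    have := (Finset.mem_filter.mp hv).2
    intro h; rw [h] at this; exact lt_irrefl _ this
  have hSa : ∀ v ∈ S, 0 < ψ v - ψ u := by
    intro v hv
    have := hψ v (Finset.mem_filter.mp hv).1 (hSneu v hv)
    linarith
  have hSc : ∀ v ∈ S, 0 < φ u - φ v := by
    intro v hv
    have := (Finset.mem_filter.mp hv).2
    linarith
  set r : (Fin d → ℝ) → ℝ := fun v => (ψ v - ψ u) / ((ψ v - ψ u) + (φ u - φ v)) with hr
  have hrpos : ∀ v ∈ S, 0 < r v := fun v hv =>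
    div_pos (hSa v hv) (by linarith [hSa v hv, hSc v hv])
  have hrlt : ∀ v ∈ S, r v < 1 := by
    intro v hv
    rw [hr]
    rw [div_lt_one (by linarith [hSa v hv, hSc v hv])]
    linarith [hSc v hv]
  set t : ℝ := S.inf' hSne r with ht
  have ht0 : 0 < t := (Finset.lt_inf'_iff hSne).mpr hrpos
  obtain ⟨v0, hv0S, hv0r⟩ := Finset.exists_mem_eq_inf' hSne r
  have htv0 : t = r v0 := hv0r
  have ht1 : t < 1 := by
    rw [htv0]
    exact hrlt v0 hv0S
  -- key algebra : for v ∈ S, f v - f u = (ψ v - ψ u) - t * ((ψ v - ψ u) + (φ u - φ v))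
  have hkey : ∀ v : Fin d → ℝ,
      ((1-t) * ψ v + t * φ v) - ((1-t) * ψ u + t * φ u)
        = (ψ v - ψ u) - t * ((ψ v - ψ u) + (φ u - φ v)) := by
    intro v; ring
  refine ⟨t, ht0, ht1, ?_, ?_, ?_⟩
  · intro v hvW
    rcases eq_or_ne v u with rfl | hne
    · exact le_rfl
    by_cases hvS : v ∈ S
    · have hle : t ≤ r v := Finset.inf'_le r hvS
      have hpos : 0 < (ψ v - ψ u) + (φ u - φ v) := by linarith [hSa v hvS, hSc v hvS]
      have : t * ((ψ v - ψ u) + (φ u - φ v)) ≤ ψ v - ψ u := by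
        rw [hr] at hle
        calc t * ((ψ v - ψ u) + (φ u - φ v))
            ≤ ((ψ v - ψ u) / ((ψ v - ψ u) + (φ u - φ v))) * ((ψ v - ψ u) + (φ u - φ v)) := by
              apply mul_le_mul_of_nonneg_right hle hpos.le
          _ = ψ v - ψ u := by field_simp
      have := hkey v
      linarith
    · have hvφ : φ u ≤ φ v := by
        by_contra hlt
        exact hvS (Finset.mem_filter.mpr ⟨hvW, lt_of_not_ge hlt⟩)
      have ha := hψ v hvW hne
      nlinarith
  · intro v hvW hne heq
    by_contra hge
    have hvφ : φ u ≤ φ v := le_of_not_gt hge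
    have ha := hψ v hvW hne
    have := hkey v
    rw [heq] at this
    nlinarith
  · refine ⟨v0, (Finset.mem_filter.mp hv0S).1, hSneu v0 hv0S, ?_⟩
    have hpos : 0 < (ψ v0 - ψ u) + (φ u - φ v0) := by linarith [hSa v0 hv0S, hSc v0 hv0S]
    have : t * ((ψ v0 - ψ u) + (φ u - φ v0)) = ψ v0 - ψ u := by
      rw [htv0, hr]
      field_simp
    have hk := hkey v0
    linarith

set_option maxHeartbeats 1000000 in
lemma key : ∀ n : ℕ, ∀ W : Finset (Fin d → ℝ), W.card ≤ n → ∀ u, u ∈ W →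
    u ∉ convexHull ℝ ((W.erase u : Finset (Fin d → ℝ)) : Set (Fin d → ℝ)) →
    ∀ φ : (Fin d → ℝ) →L[ℝ] ℝ, (∃ w ∈ W, φ w < φ u) →
    ∃ v, v ≠ u ∧ φ v < φ u ∧
      v ∈ (convexHull ℝ (W : Set (Fin d → ℝ))).extremePoints ℝ ∧
      IsExtreme ℝ (convexHull ℝ (W : Set (Fin d → ℝ))) (segment ℝ u v) := by
  intro n
  induction n with
  | zero =>
    intro W hcard u huW _ φ _
    have : W.card ≠ 0 := Finset.card_ne_zero_of_mem huW
    omega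
  | succ n ih =>
    intro W hcard u huW hunot φ hφ
    classical
    obtain ⟨ψ, hψ⟩ := exists_separator W u hunot
    obtain ⟨t, ht0, ht1, hmin0, htie0, v0, hv0W, hv0ne, hv0eq0⟩ := tilt W u huW ψ φ hψ hφ
    set f : (Fin d → ℝ) →L[ℝ] ℝ := (1-t) • ψ + t • φ with hf
    have hfapp : ∀ x, f x = (1-t) * ψ x + t * φ x := by
      intro x
      simp [hf, ContinuousLinearMap.add_apply, ContinuousLinearMap.smul_apply, smul_eq_mul]
    have hmin : ∀ w ∈ W, f u ≤ f w := by
      intro w hw; rw [hfapp, hfapp]; exact hmin0 w hw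
    have htie : ∀ v ∈ W, v ≠ u → f v = f u → φ v < φ u := by
      intro v hv hne heq; rw [hfapp, hfapp] at heq; exact htie0 v hv hne heq
    have hv0eq : f v0 = f u := by rw [hfapp, hfapp]; exact hv0eq0
    set W1 : Finset (Fin d → ℝ) := W.filter (fun v => f v = f u) with hW1
    have hu1 : u ∈ W1 := Finset.mem_filter.mpr ⟨huW, rfl⟩
    have hsub : W1 ⊆ W := Finset.filter_subset _ _
    have hface : IsExtreme ℝ (convexHull ℝ (W : Set (Fin d → ℝ)))
        (convexHull ℝ (W1 : Set (Fin d → ℝ))) := by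
      have h1 := isExtreme_min_face W f (f u) hmin ⟨u, huW, rfl⟩
      rwa [face_hull_eq W f (f u) hmin] at h1
    by_cases hWW : W1 = W
    · -- degenerate tie case : the tilt functional is constant on W
      have hallφ : ∀ v ∈ W, v ≠ u → φ v < φ u := by
        intro v hv hne
        have hv1 : v ∈ W1 := hWW ▸ hv
        exact htie v hv hne (Finset.mem_filter.mp hv1).2
      by_cases hdeg : ∀ i : Fin d, ∃ α β : ℝ, ∀ v ∈ W, v i = α + β * ψ v
      · -- W is collinear
        choose α β hαβ using hdeg
        obtain ⟨vm, hvmW, hvmmax⟩ := W.exists_max_image (fun v => ψ v) ⟨u, huW⟩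
        have hψv0 : ψ u < ψ v0 := hψ v0 hv0W hv0ne
        have hψvm : ψ u < ψ vm := lt_of_lt_of_le hψv0 (hvmmax v0 hv0W)
        have hvmne : vm ≠ u := by
          intro h; rw [h] at hψvm; exact lt_irrefl _ hψvm
        have hψlo : ∀ w ∈ W, ψ u ≤ ψ w := by
          intro w hw
          rcases eq_or_ne w u with rfl | hne
          · exact le_rfl
          · exact (hψ w hw hne).le
        have hden : 0 < ψ vm - ψ u := by linarith
        have hsegW : ∀ w ∈ W, w ∈ segment ℝ u vm := by
          intro w hw
          set θ : ℝ := (ψ w - ψ u)/(ψ vm - ψ u) with hθ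
          have hθ0 : 0 ≤ θ := div_nonneg (by linarith [hψlo w hw]) hden.le
          have hθ1 : θ ≤ 1 := by
            rw [hθ, div_le_one hden]
            linarith [hvmmax w hw]
          refine ⟨1-θ, θ, by linarith, hθ0, by ring, ?_⟩
          funext i
          have h1 := hαβ i w hw
          have h2 := hαβ i u huW
          have h3 := hαβ i vm hvmW
          simp only [Pi.add_apply, Pi.smul_apply, smul_eq_mul]
          rw [h1, h2, h3, hθ]
          field_simp
          ring
        have hhull : convexHull ℝ (W : Set (Fin d → ℝ)) = segment ℝ u vm := by
          apply subset_antisymm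
          · exact convexHull_min (fun w hw => hsegW w (Finset.mem_coe.mp hw)) (convex_segment u vm)
          · exact segment_subset_convexHull (Finset.mem_coe.mpr huW) (Finset.mem_coe.mpr hvmW)
        have hvmext : vm ∈ (convexHull ℝ (W : Set (Fin d → ℝ))).extremePoints ℝ := by
          apply uniqueMin_extremePoint W (-ψ) vm hvmW
          intro w hw hne
          simp only [ContinuousLinearMap.neg_apply, neg_lt_neg_iff]
          rcases lt_or_eq_of_le (hvmmax w hw) with h | h
          · exact h
          · exfalso
            apply hne
            funext i
            rw [hαβ i w hw, hαβ i vm hvmW, h]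
        refine ⟨vm, hvmne, hallφ vm hvmW hvmne, hvmext, ?_⟩
        rw [hhull]
      · -- non collinear : retilt with a generic functional
        push_neg at hdeg
        obtain ⟨i, hi⟩ := hdeg
        set η : (Fin d → ℝ) →L[ℝ] ℝ := ContinuousLinearMap.proj i with hη
        have hηapp : ∀ x : Fin d → ℝ, η x = x i := fun x => rfl
        have ha0 : 0 < ψ v0 - ψ u := by linarith [hψ v0 hv0W hv0ne]
        set δ : ℝ := (ψ v0 - ψ u) / (2 * (|v0 i - u i| + 1)) with hδ
        have habs : (0:ℝ) < |v0 i - u i| + 1 := by positivity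
        have hδ0 : 0 < δ := div_pos ha0 (by positivity)
        set φ' : (Fin d → ℝ) →L[ℝ] ℝ := δ • η - ψ with hφ'
        have hφ'app : ∀ x, φ' x = δ * x i - ψ x := by
          intro x
          simp [hφ', ContinuousLinearMap.sub_apply, ContinuousLinearMap.smul_apply,
            smul_eq_mul, hηapp]
        have hφ'lt : φ' v0 < φ' u := by
          rw [hφ'app, hφ'app]
          have h1 : δ * v0 i - δ * u i ≤ δ * |v0 i - u i| := by
            rw [← mul_sub]
            exact mul_le_mul_of_nonneg_left (le_abs_self _) hδ0.le
          have h2 : δ * (|v0 i - u i| + 1) = (ψ v0 - ψ u) / 2 := by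
            rw [hδ]; field_simp
          nlinarith
        obtain ⟨t', ht'0, ht'1, hmin0', htie0', v0', hv0'W, hv0'ne, hv0'eq0⟩ :=
          tilt W u huW ψ φ' hψ ⟨v0, hv0W, hφ'lt⟩
        set f' : (Fin d → ℝ) →L[ℝ] ℝ := (1-t') • ψ + t' • φ' with hf'
        have hf'app : ∀ x, f' x = (1-t') * ψ x + t' * φ' x := by
          intro x
          simp [hf', ContinuousLinearMap.add_apply, ContinuousLinearMap.smul_apply, smul_eq_mul]
        have hmin' : ∀ w ∈ W, f' u ≤ f' w := by
          intro w hw; rw [hf'app, hf'app]; exact hmin0' w hw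
        set W1' : Finset (Fin d → ℝ) := W.filter (fun v => f' v = f' u) with hW1'
        have hu1' : u ∈ W1' := Finset.mem_filter.mpr ⟨huW, rfl⟩
        have hsub' : W1' ⊆ W := Finset.filter_subset _ _
        have hface' : IsExtreme ℝ (convexHull ℝ (W : Set (Fin d → ℝ)))
            (convexHull ℝ (W1' : Set (Fin d → ℝ))) := by
          have h1 := isExtreme_min_face W f' (f' u) hmin' ⟨u, huW, rfl⟩
          rwa [face_hull_eq W f' (f' u) hmin'] at h1
        have hproper : W1' ≠ W := by
          intro heq
          have ht'δ : (0:ℝ) < t' * δ := mul_pos ht'0 hδ0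
          have hne' : t' * δ ≠ 0 := ne_of_gt ht'δ
          obtain ⟨v, hvW, hvne⟩ := hi (((1-t') * ψ u + t' * (δ * u i - ψ u)) / (t' * δ))
            ((2*t' - 1) / (t' * δ))
          apply hvne
          have hv1 : v ∈ W1' := heq ▸ hvW
          have hfv : f' v = f' u := (Finset.mem_filter.mp hv1).2
          rw [hf'app, hf'app, hφ'app, hφ'app] at hfv
          field_simp
          linear_combination hfv
        have hcard' : W1'.card ≤ n := by
          have : W1'.card < W.card := Finset.card_lt_card (ssubset_of_subset_of_ne hsub' hproper)
          omega
        have hunot1' : u ∉ convexHull ℝ ((W1'.erase u : Finset (Fin d → ℝ)) : Set (Fin d → ℝ)) := by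
          intro h
          exact hunot (convexHull_mono (Finset.coe_subset.mpr (Finset.erase_subset_erase u hsub')) h)
        have hv0'1 : v0' ∈ W1' := Finset.mem_filter.mpr ⟨hv0'W, by rw [hf'app, hf'app]; exact hv0'eq0⟩
        have hφ'v0' : φ' v0' < φ' u :=
          htie0' v0' hv0'W hv0'ne hv0'eq0
        obtain ⟨v, hvne, _, hvext, hedge⟩ :=
          ih W1' hcard' u hu1' hunot1' φ' ⟨v0', hv0'1, hφ'v0'⟩
        have hvW : v ∈ W := by
          have := extremePoints_convexHull_subset hvext
          exact hsub' (Finset.mem_coe.mp this)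
        exact ⟨v, hvne, hallφ v hvW hvne,
          hface'.extremePoints_subset_extremePoints hvext, hface'.trans hedge⟩
    · -- the tie face is a proper face : recurse
      have hcard1 : W1.card ≤ n := by
        have : W1.card < W.card := Finset.card_lt_card (ssubset_of_subset_of_ne hsub hWW)
        omega
      have hunot1 : u ∉ convexHull ℝ ((W1.erase u : Finset (Fin d → ℝ)) : Set (Fin d → ℝ)) := by
        intro h
        exact hunot (convexHull_mono (Finset.coe_subset.mpr (Finset.erase_subset_erase u hsub)) h)
      have hv01 : v0 ∈ W1 := Finset.mem_filter.mpr ⟨hv0W, hv0eq⟩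
      obtain ⟨v, hvne, hvφ, hvext, hedge⟩ :=
        ih W1 hcard1 u hu1 hunot1 φ ⟨v0, hv01, htie v0 hv0W hv0ne hv0eq⟩
      exact ⟨v, hvne, hvφ, hface.extremePoints_subset_extremePoints hvext, hface.trans hedge⟩

end DTFAux


/-- If `u` is a vertex of a lattice `(d,k)`-polytope `P`, `c ∈ ℤ^d`,
`γ = min {c·x : x ∈ P}`, and `F = {x ∈ P : c·x = γ}`, then `d(u,F) ≤ c·u − γ`. -/
theorem distToFace_le (d k : ℕ) (P : Set (Fin d → ℝ)) (hP : IsLatticePolytope d k P)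
    (u : Fin d → ℝ) (hu : u ∈ P.extremePoints ℝ)
    (c : Fin d → ℤ) (γ : ℝ)
    (hγ : IsLeast {t : ℝ | ∃ x ∈ P, ∑ i, (c i : ℝ) * x i = t} γ)
    (F : Set (Fin d → ℝ)) (hF : F = {x ∈ P | ∑ i, (c i : ℝ) * x i = γ}) :
    (distToFace P u F : ℝ) ≤ ∑ i, (c i : ℝ) * u i - γ := by
  classical
  obtain ⟨V, hVlat, hP⟩ := hP
  set φ : (Fin d → ℝ) →L[ℝ] ℝ := ∑ i : Fin d, (c i : ℝ) • (ContinuousLinearMap.proj i) with hφdef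
  have hφapp : ∀ x : Fin d → ℝ, φ x = ∑ i, (c i : ℝ) * x i := by
    intro x
    rw [hφdef]
    simp [ContinuousLinearMap.sum_apply, ContinuousLinearMap.smul_apply,
      ContinuousLinearMap.proj_apply, smul_eq_mul]
  have hint : ∀ v ∈ V, ∃ z : ℤ, φ v = (z : ℝ) := by
    intro v hv
    choose nv hnv using hVlat v hv
    refine ⟨∑ i, (c i) * (nv i : ℤ), ?_⟩
    rw [hφapp]
    push_cast
    refine Finset.sum_congr rfl fun i _ => ?_
    rw [(hnv i).2]
  obtain ⟨x0, hx0P, hx0γ⟩ := hγ.1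
  have hγle : ∀ x ∈ P, γ ≤ φ x := by
    intro x hx
    rw [hφapp]
    exact hγ.2 ⟨x, hx, rfl⟩
  have hVne : V.Nonempty := by
    by_contra h
    rw [Finset.not_nonempty_iff_eq_empty] at h
    rw [hP, h] at hx0P
    simp at hx0P
  obtain ⟨w, hwV, hwmin⟩ := V.exists_min_image (fun v => φ v) hVne
  have hwP : w ∈ P := by
    rw [hP]; exact subset_convexHull ℝ _ (Finset.mem_coe.mpr hwV)
  have hx0h : x0 ∈ convexHull ℝ (V : Set (Fin d → ℝ)) := by rw [← hP]; exact hx0P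
  have hwγ : φ w = γ := by
    have h1 : γ ≤ φ w := hγle w hwP
    have h2 : φ w ≤ φ x0 := DTFAux.le_on_hull V φ (φ w) (fun y hy => hwmin y hy) x0 hx0h
    have h3 : φ x0 = γ := by rw [hφapp]; exact hx0γ
    linarith
  have hFP : F ⊆ P := by rw [hF]; exact Set.sep_subset _ _
  have base : ∀ u', u' ∈ P.extremePoints ℝ → φ u' = γ → u' ∈ F.extremePoints ℝ := by
    intro u' hu' heq
    have hu'F : u' ∈ F := by
      rw [hF]
      exact ⟨hu'.1, by rw [← hφapp]; exact heq⟩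
    exact inter_extremePoints_subset_extremePoints_of_subset hFP ⟨hu'F, hu'⟩
  have aux : ∀ n : ℕ, ∀ u', u' ∈ P.extremePoints ℝ → φ u' - γ ≤ n →
      ∃ v', v' ∈ F.extremePoints ℝ ∧ ((polytopeGraph P).dist u' v' : ℝ) ≤ φ u' - γ := by
    intro n
    induction n with
    | zero =>
      intro u' hu' hle
      have h1 : γ ≤ φ u' := hγle u' hu'.1
      have heq : φ u' = γ := by
        have : ((0:ℕ):ℝ) = 0 := by norm_num
        rw [this] at hle
        linarith
      refine ⟨u', base u' hu' heq, ?_⟩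
      rw [SimpleGraph.dist_self]
      simp [heq]
    | succ n ihn =>
      intro u' hu' hle
      by_cases heq : φ u' = γ
      · refine ⟨u', base u' hu' heq, ?_⟩
        rw [SimpleGraph.dist_self]
        simp [heq]
      · have hlt : γ < φ u' := lt_of_le_of_ne (hγle u' hu'.1) (Ne.symm heq)
        have hu'h : u' ∈ (convexHull ℝ (V : Set (Fin d → ℝ))).extremePoints ℝ := by
          rw [← hP]; exact hu'
        have hu'V : u' ∈ V := Finset.mem_coe.mp (extremePoints_convexHull_subset hu'h)
        have hu'not : u' ∉ convexHull ℝ ((V.erase u' : Finset (Fin d → ℝ)) : Set (Fin d → ℝ)) := by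
          intro hmem
          have hsub2 : convexHull ℝ ((V.erase u' : Finset (Fin d → ℝ)) : Set (Fin d → ℝ))
              ⊆ convexHull ℝ (V : Set (Fin d → ℝ)) :=
            convexHull_mono (Finset.coe_subset.mpr (Finset.erase_subset u' V))
          have hext : u' ∈ (convexHull ℝ ((V.erase u' : Finset (Fin d → ℝ)) :
              Set (Fin d → ℝ))).extremePoints ℝ :=
            inter_extremePoints_subset_extremePoints_of_subset hsub2 ⟨hmem, hu'h⟩
          have hmem2 := extremePoints_convexHull_subset hext
          rw [Finset.mem_coe, Finset.mem_erase] at hmem2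
          exact hmem2.1 rfl
        obtain ⟨v, hvne, hvφ, hvext, hedge⟩ := DTFAux.key V.card V le_rfl u' hu'V hu'not φ
          ⟨w, hwV, by rw [hwγ]; exact hlt⟩
        have hvV : v ∈ V := Finset.mem_coe.mp (extremePoints_convexHull_subset hvext)
        obtain ⟨zu, hzu⟩ := hint u' hu'V
        obtain ⟨zv, hzv⟩ := hint v hvV
        have hdrop : φ v ≤ φ u' - 1 := by
          rw [hzu, hzv] at hvφ ⊢
          have hzz : zv < zu := by exact_mod_cast hvφ
          have h4 : zv ≤ zu - 1 := by omega
          have h5 : (zv:ℝ) ≤ ((zu - 1 : ℤ) : ℝ) := by exact_mod_cast h4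
          push_cast at h5 ⊢
          linarith
        have hvP : v ∈ P.extremePoints ℝ := by rw [hP]; exact hvext
        have hle' : φ v - γ ≤ (n:ℝ) := by
          push_cast at hle
          linarith
        obtain ⟨v', hv'F, hv'd⟩ := ihn v hvP hle'
        have hadj : (polytopeGraph P).Adj u' v := by
          refine ⟨Ne.symm hvne, hu', hvP, ?_⟩
          rw [hP]
          exact hedge
        have hγu' : 0 ≤ φ u' - γ := by linarith
        have hgoal : ((polytopeGraph P).dist u' v' : ℝ) ≤ φ u' - γ := by
          by_cases hr : (polytopeGraph P).Reachable v v'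
          · obtain ⟨p, hp⟩ := hr.exists_walk_length_eq_dist
            have hq := SimpleGraph.dist_le (SimpleGraph.Walk.cons hadj p)
            rw [SimpleGraph.Walk.length_cons, hp] at hq
            have hq' : ((polytopeGraph P).dist u' v' : ℝ)
                ≤ ((polytopeGraph P).dist v v' : ℝ) + 1 := by exact_mod_cast hq
            linarith
          · by_cases hr2 : (polytopeGraph P).Reachable u' v'
            · exact absurd ((hadj.symm.reachable).trans hr2) hr
            · rw [SimpleGraph.dist_eq_zero_of_not_reachable hr2]
              push_cast
              linarith
        exact ⟨v', hv'F, hgoal⟩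
  obtain ⟨v', hv'F, hv'd⟩ := aux ⌈φ u - γ⌉₊ u hu (Nat.le_ceil _)
  have hmem : (polytopeGraph P).dist u v' ∈
      {n : ℕ | ∃ v ∈ F.extremePoints ℝ, (polytopeGraph P).dist u v = n} := ⟨v', hv'F, rfl⟩
  have hinf : distToFace P u F ≤ (polytopeGraph P).dist u v' := Nat.sInf_le hmem
  calc (distToFace P u F : ℝ) ≤ ((polytopeGraph P).dist u v' : ℝ) := by exact_mod_cast hinf
    _ ≤ φ u - γ := hv'd
    _ = ∑ i, (c i : ℝ) * u i - γ := by rw [hφapp]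
end

section
/- Let P be a lattice (d,k)-polytope and let u, v be two vertices of P. If I ⊆ {1,…,d} is a set of coordinate indices with |I| ≤ 3 such that u_i + v_i ≤ k for every i ∈ I, then the graph distance between u and v satisfies d(u,v) ≤ δ(d−|I|, k) + Σ_{i∈I} (u_i + v_i). -/
open scoped BigOperators

section Aux
variable {d : ℕ}

/-- Linear functional on `Fin d → ℝ` given by a coefficient vector. -/
def lfun (c : Fin d → ℝ) : (Fin d → ℝ) →ₗ[ℝ] ℝ where
  toFun x := ∑ i, c i * x i
  map_add' x y := by simp [mul_add, Finset.sum_add_distrib]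
  map_smul' r x := by
    simp only [Pi.smul_apply, smul_eq_mul, RingHom.id_apply, Finset.mul_sum]
    exact Finset.sum_congr rfl fun i _ => by ring

@[simp] lemma lfun_apply (c x : Fin d → ℝ) : lfun c x = ∑ i, c i * x i := rfl

lemma mem_extremePoints_of_subset {A B : Set (Fin d → ℝ)} {u : Fin d → ℝ}
    (hu : u ∈ A.extremePoints ℝ) (hBA : B ⊆ A) (huB : u ∈ B) :
    u ∈ B.extremePoints ℝ :=
  ⟨huB, fun _ hx _ hy hseg => hu.2 (hBA hx) (hBA hy) hseg⟩

lemma le_on_hull {V : Finset (Fin d → ℝ)} (f : (Fin d → ℝ) →ₗ[ℝ] ℝ) {b : ℝ}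
    (hVb : ∀ y ∈ V, b ≤ f y) : ∀ x ∈ convexHull ℝ (V : Set (Fin d → ℝ)), b ≤ f x := by
  intro x hx
  have : convexHull ℝ (V : Set (Fin d → ℝ)) ⊆ {w | b ≤ f w} :=
    convexHull_min (fun y hy => hVb y hy) (convex_halfSpace_ge f.isLinear b)
  exact this hx

lemma face_isExtreme {V : Finset (Fin d → ℝ)} (f : (Fin d → ℝ) →ₗ[ℝ] ℝ) {m : ℝ}
    (hmin : ∀ y ∈ V, m ≤ f y) :
    IsExtreme ℝ (convexHull ℝ (V : Set (Fin d → ℝ)))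
      {x ∈ convexHull ℝ (V : Set (Fin d → ℝ)) | f x = m} := by
  constructor
  · exact fun x hx => hx.1
  · rintro x1 hx1 x2 hx2 z ⟨hzP, hzf⟩ hzseg
    obtain ⟨a, b, ha, hb, hab, rfl⟩ := hzseg
    have hfx1 : m ≤ f x1 := le_on_hull f hmin x1 hx1
    have hfx2 : m ≤ f x2 := le_on_hull f hmin x2 hx2
    have hfz : f (a • x1 + b • x2) = a * f x1 + b * f x2 := by
      simp [map_add, map_smul, smul_eq_mul]
    have h1 : f x1 = m := by
      by_contra hne
      have h1' : m < f x1 := lt_of_le_of_ne hfx1 (Ne.symm hne)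
      have : a * m < a * f x1 := by exact mul_lt_mul_of_pos_left h1' ha
      have h2' : b * m ≤ b * f x2 := mul_le_mul_of_nonneg_left hfx2 hb.le
      have hm : a * m + b * m = m := by rw [← add_mul, hab, one_mul]
      linarith
    have h2 : f x2 = m := by
      by_contra hne
      have h2' : m < f x2 := lt_of_le_of_ne hfx2 (Ne.symm hne)
      have : b * m < b * f x2 := mul_lt_mul_of_pos_left h2' hb
      have h1' : a * m ≤ a * f x1 := mul_le_mul_of_nonneg_left hfx1 ha.le
      have hm : a * m + b * m = m := by rw [← add_mul, hab, one_mul]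
      linarith
    exact ⟨hx1, h1⟩

lemma face_eq_hull {V : Finset (Fin d → ℝ)} (f : (Fin d → ℝ) →ₗ[ℝ] ℝ) {m : ℝ}
    (hmin : ∀ y ∈ V, m ≤ f y) [DecidablePred fun y => f y = m] :
    {x ∈ convexHull ℝ (V : Set (Fin d → ℝ)) | f x = m} =
      convexHull ℝ ((V.filter fun y => f y = m : Finset (Fin d → ℝ)) : Set (Fin d → ℝ)) := by
  apply Set.Subset.antisymm
  · rintro x ⟨hxP, hxf⟩
    rw [Finset.convexHull_eq] at hxP
    obtain ⟨w, hw0, hw1, hwx⟩ := hxP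
    have hcm : x = ∑ y ∈ V, w y • y := by
      rw [← hwx, Finset.centerMass_eq_of_sum_1 _ _ hw1]; rfl
    have hfx : ∑ y ∈ V, w y * f y = m := by
      rw [← hxf, hcm, map_sum]
      exact Finset.sum_congr rfl fun y _ => by simp [smul_eq_mul]
    have hzero : ∀ y ∈ V, w y * (f y - m) = 0 := by
      rw [← Finset.sum_eq_zero_iff_of_nonneg]
      · have : ∑ y ∈ V, w y * (f y - m) = (∑ y ∈ V, w y * f y) - (∑ y ∈ V, w y) * m := by
          rw [Finset.sum_mul, ← Finset.sum_sub_distrib]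
          exact Finset.sum_congr rfl fun y _ => by ring
        rw [this, hfx, hw1, one_mul, sub_self]
      · intro y hy
        exact mul_nonneg (hw0 y hy) (sub_nonneg.mpr (hmin y hy))
    have hsupp : ∀ y ∈ V, y ∉ V.filter (fun y => f y = m) → w y = 0 := by
      intro y hy hyn
      rcases mul_eq_zero.mp (hzero y hy) with h | h
      · exact h
      · exact absurd (Finset.mem_filter.mpr ⟨hy, by linarith [sub_eq_zero.mp h]⟩) hyn
    have hx2 : x = ∑ y ∈ V.filter (fun y => f y = m), w y • y := by
      rw [hcm]
      exact (Finset.sum_subset (Finset.filter_subset _ _)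
        (fun y hy hyn => by rw [hsupp y hy hyn, zero_smul])).symm
    have hw2 : ∑ y ∈ V.filter (fun y => f y = m), w y = 1 := by
      rw [← hw1]
      exact Finset.sum_subset (Finset.filter_subset _ _)
        (fun y hy hyn => hsupp y hy hyn)
    rw [hx2]
    have := Finset.centerMass_mem_convexHull (V.filter fun y => f y = m)
      (fun y hy => hw0 y (Finset.filter_subset _ _ hy)) (by rw [hw2]; norm_num)
      (fun y hy => Finset.mem_coe.mpr hy)
    rwa [Finset.centerMass_eq_of_sum_1 _ _ hw2] at this
  · intro x hx
    refine ⟨convexHull_mono (by exact_mod_cast Finset.filter_subset _ _) hx, ?_⟩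
    have hge : m ≤ f x := by
      apply le_on_hull f (V := V.filter fun y => f y = m) _ x hx
      intro y hy; exact (Finset.mem_filter.mp hy).2.ge
    have hle : f x ≤ m := by
      have := le_on_hull (V := V.filter fun y => f y = m) (-f) (b := -m) ?_ x hx
      · simpa using this
      · intro y hy; simp [(Finset.mem_filter.mp hy).2]
    linarith

end Aux
section Aux2
variable {d : ℕ}

-- key quantitative fact about a segment and the functional ⟪w - u, ·⟫
lemma seg_functional {u w : Fin d → ℝ} (hne : u ≠ w) :
    ∃ f : (Fin d → ℝ) →ₗ[ℝ] ℝ, f u < f w ∧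
      (∀ z ∈ segment ℝ u w, f z ≤ f w) ∧
      (∀ z ∈ segment ℝ u w, f z = f w → z = w) := by
  classical
  set c : Fin d → ℝ := w - u with hc
  refine ⟨lfun c, ?_, ?_, ?_⟩
  · have hD : 0 < ∑ i, c i * c i := by
      have hub : ∃ i, c i ≠ 0 := by
        by_contra h
        push_neg at h
        apply hne
        funext i
        have := h i
        simp [hc, sub_eq_zero] at this
        exact this.symm
      obtain ⟨i0, hi0⟩ := hub
      apply Finset.sum_pos' (fun i _ => mul_self_nonneg (c i))
      exact ⟨i0, Finset.mem_univ _, mul_self_pos.mpr hi0⟩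
    have : lfun c w - lfun c u = ∑ i, c i * c i := by
      simp only [lfun_apply, ← Finset.sum_sub_distrib]
      exact Finset.sum_congr rfl fun i _ => by simp [hc]; ring
    linarith
  · rintro z ⟨a, b, ha, hb, hab, rfl⟩
    have h1 : lfun c (a • u + b • w) = a * lfun c u + b * lfun c w := by
      simp [map_add, map_smul, smul_eq_mul]
    have hDle : lfun c u ≤ lfun c w := by
      have hD : 0 ≤ ∑ i, c i * c i := Finset.sum_nonneg (fun i _ => mul_self_nonneg _)
      have : lfun c w - lfun c u = ∑ i, c i * c i := by
        simp only [lfun_apply, ← Finset.sum_sub_distrib]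
        exact Finset.sum_congr rfl fun i _ => by simp [hc]; ring
      linarith
    have : a * lfun c u ≤ a * lfun c w := mul_le_mul_of_nonneg_left hDle ha
    have hm : a * lfun c w + b * lfun c w = lfun c w := by rw [← add_mul, hab, one_mul]
    linarith
  · rintro z ⟨a, b, ha, hb, hab, rfl⟩ heq
    have h1 : lfun c (a • u + b • w) = a * lfun c u + b * lfun c w := by
      simp [map_add, map_smul, smul_eq_mul]
    have hD : 0 < ∑ i, c i * c i := by
      have hub : ∃ i, c i ≠ 0 := by
        by_contra h
        push_neg at h
        apply hne; funext i
        have := h i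
        simp [hc, sub_eq_zero] at this
        exact this.symm
      obtain ⟨i0, hi0⟩ := hub
      apply Finset.sum_pos' (fun i _ => mul_self_nonneg (c i))
      exact ⟨i0, Finset.mem_univ _, mul_self_pos.mpr hi0⟩
    have hlt : lfun c u < lfun c w := by
      have : lfun c w - lfun c u = ∑ i, c i * c i := by
        simp only [lfun_apply, ← Finset.sum_sub_distrib]
        exact Finset.sum_congr rfl fun i _ => by simp [hc]; ring
      linarith
    have hm : a * lfun c w + b * lfun c w = lfun c w := by rw [← add_mul, hab, one_mul]
    have ha0 : a = 0 := by
      by_contra ha0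
      have ha' : 0 < a := lt_of_le_of_ne ha (Ne.symm ha0)
      have : a * lfun c u < a * lfun c w := mul_lt_mul_of_pos_left hlt ha'
      linarith
    have hb1 : b = 1 := by rw [ha0, zero_add] at hab; exact hab
    rw [ha0, hb1, zero_smul, one_smul, zero_add]

lemma right_mem_extremePoints_segment {u w : Fin d → ℝ} (hne : u ≠ w) :
    w ∈ (segment ℝ u w).extremePoints ℝ := by
  obtain ⟨f, hlt, hle, hext⟩ := seg_functional hne
  refine ⟨right_mem_segment ℝ u w, ?_⟩
  intro x hx y hy hseg
  obtain ⟨a, b, ha, hb, hab, habw⟩ := hseg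
  have hfx : f x ≤ f w := hle x hx
  have hfy : f y ≤ f w := hle y hy
  have hfw : a * f x + b * f y = f w := by
    rw [← habw]; simp [map_add, map_smul, smul_eq_mul]
  have hm : a * f w + b * f w = f w := by rw [← add_mul, hab, one_mul]
  have hfx' : f x = f w := by
    by_contra h
    have : f x < f w := lt_of_le_of_ne hfx h
    have : a * f x < a * f w := mul_lt_mul_of_pos_left this ha
    have : b * f y ≤ b * f w := mul_le_mul_of_nonneg_left hfy hb.le
    linarith
  have hfy' : f y = f w := by
    by_contra h
    have : f y < f w := lt_of_le_of_ne hfy h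
    have : b * f y < b * f w := mul_lt_mul_of_pos_left this hb
    have : a * f x ≤ a * f w := mul_le_mul_of_nonneg_left hfx ha.le
    linarith
  exact hext x hx hfx'

lemma exists_exposing {V : Finset (Fin d → ℝ)} {u : Fin d → ℝ}
    (hu : u ∈ (convexHull ℝ (V : Set (Fin d → ℝ))).extremePoints ℝ) :
    ∃ h : (Fin d → ℝ) →L[ℝ] ℝ, ∀ y ∈ V.erase u, h y < h u := by
  classical
  rcases (V.erase u).eq_empty_or_nonempty with he | hne
  · exact ⟨0, fun y hy => by rw [he] at hy; exact absurd hy (Finset.notMem_empty y)⟩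
  · have hnot : u ∉ convexHull ℝ ((V.erase u : Finset (Fin d → ℝ)) : Set (Fin d → ℝ)) := by
      intro hmem
      have hsub : convexHull ℝ ((V.erase u : Finset (Fin d → ℝ)) : Set (Fin d → ℝ)) ⊆
          convexHull ℝ (V : Set (Fin d → ℝ)) :=
        convexHull_mono (by exact_mod_cast Finset.erase_subset u V)
      have : u ∈ (convexHull ℝ ((V.erase u : Finset (Fin d → ℝ)) : Set (Fin d → ℝ))).extremePoints ℝ :=
        ⟨hmem, fun _ hx _ hy hseg => hu.2 (hsub hx) (hsub hy) hseg⟩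
      have := extremePoints_convexHull_subset this
      simp at this
    have hclosed : IsClosed (convexHull ℝ ((V.erase u : Finset (Fin d → ℝ)) : Set (Fin d → ℝ))) :=
      ((V.erase u).finite_toSet.isCompact_convexHull ℝ).isClosed
    obtain ⟨f, c, hfc, hcu⟩ := geometric_hahn_banach_closed_point
      (convex_convexHull ℝ _) hclosed hnot
    exact ⟨f, fun y hy => lt_trans (hfc y (subset_convexHull ℝ _ (Finset.mem_coe.mpr hy))) hcu⟩

end Aux2
section Aux3
variable {d : ℕ}

lemma edge_exists : ∀ (N : ℕ) (V : Finset (Fin d → ℝ)) (_ : V.card ≤ N) (u : Fin d → ℝ)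
    (_ : u ∈ V) (h : (Fin d → ℝ) →L[ℝ] ℝ) (_ : ∀ y ∈ V.erase u, h y < h u)
    (_ : (V.erase u).Nonempty),
    ∃ w ∈ V.erase u, IsExtreme ℝ (convexHull ℝ (V : Set (Fin d → ℝ))) (segment ℝ u w) := by
  intro N
  induction N with
  | zero =>
    intro V hN u hu _ _ _
    rw [Nat.le_zero, Finset.card_eq_zero] at hN
    rw [hN] at hu
    exact absurd hu (Finset.notMem_empty u)
  | succ N IH =>
    intro V hN u hu h hsep hne
    classical
    have hpos : ∀ y ∈ V.erase u, 0 < h u - h y := fun y hy => sub_pos.mpr (hsep y hy)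
    by_cases hcol : ∀ (jj : Fin d), ∀ v1 ∈ V.erase u, ∀ v2 ∈ V.erase u,
        (v1 jj - u jj) * (h u - h v2) = (v2 jj - u jj) * (h u - h v1)
    · -- collinear case : P is a segment
      obtain ⟨v0, hv0⟩ := hne
      set σ : Fin d → ℝ := fun jj => (v0 jj - u jj) / (h u - h v0) with hσ
      have hkey : ∀ v ∈ V.erase u, ∀ jj, v jj - u jj = (h u - h v) * σ jj := by
        intro v hv jj
        have := hcol jj v0 hv0 v hv
        have h0 : h u - h v0 ≠ 0 := (hpos v0 hv0).ne'
        field_simp [hσ]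
        simp only [hσ]
        rw [mul_div_assoc', eq_div_iff h0]
        linarith [this]
      obtain ⟨w, hw, hwmin⟩ := Finset.exists_min_image (V.erase u) (fun v => h v) ⟨v0, hv0⟩
      have hsub : (V : Set (Fin d → ℝ)) ⊆ segment ℝ u w := by
        intro y hy
        rcases eq_or_ne y u with rfl | hyu
        · exact left_mem_segment ℝ y w
        · have hyV : y ∈ V.erase u := Finset.mem_erase.mpr ⟨hyu, hy⟩
          set r : ℝ := (h u - h y) / (h u - h w) with hr
          have hwpos := hpos w hw
          have hypos := hpos y hyV
          have hr0 : 0 < r := div_pos hypos hwpos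
          have hr1 : r ≤ 1 := by
            rw [hr, div_le_one hwpos]
            have := hwmin y hyV
            linarith
          refine ⟨1 - r, r, by linarith, hr0.le, by ring, ?_⟩
          funext jj
          have h1 := hkey y hyV jj
          have h2 := hkey w hw jj
          have hrr : r * (h u - h w) = h u - h y := div_mul_cancel₀ _ hwpos.ne'
          have : (1 - r) * u jj + r * w jj = u jj + r * (w jj - u jj) := by ring
          simp only [Pi.add_apply, Pi.smul_apply, smul_eq_mul]
          rw [this, h2]
          have : u jj + r * ((h u - h w) * σ jj) = u jj + (r * (h u - h w)) * σ jj := by ring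
          rw [this, hrr, ← h1]
          ring
      have hseg : convexHull ℝ (V : Set (Fin d → ℝ)) = segment ℝ u w := by
        apply Set.Subset.antisymm
        · exact convexHull_min hsub (convex_segment u w)
        · rw [← convexHull_pair]
          apply convexHull_mono
          intro x hx
          rcases hx with rfl | hx
          · exact Finset.mem_coe.mpr hu
          · simp only [Set.mem_singleton_iff] at hx
            subst hx
            exact Finset.mem_coe.mpr (Finset.mem_of_mem_erase hw)
      exact ⟨w, hw, hseg ▸ IsExtreme.rfl⟩
    · -- non-collinear case : find a proper face containing u
      push_neg at hcol
      obtain ⟨jj, v1, hv1, v2, hv2, hneq⟩ := hcol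
      set s : (Fin d → ℝ) → ℝ := fun v => (v jj - u jj) / (h u - h v) with hs
      have hsne : s v1 ≠ s v2 := by
        intro hcontra
        apply hneq
        have e1 : v1 jj - u jj = s v1 * (h u - h v1) := (div_mul_cancel₀ _ (hpos v1 hv1).ne').symm
        have e2 : v2 jj - u jj = s v2 * (h u - h v2) := (div_mul_cancel₀ _ (hpos v2 hv2).ne').symm
        rw [e1, e2, hcontra]
        ring
      obtain ⟨z, hz, hzmin⟩ := Finset.exists_min_image (V.erase u) s ⟨v1, hv1⟩
      have hbig : ∃ y ∈ V.erase u, s z < s y := by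
        rcases eq_or_ne (s v1) (s z) with h1 | h1
        · exact ⟨v2, hv2, lt_of_le_of_ne (hzmin v2 hv2) (by rw [← h1]; exact fun hc => hsne hc)⟩
        · exact ⟨v1, hv1, lt_of_le_of_ne (hzmin v1 hv1) (Ne.symm h1)⟩
      obtain ⟨y2, hy2, hy2big⟩ := hbig
      set ψ : (Fin d → ℝ) →ₗ[ℝ] ℝ :=
        LinearMap.proj jj + s z • (h : (Fin d → ℝ) →ₗ[ℝ] ℝ) with hψ
      have hψval : ∀ x : Fin d → ℝ, ψ x = x jj + s z * h x := fun x => rfl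
      have hkey : ∀ v ∈ V.erase u, ψ v - ψ u = (h u - h v) * (s v - s z) := by
        intro v hv
        have e1 : v jj - u jj = s v * (h u - h v) := (div_mul_cancel₀ _ (hpos v hv).ne').symm
        rw [hψval, hψval]
        have : v jj + s z * h v - (u jj + s z * h u) = (v jj - u jj) - s z * (h u - h v) := by ring
        rw [this, e1]
        ring
      have hminV : ∀ y ∈ V, ψ u ≤ ψ y := by
        intro y hy
        rcases eq_or_ne y u with rfl | hyu
        · exact le_refl _
        · have hyV : y ∈ V.erase u := Finset.mem_erase.mpr ⟨hyu, hy⟩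
          have := hkey y hyV
          nlinarith [hpos y hyV, sub_nonneg.mpr (hzmin y hyV)]
      set T : Finset (Fin d → ℝ) := V.filter (fun y => ψ y = ψ u) with hT
      have huT : u ∈ T := Finset.mem_filter.mpr ⟨hu, rfl⟩
      have hzT : z ∈ T := by
        refine Finset.mem_filter.mpr ⟨Finset.mem_of_mem_erase hz, ?_⟩
        have := hkey z hz
        simp only [sub_self, mul_zero] at this
        linarith
      have hy2T : y2 ∉ T := by
        intro hcontra
        have h1 := (Finset.mem_filter.mp hcontra).2
        have h2 := hkey y2 hy2
        nlinarith [hpos y2 hy2]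
      have hTcard : T.card ≤ N := by
        have : T ⊂ V := ⟨Finset.filter_subset _ _,
          fun hsub => hy2T (hsub (Finset.mem_of_mem_erase hy2))⟩
        have := Finset.card_lt_card this
        omega
      have hface := face_eq_hull ψ hminV (m := ψ u)
      have hFext : IsExtreme ℝ (convexHull ℝ (V : Set (Fin d → ℝ)))
          (convexHull ℝ (T : Set (Fin d → ℝ))) := by
        have := face_isExtreme ψ hminV (m := ψ u)
        rwa [hface] at this
      obtain ⟨w, hwT, hwext⟩ := IH T hTcard u huT h
        (fun y hy => hsep y (Finset.mem_erase.mpr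
          ⟨(Finset.mem_erase.mp hy).1, Finset.filter_subset _ _ (Finset.mem_erase.mp hy).2⟩))
        ⟨z, Finset.mem_erase.mpr ⟨(Finset.mem_erase.mp hz).1, hzT⟩⟩
      refine ⟨w, Finset.mem_erase.mpr
        ⟨(Finset.mem_erase.mp hwT).1,
          Finset.filter_subset _ _ (Finset.mem_of_mem_erase hwT)⟩, ?_⟩
      exact hFext.trans hwext

end Aux3
section Aux4
variable {d : ℕ}

lemma improving_edge {V : Finset (Fin d → ℝ)} {u : Fin d → ℝ}
    (hu : u ∈ (convexHull ℝ (V : Set (Fin d → ℝ))).extremePoints ℝ)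
    (f : (Fin d → ℝ) →ₗ[ℝ] ℝ) (hlow : ∃ y ∈ V, f y < f u) :
    ∃ w ∈ V, (polytopeGraph (convexHull ℝ (V : Set (Fin d → ℝ)))).Adj u w ∧ f w < f u := by
  classical
  obtain ⟨w0, hw0V, hw0f⟩ := hlow
  have hw0u : w0 ≠ u := by intro h; rw [h] at hw0f; exact lt_irrefl _ hw0f
  have hw0e : w0 ∈ V.erase u := Finset.mem_erase.mpr ⟨hw0u, hw0V⟩
  obtain ⟨h, hsep⟩ := exists_exposing hu
  have huV : u ∈ V := by exact_mod_cast extremePoints_convexHull_subset hu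
  have hpos : ∀ y ∈ V.erase u, 0 < h u - h y := fun y hy => sub_pos.mpr (hsep y hy)
  set s : (Fin d → ℝ) → ℝ := fun v => (f v - f u) / (h u - h v) with hs
  obtain ⟨z, hz, hzmin⟩ := Finset.exists_min_image (V.erase u) s ⟨w0, hw0e⟩
  have hsneg : s z < 0 :=
    lt_of_le_of_lt (hzmin w0 hw0e) (div_neg_of_neg_of_pos (by linarith) (hpos w0 hw0e))
  set ψ : (Fin d → ℝ) →ₗ[ℝ] ℝ := f + s z • (h : (Fin d → ℝ) →ₗ[ℝ] ℝ) with hψ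
  have hψval : ∀ x : Fin d → ℝ, ψ x = f x + s z * h x := fun x => rfl
  have hkey : ∀ v ∈ V.erase u, ψ v - ψ u = (h u - h v) * (s v - s z) := by
    intro v hv
    have e1 : f v - f u = s v * (h u - h v) := (div_mul_cancel₀ _ (hpos v hv).ne').symm
    rw [hψval, hψval]
    have : f v + s z * h v - (f u + s z * h u) = (f v - f u) - s z * (h u - h v) := by ring
    rw [this, e1]; ring
  have hminV : ∀ y ∈ V, ψ u ≤ ψ y := by
    intro y hy
    rcases eq_or_ne y u with rfl | hyu
    · exact le_refl _
    · have hyV : y ∈ V.erase u := Finset.mem_erase.mpr ⟨hyu, hy⟩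
      have := hkey y hyV
      nlinarith [hpos y hyV, sub_nonneg.mpr (hzmin y hyV)]
  set T : Finset (Fin d → ℝ) := V.filter (fun y => ψ y = ψ u) with hT
  have huT : u ∈ T := Finset.mem_filter.mpr ⟨huV, rfl⟩
  have hzT : z ∈ T := by
    refine Finset.mem_filter.mpr ⟨Finset.mem_of_mem_erase hz, ?_⟩
    have := hkey z hz
    simp only [sub_self, mul_zero] at this
    linarith
  obtain ⟨w, hwT, hwext⟩ := edge_exists T.card T le_rfl u huT h
    (fun y hy => hsep y (Finset.mem_erase.mpr
      ⟨(Finset.mem_erase.mp hy).1, Finset.filter_subset _ _ (Finset.mem_erase.mp hy).2⟩))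
    ⟨z, Finset.mem_erase.mpr ⟨(Finset.mem_erase.mp hz).1, hzT⟩⟩
  have hface := face_eq_hull ψ hminV (m := ψ u)
  have hFext : IsExtreme ℝ (convexHull ℝ (V : Set (Fin d → ℝ)))
      (convexHull ℝ (T : Set (Fin d → ℝ))) := by
    have := face_isExtreme ψ hminV (m := ψ u)
    rwa [hface] at this
  have hPseg : IsExtreme ℝ (convexHull ℝ (V : Set (Fin d → ℝ))) (segment ℝ u w) :=
    hFext.trans hwext
  have hwu : w ≠ u := (Finset.mem_erase.mp hwT).1
  have hwV : w ∈ V := Finset.filter_subset _ _ (Finset.mem_of_mem_erase hwT)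
  have hwe : w ∈ V.erase u := Finset.mem_erase.mpr ⟨hwu, hwV⟩
  have hfw : f w < f u := by
    have hψw : ψ w = ψ u := (Finset.mem_filter.mp (Finset.mem_of_mem_erase hwT)).2
    rw [hψval, hψval] at hψw
    nlinarith [hpos w hwe]
  have hwext' : w ∈ (convexHull ℝ (V : Set (Fin d → ℝ))).extremePoints ℝ :=
    hPseg.extremePoints_subset_extremePoints (right_mem_extremePoints_segment (Ne.symm hwu))
  exact ⟨w, hwV, ⟨Ne.symm hwu, hu, hwext', hPseg⟩, hfw⟩

end Aux4

section Aux5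
variable {d : ℕ}

lemma walk_support_extreme {P : Set (Fin d → ℝ)} {a b : Fin d → ℝ}
    (w : (polytopeGraph P).Walk a b) :
    a ∈ P.extremePoints ℝ → ∀ x ∈ w.support, x ∈ P.extremePoints ℝ := by
  induction w with
  | nil =>
    intro ha x hx
    rw [SimpleGraph.Walk.support_nil] at hx
    simp at hx; rwa [hx]
  | cons hadj w' ih =>
    intro ha x hx
    rw [SimpleGraph.Walk.support_cons] at hx
    rcases List.mem_cons.mp hx with rfl | hx
    · exact ha
    · exact ih hadj.2.2.1 x hx

lemma dist_le_card {V : Finset (Fin d → ℝ)} {u v : Fin d → ℝ}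
    (hu : u ∈ (convexHull ℝ (V : Set (Fin d → ℝ))).extremePoints ℝ) :
    (polytopeGraph (convexHull ℝ (V : Set (Fin d → ℝ)))).dist u v ≤ V.card := by
  classical
  by_cases hr : (polytopeGraph (convexHull ℝ (V : Set (Fin d → ℝ)))).Reachable u v
  · obtain ⟨p, hp⟩ := hr.exists_walk_length_eq_dist
    have hb := SimpleGraph.Walk.bypass_isPath p
    have hlen : (polytopeGraph (convexHull ℝ (V : Set (Fin d → ℝ)))).dist u v ≤ p.bypass.length :=
      SimpleGraph.dist_le _
    have hsup : ∀ x ∈ p.bypass.support, x ∈ V := fun x hx => by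
      have hx' : x ∈ p.support := SimpleGraph.Walk.support_bypass_subset _ hx
      have := walk_support_extreme p hu x hx'
      exact_mod_cast extremePoints_convexHull_subset this
    have hnodup := hb.support_nodup
    have hlen2 : p.bypass.support.length ≤ V.card := by
      have h1 : p.bypass.support.toFinset ⊆ V := fun x hx =>
        hsup x (List.mem_toFinset.mp hx)
      calc p.bypass.support.length = p.bypass.support.toFinset.card :=
            (List.toFinset_card_of_nodup hnodup).symm
        _ ≤ V.card := Finset.card_le_card h1
    have hls := SimpleGraph.Walk.length_support p.bypass
    omega
  · rw [SimpleGraph.dist_eq_zero_of_not_reachable hr]; exact Nat.zero_le _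

lemma polyDiam_le_card {V : Finset (Fin d → ℝ)} :
    polyDiam (convexHull ℝ (V : Set (Fin d → ℝ))) ≤ V.card := by
  apply csSup_le'
  rintro n ⟨u, hu, v, hv, rfl⟩
  exact dist_le_card hu

lemma dist_le_polyDiam {V : Finset (Fin d → ℝ)} {u v : Fin d → ℝ}
    (hu : u ∈ (convexHull ℝ (V : Set (Fin d → ℝ))).extremePoints ℝ)
    (hv : v ∈ (convexHull ℝ (V : Set (Fin d → ℝ))).extremePoints ℝ) :
    (polytopeGraph (convexHull ℝ (V : Set (Fin d → ℝ)))).dist u v ≤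
      polyDiam (convexHull ℝ (V : Set (Fin d → ℝ))) := by
  apply le_csSup
  · exact ⟨V.card, by rintro n ⟨u', hu', v', hv', rfl⟩; exact dist_le_card hu'⟩
  · exact ⟨u, hu, v, hv, rfl⟩

lemma card_le_cube {V : Finset (Fin d → ℝ)} {k : ℕ}
    (hV : ∀ v ∈ V, ∀ i, ∃ n : ℕ, n ≤ k ∧ v i = n) : V.card ≤ (k+1)^d := by
  classical
  have hsub : V ⊆ (Finset.univ : Finset (Fin d → Fin (k+1))).image
      (fun f => fun i => ((f i : ℕ) : ℝ)) := by
    intro v hv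
    simp only [Finset.mem_image, Finset.mem_univ, true_and]
    choose n hn hvn using hV v hv
    refine ⟨fun i => ⟨n i, Nat.lt_succ_of_le (hn i)⟩, ?_⟩
    funext i; simp [(hvn i).symm]
  calc V.card ≤ _ := Finset.card_le_card hsub
    _ ≤ (Finset.univ : Finset (Fin d → Fin (k+1))).card := Finset.card_image_le
    _ = (k+1)^d := by simp [Finset.card_univ]

lemma polyDiam_le_pow {k : ℕ} {P : Set (Fin d → ℝ)} (hP : IsLatticePolytope d k P) :
    polyDiam P ≤ (k+1)^d := by
  obtain ⟨V, hV, rfl⟩ := hP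
  exact le_trans polyDiam_le_card (card_le_cube hV)

lemma dist_le_latticeDiam {k : ℕ} {P : Set (Fin d → ℝ)} (hP : IsLatticePolytope d k P)
    {u v : Fin d → ℝ} (hu : u ∈ P.extremePoints ℝ) (hv : v ∈ P.extremePoints ℝ) :
    (polytopeGraph P).dist u v ≤ latticeDiam d k := by
  have h2 : polyDiam P ≤ latticeDiam d k := by
    apply le_csSup
    · exact ⟨(k+1)^d, by rintro n ⟨P', hP', rfl⟩; exact polyDiam_le_pow hP'⟩
    · exact ⟨P, hP, rfl⟩
  have h1 : (polytopeGraph P).dist u v ≤ polyDiam P := by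
    obtain ⟨V, hV, rfl⟩ := hP
    exact dist_le_polyDiam hu hv
  omega

end Aux5
section Aux6
variable {k : ℕ}

lemma enc_inj : ∀ (d : ℕ) (g h : Fin d → ℕ), (∀ i, g i ≤ k) → (∀ i, h i ≤ k) →
    (∑ i, g i * (k+1)^(i : ℕ)) = (∑ i, h i * (k+1)^(i : ℕ)) → g = h := by
  intro d
  induction d with
  | zero => intro g h _ _ _; funext i; exact i.elim0
  | succ d ih =>
    intro g h hg hh heq
    rw [Fin.sum_univ_succ, Fin.sum_univ_succ] at heq
    have e : ∀ (g : Fin (d+1) → ℕ),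
        (∑ i : Fin d, g i.succ * (k+1)^((i.succ : Fin (d+1)) : ℕ)) =
          (k+1) * ∑ i : Fin d, g i.succ * (k+1)^(i : ℕ) := by
      intro g
      rw [Finset.mul_sum]
      refine Finset.sum_congr rfl fun i _ => ?_
      rw [Fin.val_succ, pow_succ]
      ring
    rw [e g, e h] at heq
    simp only [Fin.val_zero, pow_zero, mul_one] at heq
    set A := ∑ i : Fin d, g i.succ * (k+1)^(i : ℕ) with hA
    set B := ∑ i : Fin d, h i.succ * (k+1)^(i : ℕ) with hB
    have h0 : g 0 = h 0 := by
      have hg0 : g 0 < k+1 := Nat.lt_succ_of_le (hg 0)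
      have hh0 : h 0 < k+1 := Nat.lt_succ_of_le (hh 0)
      have hmod := congrArg (· % (k+1)) heq
      simpa [Nat.add_mul_mod_self_left, Nat.mod_eq_of_lt hg0, Nat.mod_eq_of_lt hh0] using hmod
    have hAB : A = B := by
      have hmul : (k+1) * A = (k+1) * B := by omega
      exact Nat.eq_of_mul_eq_mul_left (by omega) hmul
    have htl := ih (fun i => g i.succ) (fun i => h i.succ) (fun i => hg _) (fun i => hh _) hAB
    funext i
    refine Fin.cases ?_ ?_ i
    · exact h0
    · intro j; exact congrFun htl j

variable {d : ℕ}

lemma coords_nat {V : Finset (Fin d → ℝ)} (hV : ∀ v ∈ V, ∀ i, ∃ n : ℕ, n ≤ k ∧ v i = n)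
    {y : Fin d → ℝ} (hy : y ∈ V) :
    ∃ g : Fin d → ℕ, (∀ i, g i ≤ k) ∧ y = fun i => (g i : ℝ) := by
  choose n hn hyn using hV y hy
  exact ⟨n, hn, funext hyn⟩

lemma reachable_extreme {V : Finset (Fin d → ℝ)}
    (hV : ∀ v ∈ V, ∀ i, ∃ n : ℕ, n ≤ k ∧ v i = n) {u v : Fin d → ℝ}
    (hu : u ∈ (convexHull ℝ (V : Set (Fin d → ℝ))).extremePoints ℝ)
    (hv : v ∈ (convexHull ℝ (V : Set (Fin d → ℝ))).extremePoints ℝ) :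
    (polytopeGraph (convexHull ℝ (V : Set (Fin d → ℝ)))).Reachable u v := by
  classical
  set φ : (Fin d → ℝ) →ₗ[ℝ] ℝ := lfun (fun i : Fin d => (((k+1)^(i : ℕ) : ℕ) : ℝ)) with hφ
  have hval : ∀ y ∈ V, ∃ g : Fin d → ℕ, (∀ i, g i ≤ k) ∧ y = (fun i => (g i : ℝ)) ∧
      φ y = ((∑ i, g i * (k+1)^(i : ℕ) : ℕ) : ℝ) := by
    intro y hy
    obtain ⟨g, hg, hyg⟩ := coords_nat hV hy
    refine ⟨g, hg, hyg, ?_⟩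
    rw [hyg]
    simp only [hφ, lfun_apply]
    push_cast
    exact Finset.sum_congr rfl fun i _ => by ring
  have huV : u ∈ V := by exact_mod_cast extremePoints_convexHull_subset hu
  have hvV : v ∈ V := by exact_mod_cast extremePoints_convexHull_subset hv
  obtain ⟨z0, hz0V, hz0min⟩ := Finset.exists_min_image V φ ⟨u, huV⟩
  have H : ∀ (n : ℕ) (x : Fin d → ℝ), x ∈ (convexHull ℝ (V : Set (Fin d → ℝ))).extremePoints ℝ →
      φ x = (n : ℝ) → (polytopeGraph (convexHull ℝ (V : Set (Fin d → ℝ)))).Reachable x z0 := by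
    intro n
    induction n using Nat.strong_induction_on with
    | _ n IH =>
      intro x hx hxn
      rcases eq_or_ne x z0 with rfl | hxz
      · exact SimpleGraph.Reachable.refl _
      · have hxV : x ∈ V := by exact_mod_cast extremePoints_convexHull_subset hx
        obtain ⟨gx, hgx, hxeq, hxval⟩ := hval x hxV
        obtain ⟨gz, hgz, hzeq, hzval⟩ := hval z0 hz0V
        have hlt : φ z0 < φ x := by
          rcases lt_or_eq_of_le (hz0min x hxV) with h | h
          · exact h
          · exfalso
            apply hxz
            have hcast : (∑ i, gz i * (k+1)^(i : ℕ)) = (∑ i, gx i * (k+1)^(i : ℕ)) := by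
              have h2 := h
              rw [hzval, hxval] at h2
              exact_mod_cast h2
            have := enc_inj d gz gx hgz hgx hcast
            rw [hxeq, hzeq, this]
        obtain ⟨w, hwV, hadj, hfw⟩ := improving_edge hx φ ⟨z0, hz0V, hlt⟩
        obtain ⟨gw, hgw, hweq, hwval⟩ := hval w hwV
        have hnw : (∑ i, gw i * (k+1)^(i : ℕ)) < n := by
          have h2 : φ w < φ x := hfw
          rw [hwval, hxn] at h2
          exact_mod_cast h2
        exact (SimpleGraph.Adj.reachable hadj).trans (IH _ hnw w hadj.2.2.1 hwval)
  obtain ⟨gu, hgu, hueq, huval⟩ := hval u huV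
  obtain ⟨gv, hgv, hveq, hvval⟩ := hval v hvV
  exact (H _ u hu huval).trans (H _ v hv hvval).symm

lemma descent {V : Finset (Fin d → ℝ)} (f : (Fin d → ℝ) →ₗ[ℝ] ℝ)
    (hint : ∀ y ∈ V, ∃ n : ℕ, f y = (n : ℝ))
    {z0 : Fin d → ℝ} (hz0V : z0 ∈ V) (hz0min : ∀ y ∈ V, f z0 ≤ f y) :
    ∀ (t : ℕ) (x : Fin d → ℝ), x ∈ (convexHull ℝ (V : Set (Fin d → ℝ))).extremePoints ℝ →
      f x ≤ f z0 + t →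
      ∃ xs : Fin d → ℝ, xs ∈ (convexHull ℝ (V : Set (Fin d → ℝ))).extremePoints ℝ ∧ f xs = f z0 ∧
        ∃ w : (polytopeGraph (convexHull ℝ (V : Set (Fin d → ℝ)))).Walk x xs, w.length ≤ t := by
  intro t
  induction t with
  | zero =>
    intro x hx hxle
    have hxV : x ∈ V := by exact_mod_cast extremePoints_convexHull_subset hx
    have hfeq : f x = f z0 := le_antisymm (by simpa using hxle) (hz0min x hxV)
    exact ⟨x, hx, hfeq, SimpleGraph.Walk.nil, by simp⟩
  | succ t IH =>
    intro x hx hxle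
    have hxV : x ∈ V := by exact_mod_cast extremePoints_convexHull_subset hx
    rcases eq_or_lt_of_le (hz0min x hxV) with heq | hlt
    · exact ⟨x, hx, heq.symm, SimpleGraph.Walk.nil, by simp⟩
    · obtain ⟨w, hwV, hadj, hfw⟩ := improving_edge hx f ⟨z0, hz0V, hlt⟩
      obtain ⟨nw, hnw⟩ := hint w hwV
      obtain ⟨nx, hnx⟩ := hint x hxV
      have hlt2 : nw < nx := by
        have h2 : f w < f x := hfw
        rw [hnw, hnx] at h2
        exact_mod_cast h2
      have hwle : f w ≤ f z0 + t := by
        rw [hnw]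
        rw [hnx] at hxle
        have h3 : (nw : ℝ) + 1 ≤ (nx : ℝ) := by exact_mod_cast Nat.succ_le_of_lt hlt2
        push_cast at hxle ⊢
        linarith
      obtain ⟨xs, hxs, hfxs, w2, hw2⟩ := IH w hadj.2.2.1 hwle
      exact ⟨xs, hxs, hfxs, SimpleGraph.Walk.cons hadj w2,
        by rw [SimpleGraph.Walk.length_cons]; omega⟩

end Aux6
section Aux7
variable {E1 E2 : Type*} [AddCommGroup E1] [Module ℝ E1] [AddCommGroup E2] [Module ℝ E2]

lemma image_openSegment' (π : E1 →ₗ[ℝ] E2) (a b : E1) :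
    π '' openSegment ℝ a b = openSegment ℝ (π a) (π b) := by
  have := image_openSegment ℝ π.toAffineMap a b
  simpa using this

lemma image_segment' (π : E1 →ₗ[ℝ] E2) (a b : E1) :
    π '' segment ℝ a b = segment ℝ (π a) (π b) := by
  have := image_segment ℝ π.toAffineMap a b
  simpa using this

lemma extremePoints_image_mem {π : E1 →ₗ[ℝ] E2} {S : Set E1} (hconv : Convex ℝ S)
    (hinj : Set.InjOn π S) {x : E1} (hx : x ∈ S.extremePoints ℝ) :
    π x ∈ (π '' S).extremePoints ℝ := by
  refine ⟨Set.mem_image_of_mem _ hx.1, ?_⟩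
  rintro _ ⟨a, ha, rfl⟩ _ ⟨b, hb, rfl⟩ hseg
  rw [← image_openSegment'] at hseg
  obtain ⟨z, hz, hzx⟩ := hseg
  have hzS : z ∈ S := hconv.openSegment_subset ha hb hz
  have hxz : z = x := hinj hzS hx.1 hzx
  rw [← hxz] at hx
  have hA := hx.2 ha hb hz
  exact by rw [hA, hzx]

lemma extremePoints_of_image {π : E1 →ₗ[ℝ] E2} {S : Set E1}
    (hinj : Set.InjOn π S) {x : E1} (hxS : x ∈ S)
    (hx : π x ∈ (π '' S).extremePoints ℝ) : x ∈ S.extremePoints ℝ := by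
  refine ⟨hxS, ?_⟩
  intro a ha b hb hseg
  have h1 : π x ∈ openSegment ℝ (π a) (π b) := by
    rw [← image_openSegment']
    exact ⟨x, hseg, rfl⟩
  have hA := hx.2 (Set.mem_image_of_mem _ ha) (Set.mem_image_of_mem _ hb) h1
  exact hinj ha hxS hA

lemma isExtreme_of_image {π : E1 →ₗ[ℝ] E2} {S B : Set E1} (hinj : Set.InjOn π S)
    (hB : B ⊆ S) (h : IsExtreme ℝ (π '' S) (π '' B)) : IsExtreme ℝ S B := by
  constructor
  · exact hB
  · intro x1 hx1 x2 hx2 z hzB hzseg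
    have h1 : π z ∈ openSegment ℝ (π x1) (π x2) := by
      rw [← image_openSegment']
      exact ⟨z, hzseg, rfl⟩
    have hA := h.2 (Set.mem_image_of_mem _ hx1) (Set.mem_image_of_mem _ hx2)
      (Set.mem_image_of_mem _ hzB) h1
    obtain ⟨b1, hb1B, hb1⟩ := hA
    have e1 : b1 = x1 := hinj (hB hb1B) hx1 hb1
    exact e1 ▸ hb1B

end Aux7

section Aux7b
variable {m : ℕ}

lemma walk_lift {P F : Set (Fin (m+1) → ℝ)} (hFP : IsExtreme ℝ P F) (hFconv : Convex ℝ F)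
    (π : (Fin (m+1) → ℝ) →ₗ[ℝ] (Fin m → ℝ)) (hinj : Set.InjOn π F)
    {Q : Set (Fin m → ℝ)} (hQeq : Q = π '' F) :
    ∀ {q1 q2 : Fin m → ℝ} (w : (polytopeGraph Q).Walk q1 q2) (p1 : Fin (m+1) → ℝ),
      p1 ∈ F → π p1 = q1 →
      ∃ p2, p2 ∈ F ∧ π p2 = q2 ∧
        ∃ w' : (polytopeGraph P).Walk p1 p2, w'.length = w.length := by
  subst hQeq
  intro q1 q2 w
  induction w with
  | nil =>
    intro p1 hp1 hq
    exact ⟨p1, hp1, hq, SimpleGraph.Walk.nil, rfl⟩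
  | @cons a bq cq hadj w' ih =>
    intro p1 hp1 hq
    obtain ⟨hne, haext, hbext, hseg⟩ := hadj
    obtain ⟨p', hp'F, hp'⟩ := hbext.1
    have hp1ext : p1 ∈ F.extremePoints ℝ :=
      extremePoints_of_image hinj hp1 (by rw [hq]; exact haext)
    have hp'ext : p' ∈ F.extremePoints ℝ :=
      extremePoints_of_image hinj hp'F (by rw [hp']; exact hbext)
    have hne' : p1 ≠ p' := by
      rintro rfl
      exact hne (by rw [← hq, hp'])
    have hsegB : segment ℝ p1 p' ⊆ F := hFconv.segment_subset hp1 hp'F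
    have hsegext : IsExtreme ℝ F (segment ℝ p1 p') := by
      apply isExtreme_of_image hinj hsegB
      rw [image_segment', hq, hp']
      exact hseg
    have hadjP : (polytopeGraph P).Adj p1 p' :=
      ⟨hne', hFP.extremePoints_subset_extremePoints hp1ext,
        hFP.extremePoints_subset_extremePoints hp'ext, hFP.trans hsegext⟩
    obtain ⟨p2, hp2F, hp2, w2, hw2⟩ := ih p' hp'F hp'
    exact ⟨p2, hp2F, hp2, SimpleGraph.Walk.cons hadjP w2,
      by rw [SimpleGraph.Walk.length_cons, hw2]; rfl⟩

end Aux7b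
section Master

lemma master : ∀ (c d k : ℕ) (P : Set (Fin d → ℝ)), IsLatticePolytope d k P →
    ∀ (u v : Fin d → ℝ), u ∈ P.extremePoints ℝ → v ∈ P.extremePoints ℝ →
    ∀ (I : Finset (Fin d)), I.card = c →
    ((polytopeGraph P).dist u v : ℝ) ≤
      (latticeDiam (d - c) k : ℝ) + ∑ i ∈ I, (u i + v i) := by
  intro c
  induction c with
  | zero =>
    intro d k P hP u v hu hv I hc
    rw [Finset.card_eq_zero] at hc
    subst hc
    simp only [Finset.sum_empty, add_zero, Nat.sub_zero]
    exact_mod_cast Nat.cast_le.mpr (dist_le_latticeDiam hP hu hv)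
  | succ c IH =>
    intro d k P hP u v hu hv I hc
    classical
    obtain ⟨j, hjI⟩ : ∃ j, j ∈ I := Finset.card_pos.mp (by omega)
    cases d with
    | zero => exact j.elim0
    | succ m =>
    obtain ⟨V, hV, rfl⟩ := hP
    set cI : Fin (m+1) → ℝ := fun i => if i ∈ I then 1 else 0 with hcI
    set φ : (Fin (m+1) → ℝ) →ₗ[ℝ] ℝ := lfun cI with hφ
    have hφval : ∀ x : Fin (m+1) → ℝ, φ x = ∑ i ∈ I, x i := by
      intro x
      simp only [hφ, lfun_apply]
      have h1 : ∀ i, cI i * x i = if i ∈ I then x i else 0 := fun i => by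
        by_cases h : i ∈ I <;> simp [hcI, h]
      rw [Finset.sum_congr rfl (fun i _ => h1 i), Finset.sum_ite_mem, Finset.univ_inter]
    have hint : ∀ y ∈ V, ∃ n : ℕ, φ y = (n : ℝ) := by
      intro y hy
      obtain ⟨g, hg, rfl⟩ := coords_nat hV hy
      refine ⟨∑ i ∈ I, g i, ?_⟩
      rw [hφval]
      push_cast
      rfl
    have huV : u ∈ V := by exact_mod_cast extremePoints_convexHull_subset hu
    have hvV : v ∈ V := by exact_mod_cast extremePoints_convexHull_subset hv
    obtain ⟨z0, hz0V, hz0min⟩ := Finset.exists_min_image V φ ⟨u, huV⟩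
    obtain ⟨nu, hnu⟩ := hint u huV
    obtain ⟨nv, hnv⟩ := hint v hvV
    obtain ⟨n0, hn0⟩ := hint z0 hz0V
    have hn0u : n0 ≤ nu := by
      have h2 := hz0min u huV
      rw [hnu, hn0] at h2
      exact_mod_cast h2
    have hn0v : n0 ≤ nv := by
      have h2 := hz0min v hvV
      rw [hnv, hn0] at h2
      exact_mod_cast h2
    obtain ⟨us, husext, hφus, wu, hwu⟩ := descent φ hint hz0V hz0min (nu - n0) u hu
      (by rw [hnu, hn0, Nat.cast_sub hn0u]; linarith)
    obtain ⟨vs, hvsext, hφvs, wv, hwv⟩ := descent φ hint hz0V hz0min (nv - n0) v hv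
      (by rw [hnv, hn0, Nat.cast_sub hn0v]; linarith)
    -- the face F
    set T : Finset (Fin (m+1) → ℝ) := V.filter (fun y => φ y = φ z0) with hT
    set F : Set (Fin (m+1) → ℝ) := convexHull ℝ (T : Set (Fin (m+1) → ℝ)) with hF
    have hface : {x ∈ convexHull ℝ (V : Set (Fin (m+1) → ℝ)) | φ x = φ z0} = F :=
      face_eq_hull φ hz0min (m := φ z0)
    have hFx : IsExtreme ℝ (convexHull ℝ (V : Set (Fin (m+1) → ℝ))) F := by
      rw [← hface]
      exact face_isExtreme φ hz0min
    have husF : us ∈ F := by rw [← hface]; exact ⟨husext.1, hφus⟩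
    have hvsF : vs ∈ F := by rw [← hface]; exact ⟨hvsext.1, hφvs⟩
    have husFext : us ∈ F.extremePoints ℝ := mem_extremePoints_of_subset husext hFx.1 husF
    have hvsFext : vs ∈ F.extremePoints ℝ := mem_extremePoints_of_subset hvsext hFx.1 hvsF
    -- the projection
    set π : (Fin (m+1) → ℝ) →ₗ[ℝ] (Fin m → ℝ) := LinearMap.funLeft ℝ ℝ (j.succAbove) with hπ
    have hπval : ∀ (x : Fin (m+1) → ℝ) (i' : Fin m), π x i' = x (j.succAbove i') :=
      fun x i' => rfl
    have hinj : Set.InjOn π F := by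
      intro x hx y hy hxy
      have hφx : φ x = φ z0 := by
        rw [← hface] at hx; exact hx.2
      have hφy : φ y = φ z0 := by
        rw [← hface] at hy; exact hy.2
      have hoff : ∀ i, i ≠ j → x i = y i := by
        intro i hij
        obtain ⟨i', hi'⟩ := Fin.exists_succAbove_eq hij
        have h2 := congrFun hxy i'
        rw [hπval, hπval, hi'] at h2
        exact h2
      funext i
      rcases eq_or_ne i j with rfl | hij
      · have hsx : x i + ∑ i' ∈ I.erase i, x i' = φ x :=
          by rw [hφval]; exact Finset.add_sum_erase _ _ hjI
        have hsy : y i + ∑ i' ∈ I.erase i, y i' = φ y :=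
          by rw [hφval]; exact Finset.add_sum_erase _ _ hjI
        have hse : ∑ i' ∈ I.erase i, x i' = ∑ i' ∈ I.erase i, y i' :=
          Finset.sum_congr rfl fun i' hi' => hoff i' (Finset.mem_erase.mp hi').1
        rw [hφx] at hsx
        rw [hφy] at hsy
        linarith
      · exact hoff i hij
    -- the projected polytope
    set W : Finset (Fin m → ℝ) := T.image π with hW
    have hQeq : convexHull ℝ (W : Set (Fin m → ℝ)) = π '' F := by
      rw [hW, Finset.coe_image, hF, π.image_convexHull]
    have hWnat : ∀ q ∈ W, ∀ i' : Fin m, ∃ n : ℕ, n ≤ k ∧ q i' = n := by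
      intro q hq i'
      obtain ⟨y, hyT, rfl⟩ := Finset.mem_image.mp hq
      rw [hπval]
      exact hV y (Finset.filter_subset _ _ hyT) (j.succAbove i')
    have hQlat : IsLatticePolytope m k (convexHull ℝ (W : Set (Fin m → ℝ))) := ⟨W, hWnat, rfl⟩
    have hπusext : π us ∈ (convexHull ℝ (W : Set (Fin m → ℝ))).extremePoints ℝ := by
      rw [hQeq]
      exact extremePoints_image_mem (convex_convexHull ℝ _) hinj husFext
    have hπvsext : π vs ∈ (convexHull ℝ (W : Set (Fin m → ℝ))).extremePoints ℝ := by
      rw [hQeq]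
      exact extremePoints_image_mem (convex_convexHull ℝ _) hinj hvsFext
    -- the projected index set
    set I'' : Finset (Fin m) := Finset.univ.filter (fun i' => j.succAbove i' ∈ I) with hI''
    have hI''card : I''.card = c := by
      have hbij : I''.card = (I.erase j).card := by
        apply Finset.card_bij (fun i' _ => j.succAbove i')
        · intro a ha
          exact Finset.mem_erase.mpr ⟨Fin.succAbove_ne j a, (Finset.mem_filter.mp ha).2⟩
        · intro a _ b _ hab
          exact Fin.succAbove_right_injective hab
        · intro b hb
          obtain ⟨i', hi'⟩ := Fin.exists_succAbove_eq (Finset.mem_erase.mp hb).1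
          exact ⟨i', Finset.mem_filter.mpr ⟨Finset.mem_univ _,
            by rw [hi']; exact (Finset.mem_erase.mp hb).2⟩, hi'⟩
      have hce := Finset.card_erase_of_mem hjI
      omega
    have hsum_trans : ∀ x : Fin (m+1) → ℝ,
        ∑ i' ∈ I'', π x i' = ∑ i ∈ I.erase j, x i := by
      intro x
      apply Finset.sum_bij (fun i' (_ : i' ∈ I'') => j.succAbove i')
      · intro a ha
        exact Finset.mem_erase.mpr ⟨Fin.succAbove_ne j a, (Finset.mem_filter.mp ha).2⟩
      · intro a _ b _ hab
        exact Fin.succAbove_right_injective hab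
      · intro b hb
        obtain ⟨i', hi'⟩ := Fin.exists_succAbove_eq (Finset.mem_erase.mp hb).1
        exact ⟨i', Finset.mem_filter.mpr ⟨Finset.mem_univ _,
          by rw [hi']; exact (Finset.mem_erase.mp hb).2⟩, hi'⟩
      · intro a _
        rw [hπval]
    -- nonnegativity of vertex coordinates
    have hnn : ∀ y ∈ V, (0:ℝ) ≤ y j := by
      intro y hy
      obtain ⟨g, _, rfl⟩ := coords_nat hV hy
      simp [Nat.cast_nonneg]
    have husV : us ∈ V := by exact_mod_cast extremePoints_convexHull_subset husext
    have hvsV : vs ∈ V := by exact_mod_cast extremePoints_convexHull_subset hvsext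
    -- apply the induction hypothesis in the projected polytope
    have hIH := IH m k (convexHull ℝ (W : Set (Fin m → ℝ))) hQlat (π us) (π vs)
      hπusext hπvsext I'' hI''card
    -- realize the distance in Q by a walk and lift it
    have hreach : (polytopeGraph (convexHull ℝ (W : Set (Fin m → ℝ)))).Reachable (π us) (π vs) :=
      reachable_extreme hWnat hπusext hπvsext
    obtain ⟨wQ, hwQ⟩ := hreach.exists_walk_length_eq_dist
    obtain ⟨p2, hp2F, hp2π, w2, hw2len⟩ :=
      walk_lift hFx (convex_convexHull ℝ _) π hinj hQeq wQ us husF rfl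
    have hp2vs : p2 = vs := hinj hp2F hvsF hp2π
    obtain ⟨w2', hw2'len⟩ : ∃ w2' : (polytopeGraph (convexHull ℝ (V : Set (Fin (m+1) → ℝ)))).Walk us vs,
        w2'.length = wQ.length := by
      subst hp2vs
      exact ⟨w2, hw2len⟩
    have hd := SimpleGraph.dist_le ((wu.append w2').append wv.reverse)
    rw [SimpleGraph.Walk.length_append, SimpleGraph.Walk.length_append,
      SimpleGraph.Walk.length_reverse] at hd
    have h1 : ((polytopeGraph (convexHull ℝ (V : Set (Fin (m+1) → ℝ)))).dist u v : ℝ) ≤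
        (wu.length : ℝ) + (w2'.length : ℝ) + (wv.length : ℝ) := by
      have := (Nat.cast_le (α := ℝ)).mpr hd
      push_cast at this
      linarith
    have h2 : (wu.length : ℝ) ≤ (nu : ℝ) - (n0 : ℝ) := by
      have := (Nat.cast_le (α := ℝ)).mpr hwu
      rw [Nat.cast_sub hn0u] at this
      linarith
    have h3 : (wv.length : ℝ) ≤ (nv : ℝ) - (n0 : ℝ) := by
      have := (Nat.cast_le (α := ℝ)).mpr hwv
      rw [Nat.cast_sub hn0v] at this
      linarith
    have h4 : (w2'.length : ℝ) =
        ((polytopeGraph (convexHull ℝ (W : Set (Fin m → ℝ)))).dist (π us) (π vs) : ℝ) := by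
      rw [hw2'len, hwQ]
    have h6 : ∑ i' ∈ I'', (π us i' + π vs i') =
        (φ us - us j) + (φ vs - vs j) := by
      rw [Finset.sum_add_distrib, hsum_trans us, hsum_trans vs]
      have e1 : us j + ∑ i ∈ I.erase j, us i = φ us := by
        rw [hφval]; exact Finset.add_sum_erase _ _ hjI
      have e2 : vs j + ∑ i ∈ I.erase j, vs i = φ vs := by
        rw [hφval]; exact Finset.add_sum_erase _ _ hjI
      linarith
    have h8a : (0:ℝ) ≤ us j := hnn us husV
    have h8b : (0:ℝ) ≤ vs j := hnn vs hvsV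
    have h9 : ∑ i ∈ I, (u i + v i) = φ u + φ v := by
      rw [hφval, hφval, ← Finset.sum_add_distrib]
    rw [show m + 1 - (c + 1) = m - c from by omega]
    rw [h9]
    rw [h6] at hIH
    linarith [hIH, hφus, hφvs, hn0, hnu, hnv]
end Master
/-- If `u`, `v` are vertices of a lattice `(d,k)`-polytope `P` and `I` is a set of at
most `3` coordinate indices with `u i + v i ≤ k` for every `i ∈ I`, then
`d(u,v) ≤ δ(d−|I|,k) + ∑_{i ∈ I} (u i + v i)`. -/
theorem dist_le_of_small_sum (d k : ℕ) (P : Set (Fin d → ℝ)) (hP : IsLatticePolytope d k P)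
    (u v : Fin d → ℝ) (hu : u ∈ P.extremePoints ℝ) (hv : v ∈ P.extremePoints ℝ)
    (I : Finset (Fin d)) (hI : I.card ≤ 3)
    (hsum : ∀ i ∈ I, u i + v i ≤ (k : ℝ)) :
    ((polytopeGraph P).dist u v : ℝ) ≤
      (latticeDiam (d - I.card) k : ℝ) + ∑ i ∈ I, (u i + v i) := by
  exact master I.card d k P hP u v hu hv I rfl
end

section
/- Let P be a lattice (d,k)-polytope and let u, v be two vertices of P. If I ⊆ {1,…,d} is a set of coordinate indices with 1 ≤ |I| ≤ 2 such that u_i + v_i ≤ k for every i ∈ I, and moreover Σ_{i∈I} x_i > 0 for every point x ∈ P, then the graph distance between u and v satisfies the strict inequality d(u,v) < δ(d−|I|, k) + Σ_{i∈I} (u_i + v_i). -/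
open scoped BigOperators

open Set

namespace DPL
variable {d : ℕ}

theorem hull_le {V : Finset (Fin d → ℝ)} {f : (Fin d → ℝ) →L[ℝ] ℝ} {m : ℝ}
    (h : ∀ x ∈ V, m ≤ f x) : ∀ x ∈ convexHull ℝ (V : Set (Fin d → ℝ)), m ≤ f x := by
  intro x hx
  have hconv : Convex ℝ {y : Fin d → ℝ | m ≤ f y} :=
    convex_halfSpace_ge ⟨f.map_add, f.map_smul⟩ m
  exact convexHull_min (fun y hy => h y hy) hconv hx

theorem exists_le_on_V {V : Finset (Fin d → ℝ)} {f : (Fin d → ℝ) →L[ℝ] ℝ} {x : Fin d → ℝ}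
    (hx : x ∈ convexHull ℝ (V : Set (Fin d → ℝ))) : ∃ z ∈ V, f z ≤ f x := by
  by_contra h
  push_neg at h
  have hconv : Convex ℝ {y : Fin d → ℝ | f x < f y} :=
    convex_halfSpace_gt ⟨f.map_add, f.map_smul⟩ (f x)
  have hmem := convexHull_min (fun y hy => h y hy) hconv hx
  have hmem : f x < f x := hmem
  exact lt_irrefl (f x) hmem

theorem extremePoint_of_subset {A B : Set (Fin d → ℝ)} {x : Fin d → ℝ}
    (hBA : B ⊆ A) (hxB : x ∈ B) (hxA : x ∈ A.extremePoints ℝ) : x ∈ B.extremePoints ℝ :=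
  inter_extremePoints_subset_extremePoints_of_subset hBA ⟨hxB, hxA⟩

theorem not_mem_erase_hull {V : Finset (Fin d → ℝ)} {w : Fin d → ℝ}
    (hw : w ∈ (convexHull ℝ (V : Set (Fin d → ℝ))).extremePoints ℝ) :
    w ∉ convexHull ℝ ((V.erase w : Finset (Fin d → ℝ)) : Set (Fin d → ℝ)) := by
  intro hmem
  have hsub : convexHull ℝ ((V.erase w : Finset (Fin d → ℝ)) : Set (Fin d → ℝ)) ⊆
      convexHull ℝ (V : Set (Fin d → ℝ)) :=
    convexHull_mono (by exact_mod_cast Finset.coe_subset.2 (Finset.erase_subset _ _))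
  have h2 := extremePoint_of_subset hsub hmem hw
  have h3 := extremePoints_convexHull_subset h2
  simp at h3

theorem join_rep {V : Finset (Fin d → ℝ)} {w : Fin d → ℝ} (hwV : w ∈ V)
    (hne : (V.erase w).Nonempty) {p : Fin d → ℝ}
    (hp : p ∈ convexHull ℝ (V : Set (Fin d → ℝ))) :
    ∃ z ∈ convexHull ℝ ((V.erase w : Finset (Fin d → ℝ)) : Set (Fin d → ℝ)),
      ∃ r : ℝ, 0 ≤ r ∧ r ≤ 1 ∧ p = w + r • (z - w) := by
  have hins : (V : Set (Fin d → ℝ)) = insert w ((V.erase w : Finset (Fin d → ℝ)) : Set (Fin d → ℝ)) := by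
    rw [← Finset.coe_insert, Finset.insert_erase hwV]
  rw [hins, convexHull_insert (by exact_mod_cast hne)] at hp
  rw [mem_convexJoin] at hp
  obtain ⟨a, ha, z, hz, hseg⟩ := hp
  rw [mem_singleton_iff] at ha
  subst ha
  rw [segment_eq_image] at hseg
  obtain ⟨r, hr, hrp⟩ := hseg
  refine ⟨z, hz, r, hr.1, hr.2, ?_⟩
  rw [← hrp]
  module

theorem isExtreme_argmin {Q : Set (Fin d → ℝ)} {c : (Fin d → ℝ) →L[ℝ] ℝ} {m : ℝ}
    (hmin : ∀ x ∈ Q, m ≤ c x) : IsExtreme ℝ Q {x ∈ Q | c x = m} := by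
  constructor
  · exact fun x hx => hx.1
  · rintro x₁ hx₁ x₂ hx₂ x ⟨hxQ, hxc⟩ ⟨a, b, ha, hb, hab, hx⟩
    have h1 : m ≤ c x₁ := hmin _ hx₁
    have h2 : m ≤ c x₂ := hmin _ hx₂
    have hcx : a * c x₁ + b * c x₂ = m := by
      rw [← hxc, ← hx]
      simp [map_add, map_smul]
    have key : a * (c x₁ - m) + b * (c x₂ - m) = 0 := by linear_combination hcx - m * hab
    have t1 : 0 ≤ a * (c x₁ - m) := mul_nonneg ha.le (by linarith)
    have t2 : 0 ≤ b * (c x₂ - m) := mul_nonneg hb.le (by linarith)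
    have e1 : c x₁ = m := by
      have : a * (c x₁ - m) = 0 := by linarith
      rcases mul_eq_zero.1 this with hc | hc
      · exact absurd hc (ne_of_gt ha)
      · linarith
    have e2 : c x₂ = m := by
      have : b * (c x₂ - m) = 0 := by linarith
      rcases mul_eq_zero.1 this with hc | hc
      · exact absurd hc (ne_of_gt hb)
      · linarith
    exact ⟨hx₁, e1⟩

theorem comb_helper {E : Type*} [AddCommGroup E] [Module ℝ E]
    (w x₁ x₂ : E) (γ₁ γ₂ t a b : ℝ) (hγ : γ₁ + γ₂ = 1) (ht : t ≠ 0) (hab : a + b = 1) :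
    γ₁ • w + (a / t) • (x₁ - w) + (γ₂ • w + (b / t) • (x₂ - w))
      = w + t⁻¹ • (a • x₁ + b • x₂ - w) := by
  match_scalars
  · field_simp
    linear_combination t * hγ - hab
  · field_simp
  · field_simp

set_option maxHeartbeats 2000000 in
/-- The descent lemma: an extreme point not minimizing `c` has a neighbour with
smaller `c`-value. -/
theorem exists_adj_lt (V : Finset (Fin d → ℝ)) {w : Fin d → ℝ}
    (hw : w ∈ (convexHull ℝ (V : Set (Fin d → ℝ))).extremePoints ℝ)
    (c : (Fin d → ℝ) →L[ℝ] ℝ) {y : Fin d → ℝ}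
    (hy : y ∈ convexHull ℝ (V : Set (Fin d → ℝ))) (hcy : c y < c w) :
    ∃ z ∈ (convexHull ℝ (V : Set (Fin d → ℝ))).extremePoints ℝ,
      (polytopeGraph (convexHull ℝ (V : Set (Fin d → ℝ)))).Adj w z ∧ c z < c w := by
  classical
  set R := convexHull ℝ (V : Set (Fin d → ℝ)) with hRdef
  have hwR : w ∈ R := hw.1
  have hwV : w ∈ V := extremePoints_convexHull_subset hw
  obtain ⟨z₀, hz₀V, hz₀le⟩ := exists_le_on_V (f := c) hy
  have hz₀lt : c z₀ < c w := lt_of_le_of_lt hz₀le hcy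
  have hz₀w : z₀ ≠ w := by rintro rfl; exact lt_irrefl _ hz₀lt
  have hz₀e : z₀ ∈ V.erase w := Finset.mem_erase.2 ⟨hz₀w, hz₀V⟩
  set K := convexHull ℝ ((V.erase w : Finset (Fin d → ℝ)) : Set (Fin d → ℝ)) with hKdef
  have hKsub : K ⊆ R :=
    convexHull_mono (by exact_mod_cast Finset.coe_subset.2 (Finset.erase_subset _ _))
  have hKcpt : IsCompact K := Set.Finite.isCompact_convexHull ℝ (Finset.finite_toSet _)
  have hwK : w ∉ K := not_mem_erase_hull hw
  obtain ⟨f, β', hfw, hfK⟩ :=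
    geometric_hahn_banach_point_closed (convex_convexHull ℝ _) hKcpt.isClosed hwK
  set h : (Fin d → ℝ) →L[ℝ] ℝ := -f with hhdef
  set β : ℝ := -β' with hβdef
  have hβw : β < h w := by
    simp only [hhdef, hβdef, ContinuousLinearMap.neg_apply, neg_lt_neg_iff]
    exact hfw
  have hhK : ∀ z ∈ K, h z < β := by
    intro z hz
    simp only [hhdef, hβdef, ContinuousLinearMap.neg_apply, neg_lt_neg_iff]
    exact hfK z hz
  have hRcpt : IsCompact R := Set.Finite.isCompact_convexHull ℝ (Finset.finite_toSet _)
  have hRconv : Convex ℝ R := convex_convexHull ℝ _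
  have hVne : (V.erase w).Nonempty := ⟨z₀, hz₀e⟩
  -- h is uniquely maximized at w
  have hval : ∀ p ∈ R, ∀ z ∈ K, ∀ r : ℝ, p = w + r • (z - w) → h p = h w + r * (h z - h w) := by
    intro p _ z _ r hrep
    rw [hrep]
    simp only [map_add, map_smul, map_sub, smul_eq_mul]
    try ring
  have hhmaxle : ∀ p ∈ R, h p ≤ h w := by
    intro p hp
    obtain ⟨z, hzK, r, hr0, hr1, hrep⟩ := join_rep hwV hVne hp
    have hz := hhK z hzK
    have := hval p hp z hzK r hrep
    nlinarith
  have hhmax : ∀ p ∈ R, p ≠ w → h p < h w := by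
    intro p hp hpw
    obtain ⟨z, hzK, r, hr0, hr1, hrep⟩ := join_rep hwV hVne hp
    have hz := hhK z hzK
    have hv := hval p hp z hzK r hrep
    rcases eq_or_lt_of_le hr0 with hr | hr
    · exact absurd (by rw [hrep, ← hr]; simp) hpw
    · nlinarith
  -- the radial projection onto the hyperplane {h = β}
  set Q : Set (Fin d → ℝ) := R ∩ {x | h x = β} with hQdef
  have hpi : ∀ p ∈ R, h p < h w →
      (w + ((h w - β) / (h w - h p)) • (p - w)) ∈ Q := by
    intro p hp hplt
    obtain ⟨z, hzK, r, hr0, hr1, hrep⟩ := join_rep hwV hVne hp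
    have hz := hhK z hzK
    have hv := hval p hp z hzK r hrep
    have hzw : (0:ℝ) < h w - h z := by linarith
    have hpw : (0:ℝ) < h w - h p := by linarith
    have hwβ : (0:ℝ) < h w - β := by linarith
    have hkey : r * (h w - h z) = h w - h p := by linarith
    have hμr : ((h w - β) / (h w - h p)) * r = (h w - β) / (h w - h z) := by
      rw [div_mul_eq_mul_div, div_eq_div_iff (by linarith) (by linarith)]
      linear_combination (h w - β) * hkey
    have hco : w + ((h w - β) / (h w - h p)) • (p - w)
        = w + ((h w - β) / (h w - h z)) • (z - w) := by
      calc w + ((h w - β) / (h w - h p)) • (p - w)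
          = w + (((h w - β) / (h w - h p)) * r) • (z - w) := by rw [hrep]; module
        _ = w + ((h w - β) / (h w - h z)) • (z - w) := by rw [hμr]
    constructor
    · rw [hco]
      have hs0 : 0 ≤ (h w - β) / (h w - h z) := le_of_lt (div_pos hwβ hzw)
      have hs1 : (h w - β) / (h w - h z) ≤ 1 := by
        rw [div_le_one hzw]; linarith
      have hmem : w + ((h w - β) / (h w - h z)) • (z - w) ∈ segment ℝ w z := by
        rw [segment_eq_image]
        exact ⟨(h w - β) / (h w - h z), ⟨hs0, hs1⟩, by module⟩
      exact hRconv.segment_subset hwR (hKsub hzK) hmem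
    · show h (w + ((h w - β) / (h w - h p)) • (p - w)) = β
      simp only [map_add, map_smul, map_sub, smul_eq_mul]
      field_simp
      ring
  -- pick an extreme point of Q minimizing c
  have hπz₀ : (w + ((h w - β) / (h w - h z₀)) • (z₀ - w)) ∈ Q := by
    refine hpi z₀ (hKsub (subset_convexHull ℝ _ (by exact_mod_cast hz₀e))) ?_
    have := hhK z₀ (subset_convexHull ℝ _ (by exact_mod_cast hz₀e))
    linarith
  have hQne : Q.Nonempty := ⟨_, hπz₀⟩
  have hQcpt : IsCompact Q := hRcpt.inter_right (isClosed_eq h.continuous continuous_const)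
  obtain ⟨qm, hqmQ, hqmmin⟩ := hQcpt.exists_isMinOn hQne c.continuous.continuousOn
  have hminQ : ∀ x ∈ Q, c qm ≤ c x := fun x hx => hqmmin hx
  have hAex : IsExtreme ℝ Q {x ∈ Q | c x = c qm} := isExtreme_argmin hminQ
  have hAcpt : IsCompact {x ∈ Q | c x = c qm} := by
    have heq : {x ∈ Q | c x = c qm} = Q ∩ {x | c x = c qm} := rfl
    rw [heq]
    exact hQcpt.inter_right (isClosed_eq c.continuous continuous_const)
  obtain ⟨q, hq⟩ := hAcpt.extremePoints_nonempty ⟨qm, hqmQ, rfl⟩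
  have hqQ : q ∈ Q.extremePoints ℝ := hAex.extremePoints_subset_extremePoints hq
  have hqc : c q = c qm := hq.1.2
  -- c q < c w
  have hπz₀lt : c (w + ((h w - β) / (h w - h z₀)) • (z₀ - w)) < c w := by
    have hz := hhK z₀ (subset_convexHull ℝ _ (by exact_mod_cast hz₀e))
    have hs : 0 < (h w - β) / (h w - h z₀) := div_pos (by linarith) (by linarith)
    simp only [map_add, map_smul, map_sub, smul_eq_mul]
    nlinarith
  have hqlt : c q < c w := by
    have := hminQ _ hπz₀
    rw [hqc]
    exact lt_of_le_of_lt this hπz₀lt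
  have hqβ : h q = β := hqQ.1.2
  have hqR : q ∈ R := hqQ.1.1
  have hqw : q ≠ w := fun hqw => by rw [hqw] at hqβ; linarith
  -- the ray from w through q
  set v : Fin d → ℝ := q - w with hvdef
  set St : Set ℝ := {t : ℝ | 0 ≤ t ∧ w + t • v ∈ R} with hStdef
  have hSt1 : (1:ℝ) ∈ St := ⟨zero_le_one, by simpa [hvdef] using hqR⟩
  have hStne : St.Nonempty := ⟨1, hSt1⟩
  have hvne : v ≠ 0 := fun hv => hqw (by rw [← sub_eq_zero]; exact hv)
  have hStbdd : BddAbove St := by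
    obtain ⟨M, hM⟩ := hRcpt.isBounded.subset_closedBall 0
    refine ⟨(M + ‖w‖) / ‖v‖, ?_⟩
    rintro t ⟨ht0, htR⟩
    have h1 : ‖w + t • v‖ ≤ M := by
      have := hM htR
      simpa [Metric.mem_closedBall, dist_eq_norm] using this
    have h2 : ‖t • v‖ ≤ M + ‖w‖ := by
      have h3 : t • v = (w + t • v) - w := by abel
      rw [h3]
      calc ‖(w + t • v) - w‖ ≤ ‖w + t • v‖ + ‖w‖ := norm_sub_le _ _
        _ ≤ M + ‖w‖ := by linarith
    rw [norm_smul, Real.norm_of_nonneg ht0] at h2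
    rw [le_div_iff₀ (norm_pos_iff.2 hvne)]
    exact h2
  set T : ℝ := sSup St with hTdef
  have hStclosed : IsClosed St := by
    have h1 : IsClosed {t : ℝ | 0 ≤ t} := isClosed_le continuous_const continuous_id
    have h2 : IsClosed {t : ℝ | w + t • v ∈ R} :=
      IsClosed.preimage (by continuity) hRcpt.isClosed
    have : St = {t : ℝ | 0 ≤ t} ∩ {t : ℝ | w + t • v ∈ R} := rfl
    rw [this]
    exact h1.inter h2
  have hTmem : T ∈ St := hStclosed.csSup_mem hStne hStbdd
  have hT1 : (1:ℝ) ≤ T := le_csSup hStbdd hSt1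
  have hT0 : (0:ℝ) < T := lt_of_lt_of_le one_pos hT1
  set zs : Fin d → ℝ := w + T • v with hzsdef
  have hzsR : zs ∈ R := hTmem.2
  have hzsc : c zs < c w := by
    have hcc : c zs = c w + T * (c q - c w) := by
      rw [hzsdef, hvdef]
      simp only [map_add, map_smul, map_sub, smul_eq_mul]
      try ring
    nlinarith
  have hzsW : zs ≠ w := by
    intro hzw
    have hcc : h zs = h w + T * (β - h w) := by
      have : h zs = h w + T * (h q - h w) := by
        rw [hzsdef, hvdef]
        simp only [map_add, map_smul, map_sub, smul_eq_mul]
        try ring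
      rw [hqβ] at this
      exact this
    rw [hzw] at hcc
    nlinarith
  have hmem_seg : ∀ s : ℝ, 0 ≤ s → s ≤ T → w + s • v ∈ segment ℝ w zs := by
    intro s h0 hsT
    rw [segment_eq_image]
    refine ⟨s / T, ⟨div_nonneg h0 hT0.le, (div_le_one hT0).2 hsT⟩, ?_⟩
    rw [hzsdef]
    match_scalars <;> field_simp <;> ring
  have hseg_param : ∀ x ∈ segment ℝ w zs, ∃ t, 0 ≤ t ∧ t ≤ T ∧ x = w + t • v := by
    intro x hx
    rw [segment_eq_image] at hx
    obtain ⟨ρ, hρ, hx⟩ := hx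
    refine ⟨ρ * T, mul_nonneg hρ.1 hT0.le, by nlinarith [hρ.2], ?_⟩
    rw [← hx, hzsdef]
    module
  have hpar_le : ∀ t : ℝ, 0 ≤ t → w + t • v ∈ R → t ≤ T :=
    fun t h0 hRm => le_csSup hStbdd ⟨h0, hRm⟩
  clear_value K h β Q St T v zs
  have hsegext : IsExtreme ℝ R (segment ℝ w zs) := by
    constructor
    · exact hRconv.segment_subset hwR hzsR
    · rintro x₁ hx₁ x₂ hx₂ x hxseg hxopen
      obtain ⟨t, ht0, htT, hxt⟩ := hseg_param x hxseg
      rcases eq_or_lt_of_le ht0 with ht | ht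
      · have hxw : x = w := by rw [hxt, ← ht]; simp
        have he1 := hw.2 hx₁ hx₂ (by rwa [hxw] at hxopen)
        rw [he1]
        exact left_mem_segment ℝ w zs
      · obtain ⟨a, b, ha, hb, hab, hcomb⟩ := hxopen
        have hhx : h x = h w + t * (β - h w) := by
          have h' : h x = h w + t * (h q - h w) := by
            rw [hxt, hvdef]
            simp only [map_add, map_smul, map_sub, smul_eq_mul]
            try ring
          rw [hqβ] at h'
          exact h'
        -- helper to treat the case xᵢ = w
        have hcase_w : ∀ (p : Fin d → ℝ) (e e' : ℝ), 0 < e → 0 < e' → e + e' = 1 →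
            e • w + e' • p = x → p ∈ R → p ∈ segment ℝ w zs := by
          intro p e e' he he' hee hcombp hpR
          have he'ne : e' ≠ 0 := ne_of_gt he'
          have h1e : 1 - e = e' := by linarith
          have hp : p = w + (t / e') • v := by
            have hstep : e' • p = e' • (w + (t / e') • v) := by
              have h1 : e' • p = x - e • w := by rw [← hcombp]; abel
              calc e' • p = x - e • w := h1
                _ = (1 - e) • w + t • v := by rw [hxt]; module
                _ = e' • w + t • v := by rw [h1e]
                _ = e' • (w + (t / e') • v) := by
                    rw [smul_add, smul_smul, mul_div_cancel₀ _ he'ne]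
            exact smul_right_injective (Fin d → ℝ) he'ne hstep
          rw [hp]
          exact hmem_seg _ (div_nonneg ht.le he'.le) (hpar_le _ (div_nonneg ht.le he'.le) (hp ▸ hpR))
        by_cases hx1w : x₁ = w
        · rw [hx1w] at hcomb
          rw [hx1w]; exact left_mem_segment ℝ w zs
        · by_cases hx2w : x₂ = w
          · rw [hx2w] at hcomb
            refine hcase_w x₁ b a hb ha (by linarith) (by rw [← hcomb]; abel) hx₁
          · -- main case : both differ from w
            have hlt1 : h x₁ < h w := hhmax x₁ hx₁ hx1w
            have hlt2 : h x₂ < h w := hhmax x₂ hx₂ hx2w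
            have hwβ : (0:ℝ) < h w - β := by linarith
            have hD₁ : (0:ℝ) < h w - h x₁ := by linarith
            have hD₂ : (0:ℝ) < h w - h x₂ := by linarith
            have hπ₁ := hpi x₁ hx₁ hlt1
            have hπ₂ := hpi x₂ hx₂ hlt2
            have hxlin : h x = a * h x₁ + b * h x₂ := by
              rw [← hcomb]
              simp only [map_add, map_smul, smul_eq_mul]
            have hnum : a * (h w - h x₁) + b * (h w - h x₂) = t * (h w - β) := by
              linear_combination h w * hab + hxlin - hhx
            have hγ₁pos : 0 < a * (h w - h x₁) / (t * (h w - β)) :=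
              div_pos (mul_pos ha hD₁) (mul_pos ht hwβ)
            have hγ₂pos : 0 < b * (h w - h x₂) / (t * (h w - β)) :=
              div_pos (mul_pos hb hD₂) (mul_pos ht hwβ)
            have hγsum : a * (h w - h x₁) / (t * (h w - β)) + b * (h w - h x₂) / (t * (h w - β)) = 1 := by
              rw [← add_div, hnum, div_self (ne_of_gt (mul_pos ht hwβ))]
            have hqeq : q = w + t⁻¹ • (x - w) := by
              rw [hxt, hvdef]
              match_scalars <;> field_simp <;> ring
            have hγs₁ : a * (h w - h x₁) / (t * (h w - β)) * ((h w - β) / (h w - h x₁)) = a / t := by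
              field_simp
            have hγs₂ : b * (h w - h x₂) / (t * (h w - β)) * ((h w - β) / (h w - h x₂)) = b / t := by
              field_simp
            have hqcomb : (a * (h w - h x₁) / (t * (h w - β))) • (w + ((h w - β) / (h w - h x₁)) • (x₁ - w))
                + (b * (h w - h x₂) / (t * (h w - β))) • (w + ((h w - β) / (h w - h x₂)) • (x₂ - w)) = q := by
              rw [hqeq, ← hcomb, smul_add, smul_add, smul_smul, smul_smul, hγs₁, hγs₂]
              exact comb_helper w x₁ x₂ _ _ t a b hγsum (ne_of_gt ht) hab
            have hqopen := hqQ.2 hπ₁ hπ₂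
              ⟨_, _, hγ₁pos, hγ₂pos, hγsum, hqcomb⟩
            have hback : ∀ (p : Fin d → ℝ) (sp : ℝ), 0 < sp → p ∈ R →
                w + sp • (p - w) = q → p ∈ segment ℝ w zs := by
              intro p sp hsp hpR hpq
              have h1 : sp • (p - w) = v := by rw [hvdef, ← hpq]; abel
              have hp : p = w + sp⁻¹ • v := by
                rw [← h1]
                match_scalars <;> field_simp <;> ring
              rw [hp]
              exact hmem_seg _ (by positivity) (hpar_le _ (by positivity) (hp ▸ hpR))
            exact hback x₁ _ (div_pos hwβ hD₁) hx₁ hqopen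
  have hzsseg : zs ∈ (segment ℝ w zs).extremePoints ℝ := by
    refine ⟨right_mem_segment ℝ w zs, ?_⟩
    rintro x₁ hx₁ x₂ hx₂ ⟨a, b, ha, hb, hab, hcomb⟩
    obtain ⟨t₁, ht₁0, ht₁T, he₁⟩ := hseg_param x₁ hx₁
    obtain ⟨t₂, ht₂0, ht₂T, he₂⟩ := hseg_param x₂ hx₂
    have hcombv : w + (a * t₁ + b * t₂) • v = w + T • v := by
      rw [← hzsdef, ← hcomb, he₁, he₂]
      match_scalars <;> (try ring) <;> linarith
    have hveq : ((a * t₁ + b * t₂) - T) • v = 0 := by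
      have := hcombv
      have h2 : (a * t₁ + b * t₂) • v = T • v := by
        have h3 := congrArg (fun y => y - w) this
        simpa using h3
      rw [sub_smul, h2, sub_self]
    have hteq : a * t₁ + b * t₂ = T := by
      rcases smul_eq_zero.1 hveq with hc | hc
      · linarith [sub_eq_zero.1 hc]
      · exact absurd hc hvne
    have e0 : a * (T - t₁) + b * (T - t₂) = 0 := by nlinarith
    have e1 : a * (T - t₁) = 0 := by
      nlinarith [mul_nonneg ha.le (sub_nonneg.2 ht₁T), mul_nonneg hb.le (sub_nonneg.2 ht₂T)]
    have e2 : b * (T - t₂) = 0 := by linarith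
    have ht₁T' : t₁ = T := by
      rcases mul_eq_zero.1 e1 with hc | hc
      · exact absurd hc (ne_of_gt ha)
      · linarith
    have ht₂T' : t₂ = T := by
      rcases mul_eq_zero.1 e2 with hc | hc
      · exact absurd hc (ne_of_gt hb)
      · linarith
    rw [he₁, ht₁T', ← hzsdef]
  have hzsextR : zs ∈ R.extremePoints ℝ := hsegext.extremePoints_subset_extremePoints hzsseg
  exact ⟨zs, hzsextR, ⟨Ne.symm hzsW, hw, hzsextR, hsegext⟩, hzsc⟩

/-! ### Descent iteration -/

theorem exists_walk_to_min (V : Finset (Fin d → ℝ)) (c : (Fin d → ℝ) →L[ℝ] ℝ)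
    (hint : ∀ x ∈ V, ∃ z : ℤ, c x = z) {w : Fin d → ℝ}
    (hw : w ∈ (convexHull ℝ (V : Set (Fin d → ℝ))).extremePoints ℝ) :
    ∃ w' ∈ (convexHull ℝ (V : Set (Fin d → ℝ))).extremePoints ℝ,
      (∀ x ∈ convexHull ℝ (V : Set (Fin d → ℝ)), c w' ≤ c x) ∧
      ∃ p : (polytopeGraph (convexHull ℝ (V : Set (Fin d → ℝ)))).Walk w w',
        (p.length : ℝ) ≤ c w - c w' := by
  classical
  have hwV : w ∈ V := extremePoints_convexHull_subset hw
  obtain ⟨v₀, hv₀V, hv₀min⟩ := Finset.exists_min_image V c ⟨w, hwV⟩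
  have hv₀hull : ∀ x ∈ convexHull ℝ (V : Set (Fin d → ℝ)), c v₀ ≤ c x :=
    hull_le (fun x hx => hv₀min x hx)
  suffices H : ∀ (n : ℕ) (w : Fin d → ℝ),
      w ∈ (convexHull ℝ (V : Set (Fin d → ℝ))).extremePoints ℝ → c w ≤ c v₀ + n →
      ∃ w' ∈ (convexHull ℝ (V : Set (Fin d → ℝ))).extremePoints ℝ,
        (∀ x ∈ convexHull ℝ (V : Set (Fin d → ℝ)), c w' ≤ c x) ∧
        ∃ p : (polytopeGraph (convexHull ℝ (V : Set (Fin d → ℝ)))).Walk w w',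
          (p.length : ℝ) ≤ c w - c w' by
    -- pick n large enough
    obtain ⟨zw, hzw⟩ := hint w hwV
    obtain ⟨z₀, hz₀⟩ := hint v₀ hv₀V
    have hle : z₀ ≤ zw := by
      have := hv₀min w hwV
      rw [hzw, hz₀] at this
      exact_mod_cast this
    refine H (zw - z₀).toNat w hw ?_
    rw [hzw, hz₀]
    have h1 : (zw - z₀ : ℤ) ≤ ((zw - z₀).toNat : ℤ) := Int.self_le_toNat _
    have h2 : ((zw:ℝ) - z₀) ≤ (((zw - z₀).toNat : ℕ) : ℝ) := by exact_mod_cast h1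
    linarith
  intro n
  induction n with
  | zero =>
    intro w hw hwle
    refine ⟨w, hw, ?_, SimpleGraph.Walk.nil, by simp⟩
    intro x hx
    have h1 : c v₀ ≤ c w := hv₀hull w hw.1
    have h2 : c w = c v₀ := by push_cast at hwle; linarith
    rw [h2]
    exact hv₀hull x hx
  | succ n ih =>
    intro w hw hwle
    by_cases hmin : c w ≤ c v₀
    · refine ⟨w, hw, ?_, SimpleGraph.Walk.nil, by simp⟩
      intro x hx
      have := hv₀hull x hx
      linarith
    · push_neg at hmin
      obtain ⟨z, hzext, hadj, hzlt⟩ :=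
        exists_adj_lt V hw c (subset_convexHull ℝ (V : Set (Fin d → ℝ)) hv₀V) hmin
      have hzV : z ∈ V := extremePoints_convexHull_subset hzext
      obtain ⟨zz, hzz⟩ := hint z hzV
      have hwV2 : w ∈ V := extremePoints_convexHull_subset hw
      obtain ⟨zw, hzw⟩ := hint w hwV2
      obtain ⟨w', hw'ext, hw'min, p, hp⟩ := ih z hzext (by
        have hlt : (zz : ℝ) < zw := by rw [← hzz, ← hzw]; exact hzlt
        have hle : zz + 1 ≤ zw := by exact_mod_cast hlt
        have hle' : (zz : ℝ) + 1 ≤ (zw : ℝ) := by exact_mod_cast hle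
        rw [hzz]
        rw [hzw] at hwle
        push_cast at hwle ⊢
        linarith)
      refine ⟨w', hw'ext, hw'min, SimpleGraph.Walk.cons hadj p, ?_⟩
      rw [SimpleGraph.Walk.length_cons]
      push_cast
      have hlt : (zz : ℝ) < zw := by rw [← hzz, ← hzw]; exact hzlt
      have hle : zz + 1 ≤ zw := by exact_mod_cast hlt
      have hle' : (zz : ℝ) + 1 ≤ zw := by exact_mod_cast hle
      rw [hzz] at hp
      rw [hzw]
      linarith

/-! ### Faces -/

theorem face_hull (V : Finset (Fin d → ℝ)) (c : (Fin d → ℝ) →L[ℝ] ℝ) (m : ℝ)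
    (hm : ∀ x ∈ V, m ≤ c x) [DecidablePred fun v : Fin d → ℝ => c v = m] :
    convexHull ℝ ((V.filter (fun v => c v = m) : Finset (Fin d → ℝ)) : Set (Fin d → ℝ))
      = {x ∈ convexHull ℝ (V : Set (Fin d → ℝ)) | c x = m} := by
  apply Subset.antisymm
  · intro x hx
    constructor
    · exact convexHull_mono (by exact_mod_cast Finset.coe_subset.2 (Finset.filter_subset _ _)) hx
    · have h1 : m ≤ c x := hull_le (fun y hy => hm y (Finset.mem_filter.1 hy).1) x hx
      have h2 : -m ≤ (-c) x := by
        refine hull_le (f := -c) (fun y hy => ?_) x hx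
        have := (Finset.mem_filter.1 hy).2
        simp only [ContinuousLinearMap.neg_apply, this, le_refl]
      simp only [ContinuousLinearMap.neg_apply, neg_le_neg_iff] at h2
      linarith
  · rintro x ⟨hxhull, hxc⟩
    rw [Finset.convexHull_eq] at hxhull ⊢
    obtain ⟨W, hW0, hW1, hWx⟩ := hxhull
    have hce : ∑ y ∈ V, W y * (c y - m) = 0 := by
      have hcx : c (V.centerMass W id) = ∑ y ∈ V, W y * c y := by
        rw [Finset.centerMass_eq_of_sum_1 _ id hW1]
        simp only [map_sum, map_smul, smul_eq_mul, id]
      rw [hWx, hxc] at hcx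
      have : ∑ y ∈ V, W y * (c y - m) = (∑ y ∈ V, W y * c y) - (∑ y ∈ V, W y) * m := by
        rw [Finset.sum_mul, ← Finset.sum_sub_distrib]
        congr 1
        ext y
        ring
      rw [this, hW1, ← hcx]
      ring
    have hterm : ∀ y ∈ V, W y * (c y - m) = 0 := by
      have hnn : ∀ y ∈ V, 0 ≤ W y * (c y - m) :=
        fun y hy => mul_nonneg (hW0 y hy) (by linarith [hm y hy])
      exact (Finset.sum_eq_zero_iff_of_nonneg hnn).1 hce
    refine ⟨W, fun y hy => hW0 y (Finset.mem_filter.1 hy).1, ?_, ?_⟩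
    · rw [← hW1]
      apply Finset.sum_subset (Finset.filter_subset _ _)
      intro y hyV hyn
      rcases mul_eq_zero.1 (hterm y hyV) with h | h
      · exact h
      · exact absurd (Finset.mem_filter.2 ⟨hyV, by linarith [hm y hyV]⟩) hyn
    · rw [← hWx]
      have hsum1 : ∑ y ∈ V.filter (fun v => c v = m), W y = 1 := by
        rw [← hW1]
        apply Finset.sum_subset (Finset.filter_subset _ _)
        intro y hyV hyn
        rcases mul_eq_zero.1 (hterm y hyV) with h | h
        · exact h
        · exact absurd (Finset.mem_filter.2 ⟨hyV, by linarith [hm y hyV]⟩) hyn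
      rw [Finset.centerMass_eq_of_sum_1 _ id hW1, Finset.centerMass_eq_of_sum_1 _ id hsum1]
      apply Finset.sum_subset (Finset.filter_subset _ _)
      intro y hyV hyn
      rcases mul_eq_zero.1 (hterm y hyV) with h | h
      · simp [h]
      · exact absurd (Finset.mem_filter.2 ⟨hyV, by linarith [hm y hyV]⟩) hyn

/-! ### Connectivity of the polytope graph -/

theorem reachable_extreme (V : Finset (Fin d → ℝ)) {a b : Fin d → ℝ}
    (ha : a ∈ (convexHull ℝ (V : Set (Fin d → ℝ))).extremePoints ℝ)
    (hb : b ∈ (convexHull ℝ (V : Set (Fin d → ℝ))).extremePoints ℝ) :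
    (polytopeGraph (convexHull ℝ (V : Set (Fin d → ℝ)))).Reachable a b := by
  classical
  have hbV : b ∈ V := extremePoints_convexHull_subset hb
  by_cases hne : (V.erase b).Nonempty
  case neg =>
    -- V = {b}
    have hV : V = {b} := by
      apply Finset.eq_singleton_iff_unique_mem.2
      refine ⟨hbV, fun x hx => ?_⟩
      by_contra hxb
      exact hne ⟨x, Finset.mem_erase.2 ⟨hxb, hx⟩⟩
    have haV : a ∈ V := extremePoints_convexHull_subset ha
    rw [hV, Finset.mem_singleton] at haV
    rw [haV]
  case pos =>
    have hbK : b ∉ convexHull ℝ ((V.erase b : Finset (Fin d → ℝ)) : Set (Fin d → ℝ)) :=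
      not_mem_erase_hull hb
    obtain ⟨f, u, hfb, hfK⟩ := geometric_hahn_banach_point_closed (convex_convexHull ℝ _)
      (Set.Finite.isCompact_convexHull ℝ (Finset.finite_toSet _)).isClosed hbK
    -- f is uniquely minimized at b over the hull
    have hstrict : ∀ p ∈ convexHull ℝ (V : Set (Fin d → ℝ)), p ≠ b → f b < f p := by
      intro p hp hpb
      obtain ⟨z, hzK, r, hr0, hr1, hrep⟩ := join_rep hbV hne hp
      have hz : f b < f z := lt_trans hfb (hfK z hzK)
      have hv : f p = f b + r * (f z - f b) := by
        rw [hrep]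
        simp only [map_add, map_smul, map_sub, smul_eq_mul]
        try ring
      rcases eq_or_lt_of_le hr0 with hr | hr
      · exact absurd (by rw [hrep, ← hr]; simp) hpb
      · nlinarith
    suffices H : ∀ (n : ℕ) (a : Fin d → ℝ),
        a ∈ (convexHull ℝ (V : Set (Fin d → ℝ))).extremePoints ℝ →
        (V.filter (fun x => f x < f a)).card ≤ n →
        (polytopeGraph (convexHull ℝ (V : Set (Fin d → ℝ)))).Reachable a b by
      exact H _ a ha le_rfl
    intro n
    induction n with
    | zero =>
      intro a ha hcard
      by_cases hab : a = b
      · rw [hab]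
      · exfalso
        obtain ⟨z, hzext, hadj, hzlt⟩ := exists_adj_lt V ha f
          (subset_convexHull ℝ (V : Set (Fin d → ℝ)) hbV) (hstrict a ha.1 hab)
        have hzV : z ∈ V := extremePoints_convexHull_subset hzext
        have : z ∈ V.filter (fun x => f x < f a) := Finset.mem_filter.2 ⟨hzV, hzlt⟩
        have := Finset.card_pos.2 ⟨z, this⟩
        omega
    | succ n ih =>
      intro a ha hcard
      by_cases hab : a = b
      · rw [hab]
      · obtain ⟨z, hzext, hadj, hzlt⟩ := exists_adj_lt V ha f
          (subset_convexHull ℝ (V : Set (Fin d → ℝ)) hbV) (hstrict a ha.1 hab)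
        have hzV : z ∈ V := extremePoints_convexHull_subset hzext
        have hss : (V.filter (fun x => f x < f z)) ⊂ (V.filter (fun x => f x < f a)) := by
          refine Finset.ssubset_iff_of_subset ?_ |>.2 ?_
          · intro y hy
            obtain ⟨hyV, hyf⟩ := Finset.mem_filter.1 hy
            exact Finset.mem_filter.2 ⟨hyV, lt_trans hyf hzlt⟩
          · exact ⟨z, Finset.mem_filter.2 ⟨hzV, hzlt⟩, by simp⟩
        have hcard' : (V.filter (fun x => f x < f z)).card ≤ n := by
          have := Finset.card_lt_card hss
          omega
        exact SimpleGraph.Reachable.trans ⟨SimpleGraph.Walk.cons hadj SimpleGraph.Walk.nil⟩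
          (ih z hzext hcard')

/-! ### Walks in extreme subsets -/

theorem graph_mono {P F : Set (Fin d → ℝ)} (hext : IsExtreme ℝ P F) :
    polytopeGraph F ≤ polytopeGraph P := by
  intro a b hab
  exact ⟨hab.1, hext.extremePoints_subset_extremePoints hab.2.1,
    hext.extremePoints_subset_extremePoints hab.2.2.1, hext.trans hab.2.2.2⟩

/-! ### Transfer along mutually inverse affine maps -/

/-- affine on two-point combinations -/
def AffOn {e : ℕ} (f : (Fin d → ℝ) → (Fin e → ℝ)) : Prop :=
  ∀ (a b : ℝ) (x y : Fin d → ℝ), a + b = 1 → f (a • x + b • y) = a • f x + b • f y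

section Pair

variable {e : ℕ} {f : (Fin d → ℝ) → (Fin e → ℝ)} {g : (Fin e → ℝ) → (Fin d → ℝ)}
  {S : Set (Fin d → ℝ)} {T : Set (Fin e → ℝ)}

theorem pair_extremePoint (hag : AffOn g)
    (hfS : ∀ x ∈ S, f x ∈ T) (hgT : ∀ y ∈ T, g y ∈ S)
    (hgf : ∀ x ∈ S, g (f x) = x) (hfg : ∀ y ∈ T, f (g y) = y) {x : Fin d → ℝ}
    (hx : x ∈ S.extremePoints ℝ) : f x ∈ T.extremePoints ℝ := by
  refine ⟨hfS x hx.1, ?_⟩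
  rintro y₁ hy₁ y₂ hy₂ ⟨a, b, ha, hb, hab, hco⟩
  have hgo : a • g y₁ + b • g y₂ = x := by
    rw [← hag a b y₁ y₂ hab, hco, hgf x hx.1]
  have h1 := hx.2 (hgT y₁ hy₁) (hgT y₂ hy₂) ⟨a, b, ha, hb, hab, hgo⟩
  rw [← hfg y₁ hy₁, h1]

theorem pair_isExtreme (hag : AffOn g)
    (hfS : ∀ x ∈ S, f x ∈ T) (hgT : ∀ y ∈ T, g y ∈ S)
    (hgf : ∀ x ∈ S, g (f x) = x) (hfg : ∀ y ∈ T, f (g y) = y) {A : Set (Fin d → ℝ)}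
    (hA : IsExtreme ℝ S A) : IsExtreme ℝ T (f '' A) := by
  constructor
  · rintro y ⟨x, hxA, rfl⟩
    exact hfS x (hA.1 hxA)
  · rintro y₁ hy₁ y₂ hy₂ y ⟨x, hxA, rfl⟩ ⟨a, b, ha, hb, hab, hco⟩
    have hgo : a • g y₁ + b • g y₂ = x := by
      rw [← hag a b y₁ y₂ hab, hco, hgf x (hA.1 hxA)]
    have h1 := hA.2 (hgT y₁ hy₁) (hgT y₂ hy₂) hxA ⟨a, b, ha, hb, hab, hgo⟩
    exact ⟨g y₁, h1, hfg y₁ hy₁⟩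

theorem pair_segment (haf : AffOn f) (x y : Fin d → ℝ) :
    f '' segment ℝ x y = segment ℝ (f x) (f y) := by
  apply Subset.antisymm
  · rintro z ⟨p, ⟨a, b, ha, hb, hab, hco⟩, rfl⟩
    exact ⟨a, b, ha, hb, hab, by rw [← hco, haf a b x y hab]⟩
  · rintro z ⟨a, b, ha, hb, hab, hco⟩
    exact ⟨a • x + b • y, ⟨a, b, ha, hb, hab, rfl⟩, by rw [haf a b x y hab, hco]⟩

theorem pair_adj (haf : AffOn f) (hag : AffOn g)
    (hfS : ∀ x ∈ S, f x ∈ T) (hgT : ∀ y ∈ T, g y ∈ S)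
    (hgf : ∀ x ∈ S, g (f x) = x) (hfg : ∀ y ∈ T, f (g y) = y) {x y : Fin d → ℝ}
    (hadj : (polytopeGraph S).Adj x y) : (polytopeGraph T).Adj (f x) (f y) := by
  obtain ⟨hne, hxe, hye, hseg⟩ := hadj
  refine ⟨?_, pair_extremePoint hag hfS hgT hgf hfg hxe,
    pair_extremePoint hag hfS hgT hgf hfg hye, ?_⟩
  · intro hfe
    apply hne
    rw [← hgf x hxe.1, ← hgf y hye.1, hfe]
  · rw [← pair_segment haf x y]
    exact pair_isExtreme hag hfS hgT hgf hfg hseg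

theorem pair_walk (haf : AffOn f) (hag : AffOn g)
    (hfS : ∀ x ∈ S, f x ∈ T) (hgT : ∀ y ∈ T, g y ∈ S)
    (hgf : ∀ x ∈ S, g (f x) = x) (hfg : ∀ y ∈ T, f (g y) = y) {x y : Fin d → ℝ}
    (p : (polytopeGraph S).Walk x y) :
    ∃ q : (polytopeGraph T).Walk (f x) (f y), q.length = p.length := by
  induction p with
  | nil => exact ⟨SimpleGraph.Walk.nil, rfl⟩
  | cons h p ih =>
    obtain ⟨q, hq⟩ := ih
    exact ⟨SimpleGraph.Walk.cons (pair_adj haf hag hfS hgT hgf hfg h) q, by simp [hq]⟩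

end Pair

/-! ### Cardinality and diameter bounds -/

/-- the lattice grid -/
noncomputable def grid (d k : ℕ) : Finset (Fin d → ℝ) :=
  (Finset.univ : Finset (Fin d → Fin (k+1))).image (fun f i => ((f i : ℕ) : ℝ))

theorem mem_grid {k : ℕ} {x : Fin d → ℝ} (hx : ∀ i, ∃ n : ℕ, n ≤ k ∧ x i = n) :
    x ∈ grid d k := by
  choose n hn hxn using hx
  refine Finset.mem_image.2 ⟨fun i => ⟨n i, Nat.lt_succ_of_le (hn i)⟩, Finset.mem_univ _, ?_⟩
  funext i
  exact (hxn i).symm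

theorem grid_card (d k : ℕ) : (grid d k).card ≤ (k+1)^d := by
  refine le_trans (Finset.card_image_le) ?_
  rw [Finset.card_univ]
  simp [Fintype.card_fun]

theorem walk_support_extreme {P : Set (Fin d → ℝ)} {a b : Fin d → ℝ}
    (p : (polytopeGraph P).Walk a b) (ha : a ∈ P.extremePoints ℝ) :
    ∀ x ∈ p.support, x ∈ P.extremePoints ℝ := by
  induction p with
  | nil => intro x hx; simp at hx; rwa [hx]
  | cons h q ih =>
    intro x hx
    rw [SimpleGraph.Walk.support_cons, List.mem_cons] at hx
    rcases hx with rfl | hx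
    · exact ha
    · exact ih h.2.2.1 x hx

theorem dist_le_card {V : Finset (Fin d → ℝ)} {a b : Fin d → ℝ}
    (ha : a ∈ (convexHull ℝ (V : Set (Fin d → ℝ))).extremePoints ℝ) :
    (polytopeGraph (convexHull ℝ (V : Set (Fin d → ℝ)))).dist a b ≤ V.card := by
  classical
  by_cases hr : (polytopeGraph (convexHull ℝ (V : Set (Fin d → ℝ)))).Reachable a b
  · obtain ⟨p, hp⟩ := hr.exists_walk_length_eq_dist
    set q := p.bypass with hq
    have hqp : q.IsPath := p.bypass_isPath
    have hlen : q.length ≤ p.length := p.length_bypass_le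
    have hsupp : ∀ x ∈ q.support, x ∈ V := by
      intro x hx
      exact extremePoints_convexHull_subset
        (walk_support_extreme q ha x hx)
    have hnodup : q.support.Nodup := hqp.support_nodup
    have hcard : q.support.length ≤ V.card := by
      rw [← List.toFinset_card_of_nodup hnodup]
      apply Finset.card_le_card
      intro x hx
      exact hsupp x (List.mem_toFinset.1 hx)
    rw [SimpleGraph.Walk.length_support] at hcard
    calc (polytopeGraph (convexHull ℝ (V : Set (Fin d → ℝ)))).dist a b
        ≤ q.length := SimpleGraph.dist_le q
      _ ≤ V.card := by omega
  · rw [SimpleGraph.dist_eq_zero_of_not_reachable hr]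
    exact Nat.zero_le _

theorem dist_le_bound {k : ℕ} {V : Finset (Fin d → ℝ)}
    (hV : ∀ v ∈ V, ∀ i : Fin d, ∃ n : ℕ, n ≤ k ∧ v i = n) {a b : Fin d → ℝ}
    (ha : a ∈ (convexHull ℝ (V : Set (Fin d → ℝ))).extremePoints ℝ) :
    (polytopeGraph (convexHull ℝ (V : Set (Fin d → ℝ)))).dist a b ≤ (k+1)^d := by
  refine le_trans (dist_le_card ha) (le_trans (Finset.card_le_card ?_) (grid_card d k))
  intro x hx
  exact mem_grid (hV x hx)

theorem polyDiam_le_bound {k : ℕ} {P : Set (Fin d → ℝ)} (hP : IsLatticePolytope d k P) :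
    polyDiam P ≤ (k+1)^d := by
  obtain ⟨V, hV, rfl⟩ := hP
  rw [polyDiam]
  rcases Set.eq_empty_or_nonempty { n : ℕ | ∃ u ∈ (convexHull ℝ (V : Set (Fin d → ℝ))).extremePoints ℝ,
      ∃ v ∈ (convexHull ℝ (V : Set (Fin d → ℝ))).extremePoints ℝ,
      (polytopeGraph (convexHull ℝ (V : Set (Fin d → ℝ)))).dist u v = n } with he | hne
  · rw [he]
    simp
  · refine csSup_le hne ?_
    rintro n ⟨u, hu, v, hv, rfl⟩
    exact dist_le_bound hV hu

theorem dist_le_latticeDiam {k : ℕ} {P : Set (Fin d → ℝ)} (hP : IsLatticePolytope d k P)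
    {a b : Fin d → ℝ} (ha : a ∈ P.extremePoints ℝ) (hb : b ∈ P.extremePoints ℝ) :
    (polytopeGraph P).dist a b ≤ latticeDiam d k := by
  have h1 : (polytopeGraph P).dist a b ≤ polyDiam P := by
    refine le_csSup ⟨(k+1)^d, ?_⟩ ⟨a, ha, b, hb, rfl⟩
    rintro n ⟨u, hu, v, hv, rfl⟩
    obtain ⟨V, hV, rfl⟩ := hP
    exact dist_le_bound hV hu
  refine le_trans h1 (le_csSup ⟨(k+1)^d, ?_⟩ ⟨P, hP, rfl⟩)
  rintro n ⟨P', hP', rfl⟩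
  exact polyDiam_le_bound hP'

/-! ### Projection to lower dimension -/

theorem project_walk {k : ℕ} (I : Finset (Fin d)) (W : Finset (Fin d → ℝ))
    (hWlat : ∀ v ∈ W, ∀ i : Fin d, ∃ n : ℕ, n ≤ k ∧ v i = n)
    (ξ : Fin d → ℝ) (hWξ : ∀ x ∈ W, ∀ i ∈ I, x i = ξ i)
    {a b : Fin d → ℝ}
    (ha : a ∈ (convexHull ℝ (W : Set (Fin d → ℝ))).extremePoints ℝ)
    (hb : b ∈ (convexHull ℝ (W : Set (Fin d → ℝ))).extremePoints ℝ) :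
    ∃ q : (polytopeGraph (convexHull ℝ (W : Set (Fin d → ℝ)))).Walk a b,
      q.length ≤ latticeDiam (d - I.card) k := by
  classical
  have hc : (Iᶜ : Finset (Fin d)).card = d - I.card := by
    rw [Finset.card_compl]
    simp
  set E := (Iᶜ : Finset (Fin d)).orderIsoOfFin hc with hE
  set f : (Fin d → ℝ) → (Fin (d - I.card) → ℝ) := fun x j => x (E j : Fin d) with hf
  set g : (Fin (d - I.card) → ℝ) → (Fin d → ℝ) :=
    fun y i => if h : i ∈ I then ξ i
      else y (E.symm ⟨i, Finset.mem_compl.2 h⟩) with hg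
  have haf : AffOn f := by
    intro p q x y hpq
    funext j
    simp [hf]
  have hag : AffOn g := by
    intro p q x y hpq
    funext i
    simp only [hg, Pi.add_apply, Pi.smul_apply, smul_eq_mul]
    by_cases hi : i ∈ I
    · rw [dif_pos hi, dif_pos hi, dif_pos hi]
      linear_combination (ξ i) * hpq.symm
    · rw [dif_neg hi, dif_neg hi, dif_neg hi]
  have key1 : ∀ x : Fin d → ℝ, (∀ i ∈ I, x i = ξ i) → g (f x) = x := by
    intro x hx
    funext i
    by_cases hi : i ∈ I
    · simp only [hg, dif_pos hi]
      exact (hx i hi).symm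
    · simp only [hg, dif_neg hi, hf]
      congr 1
      have := E.apply_symm_apply ⟨i, Finset.mem_compl.2 hi⟩
      exact congrArg Subtype.val this
  have key2 : ∀ y : Fin (d - I.card) → ℝ, f (g y) = y := by
    intro y
    funext j
    have hmem : (E j : Fin d) ∈ (Iᶜ : Finset (Fin d)) := (E j).2
    have hni : (E j : Fin d) ∉ I := Finset.mem_compl.1 hmem
    simp only [hf, hg, dif_neg hni]
    congr 1
    have : (⟨(E j : Fin d), hmem⟩ : {x // x ∈ (Iᶜ : Finset (Fin d))}) = E j := rfl
    rw [this, E.symm_apply_apply]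
  have hconst : ∀ x ∈ convexHull ℝ (W : Set (Fin d → ℝ)), ∀ i ∈ I, x i = ξ i := by
    have hconv : Convex ℝ {x : Fin d → ℝ | ∀ i ∈ I, x i = ξ i} := by
      intro x hx y hy p q hp hq hpq
      intro i hi
      simp only [Pi.add_apply, Pi.smul_apply, smul_eq_mul, hx i hi, hy i hi]
      linear_combination (ξ i) * hpq
    exact fun x hx => convexHull_min (fun y hy => hWξ y hy) hconv hx
  have hlinf : IsLinearMap ℝ f := ⟨fun x y => rfl, fun c x => rfl⟩
  have himg : convexHull ℝ ((W.image f : Finset (Fin (d - I.card) → ℝ)) : Set (Fin (d - I.card) → ℝ))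
      = f '' convexHull ℝ (W : Set (Fin d → ℝ)) := by
    rw [Finset.coe_image, hlinf.image_convexHull]
  have hfS : ∀ x ∈ convexHull ℝ (W : Set (Fin d → ℝ)),
      f x ∈ convexHull ℝ ((W.image f : Finset _) : Set (Fin (d - I.card) → ℝ)) := by
    intro x hx
    rw [himg]
    exact ⟨x, hx, rfl⟩
  have hgT : ∀ y ∈ convexHull ℝ ((W.image f : Finset _) : Set (Fin (d - I.card) → ℝ)),
      g y ∈ convexHull ℝ (W : Set (Fin d → ℝ)) := by
    intro y hy
    rw [himg] at hy
    obtain ⟨x, hx, rfl⟩ := hy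
    rw [key1 x (hconst x hx)]
    exact hx
  have hgf : ∀ x ∈ convexHull ℝ (W : Set (Fin d → ℝ)), g (f x) = x :=
    fun x hx => key1 x (hconst x hx)
  have hfg : ∀ y ∈ convexHull ℝ ((W.image f : Finset _) : Set (Fin (d - I.card) → ℝ)),
      f (g y) = y := fun y _ => key2 y
  have ha' := pair_extremePoint hag hfS hgT hgf hfg ha
  have hb' := pair_extremePoint hag hfS hgT hgf hfg hb
  have hlat' : IsLatticePolytope (d - I.card) k
      (convexHull ℝ ((W.image f : Finset _) : Set (Fin (d - I.card) → ℝ))) := by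
    refine ⟨W.image f, ?_, rfl⟩
    intro v' hv' j
    obtain ⟨v, hv, rfl⟩ := Finset.mem_image.1 hv'
    exact hWlat v hv (E j : Fin d)
  obtain ⟨p, hp⟩ := (reachable_extreme (W.image f) ha' hb').exists_walk_length_eq_dist
  have hdist := dist_le_latticeDiam hlat' ha' hb'
  obtain ⟨q, hq⟩ := pair_walk hag haf hgT hfS hfg hgf p
  refine ⟨q.copy (hgf a ha.1) (hgf b hb.1), ?_⟩
  rw [SimpleGraph.Walk.length_copy, hq, hp]
  exact hdist

/-! ### Second stage descent (for |I| = 2) -/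

theorem stage2 {k : ℕ} (I : Finset (Fin d)) (W1 : Finset (Fin d → ℝ))
    (hW1lat : ∀ v ∈ W1, ∀ l : Fin d, ∃ n : ℕ, n ≤ k ∧ v l = n)
    (i j : Fin d) (hI : I = {i, j}) (m : ℝ)
    (hsum2 : ∀ x ∈ W1, x i + x j = m)
    (cg : (Fin d → ℝ) →L[ℝ] ℝ) (ε : ℝ) (hε : ε ≠ 0)
    (hcgval : ∀ x : Fin d → ℝ, cg x = ε * x i)
    (hint : ∀ x ∈ W1, ∃ z : ℤ, cg x = z)
    {us vs : Fin d → ℝ}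
    (hus : us ∈ (convexHull ℝ (W1 : Set (Fin d → ℝ))).extremePoints ℝ)
    (hvs : vs ∈ (convexHull ℝ (W1 : Set (Fin d → ℝ))).extremePoints ℝ) :
    ∃ M : ℝ, (∀ x ∈ convexHull ℝ (W1 : Set (Fin d → ℝ)), M ≤ cg x) ∧
      (∃ x₀ ∈ W1, cg x₀ = M) ∧
      ∃ q : (polytopeGraph (convexHull ℝ (W1 : Set (Fin d → ℝ)))).Walk us vs,
        (q.length : ℝ) ≤ cg us + cg vs - 2*M + latticeDiam (d - I.card) k := by
  classical
  obtain ⟨us2, hus2ext, hus2min, pu2, hpu2⟩ := exists_walk_to_min W1 cg hint hus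
  obtain ⟨vs2, hvs2ext, hvs2min, pv2, hpv2⟩ := exists_walk_to_min W1 cg hint hvs
  have hmeq : cg us2 = cg vs2 := le_antisymm (hus2min vs2 hvs2ext.1) (hvs2min us2 hus2ext.1)
  set M := cg us2 with hM
  have hus2V : us2 ∈ W1 := extremePoints_convexHull_subset hus2ext
  have hvs2V : vs2 ∈ W1 := extremePoints_convexHull_subset hvs2ext
  have hMlow : ∀ x ∈ W1, M ≤ cg x := fun x hx =>
    hus2min x (subset_convexHull ℝ (W1 : Set (Fin d → ℝ)) hx)
  set W2 := W1.filter (fun v => cg v = M) with hW2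
  have hface2 := face_hull W1 cg M hMlow
  have hF2ext : IsExtreme ℝ (convexHull ℝ (W1 : Set (Fin d → ℝ)))
      (convexHull ℝ (W2 : Set (Fin d → ℝ))) := by
    rw [hW2, hface2]
    exact isExtreme_argmin (hull_le hMlow)
  have hus2F : us2 ∈ convexHull ℝ (W2 : Set (Fin d → ℝ)) := by
    rw [hW2, hface2]
    exact ⟨hus2ext.1, rfl⟩
  have hvs2F : vs2 ∈ convexHull ℝ (W2 : Set (Fin d → ℝ)) := by
    rw [hW2, hface2]
    exact ⟨hvs2ext.1, hmeq.symm⟩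
  have hus2extF : us2 ∈ (convexHull ℝ (W2 : Set (Fin d → ℝ))).extremePoints ℝ :=
    extremePoint_of_subset hF2ext.1 hus2F hus2ext
  have hvs2extF : vs2 ∈ (convexHull ℝ (W2 : Set (Fin d → ℝ))).extremePoints ℝ :=
    extremePoint_of_subset hF2ext.1 hvs2F hvs2ext
  have hW2sub : ∀ x ∈ W2, x ∈ W1 := fun x hx => (Finset.mem_filter.1 hx).1
  have hW2lat : ∀ v ∈ W2, ∀ l : Fin d, ∃ n : ℕ, n ≤ k ∧ v l = n :=
    fun v hv => hW1lat v (hW2sub v hv)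
  have hW2ξ : ∀ x ∈ W2, ∀ l ∈ I, x l = (fun l => if l = i then M/ε else m - M/ε) l := by
    intro x hx l hl
    show x l = if l = i then M / ε else m - M / ε
    have hxi : x i = M / ε := by
      have hcx : cg x = M := (Finset.mem_filter.1 hx).2
      rw [hcgval] at hcx
      field_simp
      linarith [hcx]
    rw [hI] at hl
    rcases Finset.mem_insert.1 hl with rfl | hl
    · simp [hxi]
    · rw [Finset.mem_singleton] at hl
      subst hl
      have hxj : x i + x l = m := hsum2 x (hW2sub x hx)
      by_cases hli : l = i
      · rw [if_pos hli, hli]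
        exact hxi
      · rw [if_neg hli]
        linarith [hxi]
  obtain ⟨q2, hq2⟩ := project_walk I W2 hW2lat _ hW2ξ hus2extF hvs2extF
  set q2' := q2.mapLe (graph_mono hF2ext) with hq2'
  refine ⟨M, fun x hx => hull_le hMlow x hx, ⟨us2, hus2V, rfl⟩, ?_⟩
  refine ⟨pu2.append (q2'.append pv2.reverse), ?_⟩
  rw [SimpleGraph.Walk.length_append, SimpleGraph.Walk.length_append,
    SimpleGraph.Walk.length_reverse]
  have hq2len : q2'.length = q2.length := SimpleGraph.Walk.length_map _ _
  push_cast
  rw [hq2len]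
  have hcast : (q2.length : ℝ) ≤ (latticeDiam (d - I.card) k : ℝ) := by exact_mod_cast hq2
  linarith [hpu2, hpv2, hcast]

end DPL

open DPL

/-- If `u`, `v` are vertices of a lattice `(d,k)`-polytope `P`, `I` is a set of one or
two coordinate indices with `u i + v i ≤ k` for every `i ∈ I`, and `∑_{i ∈ I} x i > 0`
for every `x ∈ P`, then `d(u,v) < δ(d−|I|,k) + ∑_{i ∈ I} (u i + v i)`. -/
theorem dist_lt_of_small_sum (d k : ℕ) (P : Set (Fin d → ℝ)) (hP : IsLatticePolytope d k P)
    (u v : Fin d → ℝ) (hu : u ∈ P.extremePoints ℝ) (hv : v ∈ P.extremePoints ℝ)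
    (I : Finset (Fin d)) (hI1 : 1 ≤ I.card) (hI2 : I.card ≤ 2)
    (hsum : ∀ i ∈ I, u i + v i ≤ (k : ℝ))
    (hpos : ∀ x ∈ P, 0 < ∑ i ∈ I, x i) :
    ((polytopeGraph P).dist u v : ℝ) <
      (latticeDiam (d - I.card) k : ℝ) + ∑ i ∈ I, (u i + v i) := by
  classical
  obtain ⟨V, hVlat, rfl⟩ := hP
  set c : (Fin d → ℝ) →L[ℝ] ℝ := ∑ i ∈ I, ContinuousLinearMap.proj i with hcdef
  have hcsum : ∀ x : Fin d → ℝ, c x = ∑ i ∈ I, x i := by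
    intro x
    rw [hcdef]
    simp [ContinuousLinearMap.sum_apply]
  have hnatc : ∀ x ∈ V, ∃ n : ℕ, c x = n := by
    intro x hx
    choose n hn hxn using hVlat x hx
    refine ⟨∑ i ∈ I, n i, ?_⟩
    rw [hcsum, Finset.sum_congr rfl (fun i _ => hxn i)]
    push_cast
    rfl
  have hintc : ∀ x ∈ V, ∃ z : ℤ, c x = z := by
    intro x hx
    obtain ⟨n, hn⟩ := hnatc x hx
    exact ⟨n, by rw [hn]; push_cast; ring⟩
  have hcoord : ∀ x ∈ V, ∀ l : Fin d, 0 ≤ x l ∧ x l ≤ (k:ℝ) := by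
    intro x hx l
    obtain ⟨n, hnk, hxn⟩ := hVlat x hx l
    refine ⟨by rw [hxn]; positivity, by rw [hxn]; exact_mod_cast hnk⟩
  obtain ⟨us, husext, husmin, pu, hpu⟩ := exists_walk_to_min V c hintc hu
  obtain ⟨vs, hvsext, hvsmin, pv, hpv⟩ := exists_walk_to_min V c hintc hv
  have hmeq : c us = c vs := le_antisymm (husmin vs hvsext.1) (hvsmin us husext.1)
  set m := c us with hmdef
  have husV : us ∈ V := extremePoints_convexHull_subset husext
  have hvsV : vs ∈ V := extremePoints_convexHull_subset hvsext
  obtain ⟨mN, hmN⟩ := hnatc us husV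
  have hmpos : (0:ℝ) < m := by
    rw [hmdef, hcsum]
    exact hpos us (subset_convexHull ℝ (V : Set (Fin d → ℝ)) husV)
  have hm1 : (1:ℝ) ≤ m := by
    have h1 : (0:ℝ) < (mN:ℝ) := by rw [← hmN]; exact hmpos
    have h2 : 1 ≤ mN := by exact_mod_cast h1
    calc (1:ℝ) ≤ (mN:ℝ) := by exact_mod_cast h2
      _ = m := hmN.symm
  have hmlow : ∀ x ∈ V, m ≤ c x := fun x hx =>
    husmin x (subset_convexHull ℝ (V : Set (Fin d → ℝ)) hx)
  set W1 := V.filter (fun w => c w = m) with hW1def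
  have hface := face_hull V c m hmlow
  have hFext : IsExtreme ℝ (convexHull ℝ (V : Set (Fin d → ℝ)))
      (convexHull ℝ (W1 : Set (Fin d → ℝ))) := by
    rw [hW1def, hface]
    exact isExtreme_argmin (hull_le hmlow)
  have husF : us ∈ convexHull ℝ (W1 : Set (Fin d → ℝ)) := by
    rw [hW1def, hface]
    exact ⟨husext.1, rfl⟩
  have hvsF : vs ∈ convexHull ℝ (W1 : Set (Fin d → ℝ)) := by
    rw [hW1def, hface]
    exact ⟨hvsext.1, hmeq.symm⟩
  have husextF := extremePoint_of_subset hFext.1 husF husext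
  have hvsextF := extremePoint_of_subset hFext.1 hvsF hvsext
  have hW1sub : ∀ x ∈ W1, x ∈ V := fun x hx => (Finset.mem_filter.1 hx).1
  have hW1lat : ∀ w ∈ W1, ∀ l : Fin d, ∃ n : ℕ, n ≤ k ∧ w l = n :=
    fun w hw => hVlat w (hW1sub w hw)
  have hgoalsum : ∑ i ∈ I, (u i + v i) = c u + c v := by
    rw [hcsum, hcsum, Finset.sum_add_distrib]
  have hmid : ∃ q : (polytopeGraph (convexHull ℝ (V : Set (Fin d → ℝ)))).Walk us vs,
      (q.length : ℝ) < (latticeDiam (d - I.card) k : ℝ) + 2*m := by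
    rcases (by omega : I.card = 1 ∨ I.card = 2) with h1 | h2
    · -- one coordinate
      obtain ⟨i, hi⟩ := Finset.card_eq_one.1 h1
      have hW1ξ : ∀ x ∈ W1, ∀ l ∈ I, x l = (fun _ => m) l := by
        intro x hx l hl
        rw [hi, Finset.mem_singleton] at hl
        subst hl
        have hcx := (Finset.mem_filter.1 hx).2
        rwa [hcsum, hi, Finset.sum_singleton] at hcx
      obtain ⟨q1, hq1⟩ := project_walk I W1 hW1lat _ hW1ξ husextF hvsextF
      refine ⟨q1.mapLe (graph_mono hFext), ?_⟩
      have hlen : (q1.mapLe (graph_mono hFext)).length = q1.length :=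
        SimpleGraph.Walk.length_map _ _
      rw [hlen]
      have : (q1.length : ℝ) ≤ (latticeDiam (d - I.card) k : ℝ) := by exact_mod_cast hq1
      linarith
    · -- two coordinates
      obtain ⟨i, j, hij, hI⟩ := Finset.card_eq_two.1 h2
      have hsum2 : ∀ x ∈ W1, x i + x j = m := by
        intro x hx
        have hcx := (Finset.mem_filter.1 hx).2
        rwa [hcsum, hI, Finset.sum_pair hij] at hcx
      set ci : (Fin d → ℝ) →L[ℝ] ℝ := ContinuousLinearMap.proj i with hcidef
      have hcival : ∀ x : Fin d → ℝ, ci x = (1:ℝ) * x i := by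
        intro x
        rw [hcidef]
        simp
      have hcival' : ∀ x : Fin d → ℝ, (-ci) x = (-1:ℝ) * x i := by
        intro x
        simp only [ContinuousLinearMap.neg_apply, hcival x]
        ring
      have hint1 : ∀ x ∈ W1, ∃ z : ℤ, ci x = z := by
        intro x hx
        obtain ⟨n, hnk, hxn⟩ := hVlat x (hW1sub x hx) i
        exact ⟨n, by rw [hcival x, hxn]; push_cast; ring⟩
      have hint2 : ∀ x ∈ W1, ∃ z : ℤ, (-ci) x = z := by
        intro x hx
        obtain ⟨n, hnk, hxn⟩ := hVlat x (hW1sub x hx) i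
        exact ⟨-n, by rw [hcival' x, hxn]; push_cast; ring⟩
      obtain ⟨M1, hM1low, ⟨x₀, hx₀W, hx₀val⟩, q1, hq1⟩ :=
        stage2 I W1 hW1lat i j hI m hsum2 ci 1 one_ne_zero hcival hint1 husextF hvsextF
      obtain ⟨M2, hM2low, ⟨x₁, hx₁W, hx₁val⟩, q2, hq2⟩ :=
        stage2 I W1 hW1lat i j hI m hsum2 (-ci) (-1) (by norm_num) hcival' hint2 husextF hvsextF
      -- identify the values
      have hM1val : M1 = x₀ i := by
        have := hcival x₀
        rw [hx₀val] at this
        linarith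
      have hM2val : M2 = -(x₁ i) := by
        have := hcival' x₁
        rw [hx₁val] at this
        linarith
      have hx₀V : x₀ ∈ V := hW1sub x₀ hx₀W
      have hx₁V : x₁ ∈ V := hW1sub x₁ hx₁W
      have hb1 : 0 ≤ M1 := by
        rw [hM1val]
        exact (hcoord x₀ hx₀V i).1
      have hb2 : m - (k:ℝ) ≤ M1 := by
        rw [hM1val]
        have := hsum2 x₀ hx₀W
        have := (hcoord x₀ hx₀V j).2
        linarith
      have hb3 : -M2 ≤ (k:ℝ) := by
        rw [hM2val]
        have := (hcoord x₁ hx₁V i).2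
        linarith
      have hb4 : -M2 ≤ m := by
        rw [hM2val]
        have := hsum2 x₁ hx₁W
        have := (hcoord x₁ hx₁V j).1
        linarith
      have hmN' : m = (mN:ℝ) := by rw [hmdef]; exact hmN
      have hkm : m ≤ (k:ℝ) ∨ (k:ℝ) + 1 ≤ m := by
        rcases le_or_gt mN k with h | h
        · left
          rw [hmN']
          exact_mod_cast h
        · right
          have h2 : k + 1 ≤ mN := h
          rw [hmN']
          exact_mod_cast h2
      have hkey : (-M2) - M1 ≤ 2*m - 1 := by
        rcases hkm with h | h
        · linarith
        · linarith
      -- rewrite the walk bounds using the coordinate values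
      have hq1' : (q1.length : ℝ) ≤ us i + vs i - 2*M1 + latticeDiam (d - I.card) k := by
        have h1 := hcival us
        have h2 := hcival vs
        linarith [hq1]
      have hq2' : (q2.length : ℝ) ≤ -(us i) - vs i - 2*M2 + latticeDiam (d - I.card) k := by
        have h1 := hcival' us
        have h2 := hcival' vs
        linarith [hq2]
      rcases le_total (us i + vs i - 2*M1) (-(us i) - vs i - 2*M2) with hbr | hbr
      · refine ⟨q1.mapLe (graph_mono hFext), ?_⟩
        rw [SimpleGraph.Walk.length_map _ _]
        have havg : us i + vs i - 2*M1 ≤ (-M2) - M1 := by linarith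
        linarith
      · refine ⟨q2.mapLe (graph_mono hFext), ?_⟩
        rw [SimpleGraph.Walk.length_map _ _]
        have havg : -(us i) - vs i - 2*M2 ≤ (-M2) - M1 := by linarith
        linarith
  obtain ⟨q, hq⟩ := hmid
  have hd := SimpleGraph.dist_le (pu.append (q.append pv.reverse))
  have hlen : (pu.append (q.append pv.reverse)).length
      = pu.length + (q.length + pv.reverse.length) := by
    rw [SimpleGraph.Walk.length_append, SimpleGraph.Walk.length_append]
  have hrev : pv.reverse.length = pv.length := SimpleGraph.Walk.length_reverse _
  have hdist : (((polytopeGraph (convexHull ℝ (V : Set (Fin d → ℝ)))).dist u v : ℕ) : ℝ)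
      ≤ (pu.length : ℝ) + q.length + pv.length := by
    have h1 : ((polytopeGraph (convexHull ℝ (V : Set (Fin d → ℝ)))).dist u v : ℕ)
        ≤ pu.length + (q.length + pv.length) := by
      rw [← hrev]
      rw [← hlen]
      exact hd
    have h2 : ((polytopeGraph (convexHull ℝ (V : Set (Fin d → ℝ)))).dist u v : ℕ)
        ≤ pu.length + q.length + pv.length := by omega
    exact_mod_cast h2
  rw [hgoalsum]
  linarith [hpu, hpv, hq, hdist, hmeq]
end

section
/- Let u^0, u^1, …, u^p be the vertices of a lattice (2,k)-polygon listed consecutively in cyclic order around its boundary (clockwise or counter-clockwise). If u^p = (0,0) and u^0 − u^1 is one of the vectors (1,0), (0,1), (1,1), then for every j with 2 ≤ j < p one has u^j_1 + u^j_2 + 2 ≤ u^{j−1}_1 + u^{j−1}_2. -/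
open scoped BigOperators

/-- Common tail of the core argument. -/
lemma coreTail (a1 a2 c1 c2 d1 d2 : ℝ)
    (ha1 : 0 ≤ a1) (hc1 : 0 ≤ c1) (hc2 : 0 ≤ c2)
    (ha2 : 0 < a2) (hac : c2 < a2)
    (h4 : 0 < (d1 - c1) * (a2 - c2) - (d2 - c2) * (a1 - c1))
    (h6 : 0 < (d1 - c1) * (0 - c2) - (d2 - c2) * (0 - c1))
    (h7 : 0 < (a1 - 0) * (c2 - 0) - (a2 - 0) * (c1 - 0)) :
    d1 < c1 ∧ d2 < c2 := by
  have hc2pos : 0 < c2 := by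
    rcases hc2.eq_or_lt with h | h
    · nlinarith
    · exact h
  have hd2 : d2 < c2 := by
    by_contra hh
    push_neg at hh
    nlinarith [mul_pos hc2pos h4, mul_pos (sub_pos.mpr hac) h6,
      mul_nonneg (sub_nonneg.mpr hh) h7.le]
  have ha1c1 : c1 ≤ a1 := by
    by_contra hh
    push_neg at hh
    nlinarith [mul_pos ha2 (sub_pos.mpr hh), mul_nonneg (sub_nonneg.mpr hac.le) ha1]
  have hd1 : d1 < c1 := by
    by_contra hh
    push_neg at hh
    rcases hc1.eq_or_lt with h | h
    · nlinarith
    · nlinarith [mul_pos h h4, mul_nonneg (sub_nonneg.mpr ha1c1) h6.le,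
        mul_nonneg (sub_nonneg.mpr hh) h7.le]
  exact ⟨hd1, hd2⟩

/-- Core lemma, case `j ≥ 3` (the target edge does not touch `u 1`). -/
lemma corePos (a1 a2 c1 c2 d1 d2 e1 e2 : ℝ)
    (ha1 : 0 ≤ a1) (ha2 : 0 ≤ a2) (hc1 : 0 ≤ c1) (hc2 : 0 ≤ c2)
    (hE : (e1 = -1 ∧ e2 = 0) ∨ (e1 = 0 ∧ e2 = -1) ∨ (e1 = -1 ∧ e2 = -1))
    (h3 : 0 < e1 * (0 - a2) - e2 * (0 - a1))
    (h1 : 0 < e1 * (c2 - a2) - e2 * (c1 - a1))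
    (h4 : 0 < (d1 - c1) * (a2 - c2) - (d2 - c2) * (a1 - c1))
    (h6 : 0 < (d1 - c1) * (0 - c2) - (d2 - c2) * (0 - c1))
    (h7 : 0 < (a1 - 0) * (c2 - 0) - (a2 - 0) * (c1 - 0)) :
    d1 < c1 ∧ d2 < c2 := by
  rcases hE with ⟨rfl, rfl⟩ | ⟨rfl, rfl⟩ | ⟨rfl, rfl⟩
  · exact coreTail a1 a2 c1 c2 d1 d2 ha1 hc1 hc2 (by linarith) (by linarith) h4 h6 h7
  · linarith
  · have ha2pos : 0 < a2 := by linarith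
    have hs : c2 - a2 < c1 - a1 := by linarith
    have hac : c2 < a2 := by
      by_contra hh
      push_neg at hh
      nlinarith [mul_nonneg ha1 (show (0:ℝ) ≤ (c1 - a1) - (c2 - a2) by linarith),
        mul_nonneg (show (0:ℝ) ≤ a2 - a1 by linarith)
          (show (0:ℝ) ≤ c1 - a1 by linarith)]
    exact coreTail a1 a2 c1 c2 d1 d2 ha1 hc1 hc2 ha2pos hac h4 h6 h7

/-- Core lemma, case `j = 2` (edge from `u 1` to `u 2`); `b = u 1`, `d = u 2`,
`e = u 1 - u 0`, `a = u 0 = b - e`. -/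
lemma coreJ1 (a1 a2 b1 b2 d1 d2 e1 e2 : ℝ)
    (hb1 : 0 ≤ b1) (hb2 : 0 ≤ b2)
    (hE : (e1 = -1 ∧ e2 = 0) ∨ (e1 = 0 ∧ e2 = -1) ∨ (e1 = -1 ∧ e2 = -1))
    (hab1 : b1 - a1 = e1) (hab2 : b2 - a2 = e2)
    (h3 : 0 < e1 * (0 - a2) - e2 * (0 - a1))
    (h4 : 0 < (d1 - b1) * (a2 - b2) - (d2 - b2) * (a1 - b1))
    (h6 : 0 < (d1 - b1) * (0 - b2) - (d2 - b2) * (0 - b1)) :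
    d1 < b1 ∧ d2 < b2 := by
  rcases hE with ⟨rfl, rfl⟩ | ⟨rfl, rfl⟩ | ⟨rfl, rfl⟩
  · -- e = (-1,0): a = b + (1,0)
    have ha1 : a1 = b1 + 1 := by linarith
    have ha2 : a2 = b2 := by linarith
    rw [ha1, ha2] at h4
    have hd2 : d2 < b2 := by linarith
    refine ⟨?_, hd2⟩
    by_contra hh
    push_neg at hh
    nlinarith [mul_nonneg hb2 (sub_nonneg.mpr hh), mul_nonneg hb1 (sub_nonneg.mpr hd2.le)]
  · -- e = (0,-1): contradiction with 0 ≤ a1 = b1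
    have : a1 = b1 := by linarith
    nlinarith
  · -- e = (-1,-1)
    have ha1 : a1 = b1 + 1 := by linarith
    have ha2 : a2 = b2 + 1 := by linarith
    have h3' : b1 < b2 := by nlinarith
    rw [ha1, ha2] at h4
    have h4' : d2 - b2 < d1 - b1 := by linarith
    have hd2 : d2 < b2 := by
      by_contra hh
      push_neg at hh
      nlinarith [mul_nonneg hb2 (show (0:ℝ) ≤ (d1 - b1) - (d2 - b2) by linarith),
        mul_nonneg (show (0:ℝ) ≤ b2 - b1 by linarith) (sub_nonneg.mpr hh)]
    refine ⟨?_, hd2⟩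
    by_contra hh
    push_neg at hh
    nlinarith [mul_nonneg hb2 (sub_nonneg.mpr hh), mul_nonneg hb1 (sub_nonneg.mpr hd2.le)]

/-- Points of a segment lie on the line through its endpoints. -/
lemma lineZero (x y z : Fin 2 → ℝ) (hz : z ∈ segment ℝ x y) :
    (y 0 - x 0) * (z 1 - x 1) - (y 1 - x 1) * (z 0 - x 0) = 0 := by
  rw [segment_eq_image] at hz
  obtain ⟨θ, _, hθ⟩ := hz
  have h0 : z 0 = (1 - θ) * x 0 + θ * y 0 := by
    rw [← hθ]; simp [Pi.add_apply, Pi.smul_apply, smul_eq_mul]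
  have h1 : z 1 = (1 - θ) * x 1 + θ * y 1 := by
    rw [← hθ]; simp [Pi.add_apply, Pi.smul_apply, smul_eq_mul]
  rw [h0, h1]; ring

/-- Points of `P` on the line through an extreme segment lie in the segment. -/
lemma lineA1 (P : Set (Fin 2 → ℝ)) (x y : Fin 2 → ℝ)
    (hxP : x ∈ P) (hyP : y ∈ P) (hne : x ≠ y)
    (hext : IsExtreme ℝ P (segment ℝ x y))
    (w : Fin 2 → ℝ) (hw : w ∈ P)
    (h0 : (y 0 - x 0) * (w 1 - x 1) - (y 1 - x 1) * (w 0 - x 0) = 0) :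
    w ∈ segment ℝ x y := by
  have he : ¬ (y 0 - x 0 = 0 ∧ y 1 - x 1 = 0) := by
    rintro ⟨h1, h2⟩
    apply hne
    funext r
    fin_cases r <;> [skip; skip] <;> simp_all <;> linarith
  have key : ∃ t : ℝ, w 0 = x 0 + t * (y 0 - x 0) ∧ w 1 = x 1 + t * (y 1 - x 1) := by
    by_cases hc : y 0 - x 0 = 0
    · have hc1 : y 1 - x 1 ≠ 0 := fun h => he ⟨hc, h⟩
      have hw0 : w 0 = x 0 := by
        have : (y 1 - x 1) * (w 0 - x 0) = 0 := by rw [hc] at h0; linarith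
        rcases mul_eq_zero.mp this with h | h
        · exact absurd h hc1
        · linarith
      refine ⟨(w 1 - x 1) / (y 1 - x 1), ?_, ?_⟩
      · rw [hc, hw0]; ring
      · field_simp; ring
    · refine ⟨(w 0 - x 0) / (y 0 - x 0), ?_, ?_⟩
      · field_simp; ring
      · field_simp
        first
        | linear_combination h0
        | linear_combination -h0
        | linear_combination 2 * h0
        | linear_combination -2 * h0
  obtain ⟨t, ht0, ht1⟩ := key
  rcases lt_trichotomy t 0 with h | h | h
  · -- x ∈ openSegment w y ; extremeness gives w ∈ segment
    have hxo : x ∈ openSegment ℝ w y := by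
      have h1t : (0 : ℝ) < 1 - t := by linarith
      have h1t' : (1:ℝ) - t ≠ 0 := by linarith
      refine ⟨1 / (1 - t), -t / (1 - t), div_pos one_pos h1t,
        div_pos (by linarith) h1t, by field_simp <;> ring, ?_⟩
      funext r
      fin_cases r <;>
        simp only [Fin.mk_zero, Fin.mk_one, Pi.add_apply, Pi.smul_apply, smul_eq_mul] <;>
        field_simp <;>
        first
        | linear_combination ht0
        | linear_combination -ht0
        | linear_combination ht1
        | linear_combination -ht1
        | linear_combination t * ht0
        | linear_combination -(t * ht0)
        | linear_combination t * ht1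
        | linear_combination -(t * ht1)
        | linear_combination (1 - t) * ht0
        | linear_combination -((1 - t) * ht0)
        | linear_combination (1 - t) * ht1
        | linear_combination -((1 - t) * ht1)
    exact hext.2 hw hyP (left_mem_segment ℝ x y) hxo
  · -- t = 0 : w = x
    subst h
    have : w = x := by funext r; fin_cases r <;> simp_all
    rw [this]; exact left_mem_segment ℝ x y
  · rcases le_or_gt t 1 with h1 | h1
    · exact ⟨1 - t, t, by linarith, h.le, by ring, by
        funext r
        fin_cases r <;>
          simp only [Fin.mk_zero, Fin.mk_one, Pi.add_apply, Pi.smul_apply, smul_eq_mul] <;>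
          nlinarith [ht0, ht1]⟩
    · -- y ∈ openSegment x w
      have hyo : y ∈ openSegment ℝ x w := by
        have ht : (0:ℝ) < t := by linarith
        have hlt : 1 / t < 1 := (div_lt_one ht).mpr h1
        have ht' : t ≠ 0 := by linarith
        refine ⟨1 - 1 / t, 1 / t, by linarith, by positivity, by ring, ?_⟩
        funext r
        fin_cases r <;>
          simp only [Fin.mk_zero, Fin.mk_one, Pi.add_apply, Pi.smul_apply, smul_eq_mul] <;>
          field_simp <;>
          first
          | linear_combination ht0
          | linear_combination -ht0
          | linear_combination ht1
          | linear_combination -ht1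
          | linear_combination t * ht0
          | linear_combination -(t * ht0)
          | linear_combination t * ht1
          | linear_combination -(t * ht1)
      exact hext.right_mem_of_mem_openSegment hxP hw (right_mem_segment ℝ x y) hyo

/-- Two points of `P` cannot lie strictly on opposite sides of the line of an
extreme segment. -/
lemma lineA3 (P : Set (Fin 2 → ℝ)) (hconv : Convex ℝ P) (x y : Fin 2 → ℝ)
    (hxP : x ∈ P) (hyP : y ∈ P) (hne : x ≠ y)
    (hext : IsExtreme ℝ P (segment ℝ x y))
    (w₁ w₂ : Fin 2 → ℝ) (hw₁ : w₁ ∈ P) (hw₂ : w₂ ∈ P)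
    (h₁ : 0 < (y 0 - x 0) * (w₁ 1 - x 1) - (y 1 - x 1) * (w₁ 0 - x 0))
    (h₂ : (y 0 - x 0) * (w₂ 1 - x 1) - (y 1 - x 1) * (w₂ 0 - x 0) < 0) :
    False := by
  set s := (y 0 - x 0) * (w₁ 1 - x 1) - (y 1 - x 1) * (w₁ 0 - x 0) with hs
  set s' := -((y 0 - x 0) * (w₂ 1 - x 1) - (y 1 - x 1) * (w₂ 0 - x 0)) with hs'
  have hs'pos : 0 < s' := by simp only [hs']; linarith
  have hsum : 0 < s + s' := by linarith
  set lam := s / (s + s') with hlam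
  have hlam0 : 0 < lam := div_pos h₁ hsum
  have hlam1 : lam < 1 := by
    rw [hlam, div_lt_one hsum]; linarith
  set q := (1 - lam) • w₁ + lam • w₂ with hq
  have hqP : q ∈ P := hconv hw₁ hw₂ (by linarith) hlam0.le (by ring)
  have hq0 : q 0 = (1 - lam) * w₁ 0 + lam * w₂ 0 := by
    simp [hq, Pi.add_apply, Pi.smul_apply, smul_eq_mul]
  have hq1 : q 1 = (1 - lam) * w₁ 1 + lam * w₂ 1 := by
    simp [hq, Pi.add_apply, Pi.smul_apply, smul_eq_mul]
  have hqline : (y 0 - x 0) * (q 1 - x 1) - (y 1 - x 1) * (q 0 - x 0) = 0 := by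
    rw [hq0, hq1]
    have : (y 0 - x 0) * (((1 - lam) * w₁ 1 + lam * w₂ 1) - x 1) -
        (y 1 - x 1) * (((1 - lam) * w₁ 0 + lam * w₂ 0) - x 0)
        = (1 - lam) * s + lam * (-s') := by rw [hs, hs']; ring
    rw [this, hlam]
    field_simp
    ring
  have hqseg : q ∈ segment ℝ x y := lineA1 P x y hxP hyP hne hext q hqP hqline
  have hqopen : q ∈ openSegment ℝ w₁ w₂ :=
    ⟨1 - lam, lam, by linarith, hlam0, by ring, rfl⟩
  have := hext.2 hw₁ hw₂ hqseg hqopen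
  have := lineZero x y w₁ this
  linarith

open Fin.NatCast Fin.CommRing

set_option maxHeartbeats 1000000 in
/-- Let `u 0, …, u p` be the vertices of a (two-dimensional) lattice `(2,k)`-polygon,
listed consecutively in cyclic order around its boundary. If `u p = (0,0)` and
`u 0 − u 1` is `(1,0)`, `(0,1)`, or `(1,1)`, then
`u j 1 + u j 2 + 2 ≤ u (j−1) 1 + u (j−1) 2` whenever `2 ≤ j < p`. -/
theorem polygon_coord_sum_decreasing (k p : ℕ) (P : Set (Fin 2 → ℝ))
    (hP : IsLatticePolytope 2 k P) (hdim : affineSpan ℝ P = ⊤)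
    (u : Fin (p + 1) → (Fin 2 → ℝ))
    (hinj : Function.Injective u)
    (hrange : P.extremePoints ℝ = Set.range u)
    (hadj : ∀ j : Fin (p + 1), (polytopeGraph P).Adj (u j) (u (j + 1)))
    (hlast : u (Fin.last p) = 0)
    (hfirst : u 0 - u 1 = ![1, 0] ∨ u 0 - u 1 = ![0, 1] ∨ u 0 - u 1 = ![1, 1]) :
    ∀ j : Fin (p + 1), 2 ≤ (j : ℕ) → (j : ℕ) < p →
      u j 0 + u j 1 + 2 ≤ u (j - 1) 0 + u (j - 1) 1 := by
  intro j hj2 hjp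
  have hp3 : 3 ≤ p := by omega
  obtain ⟨V, hV, hPeq⟩ := hP
  have hconv : Convex ℝ P := by rw [hPeq]; exact convex_convexHull ℝ _
  have hExtPt : ∀ i, u i ∈ P.extremePoints ℝ := by
    intro i; rw [hrange]; exact ⟨i, rfl⟩
  have hmem : ∀ i, u i ∈ P := fun i => extremePoints_subset (hExtPt i)
  have hneq : ∀ m : Fin (p + 1), u m ≠ u (m + 1) := fun m => (hadj m).1
  have hextS : ∀ m, IsExtreme ℝ P (segment ℝ (u m) (u (m + 1))) := fun m => (hadj m).2.2.2
  -- coordinates are natural numbers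
  have hVmem : ∀ i : Fin (p + 1), u i ∈ V := by
    intro i
    have h := hExtPt i
    rw [hPeq] at h
    exact_mod_cast extremePoints_convexHull_subset h
  have hnat : ∀ (i : Fin (p + 1)) (r : Fin 2), ∃ n : ℕ, u i r = n := by
    intro i r
    obtain ⟨n, _, hn⟩ := hV (u i) (hVmem i) r
    exact ⟨n, hn⟩
  have hnn : ∀ (i : Fin (p + 1)) (r : Fin 2), (0 : ℝ) ≤ u i r := by
    intro i r
    obtain ⟨n, hn⟩ := hnat i r
    rw [hn]; exact Nat.cast_nonneg n
  -- the side function of each edge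
  set Lf : Fin (p + 1) → (Fin 2 → ℝ) → ℝ := fun m w =>
    (u (m + 1) 0 - u m 0) * (w 1 - u m 1) - (u (m + 1) 1 - u m 1) * (w 0 - u m 0)
    with hLf
  -- strictness off the edge
  have hA2 : ∀ m i : Fin (p + 1), i ≠ m → i ≠ m + 1 → Lf m (u i) ≠ 0 := by
    intro m i him him1 h0
    have hseg : u i ∈ segment ℝ (u m) (u (m + 1)) :=
      lineA1 P (u m) (u (m + 1)) (hmem m) (hmem (m + 1)) (hneq m) (hextS m) (u i)
        (hmem i) (by simpa [hLf] using h0)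
    have hiopen : u i ∈ openSegment ℝ (u m) (u (m + 1)) :=
      mem_openSegment_of_ne_left_right
        (fun h => him (hinj h).symm) (fun h => him1 (hinj h).symm) hseg
    exact him ((hinj ((hExtPt i).2 (hmem m) (hmem (m + 1)) hiopen)).symm)
  have hA3' : ∀ m : Fin (p + 1), ∀ w₁ w₂, w₁ ∈ P → w₂ ∈ P →
      0 < Lf m w₁ → Lf m w₂ < 0 → False := by
    intro m w₁ w₂ h1 h2 h3 h4
    exact lineA3 P hconv (u m) (u (m + 1)) (hmem m) (hmem (m + 1)) (hneq m) (hextS m)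
      w₁ w₂ h1 h2 (by simpa [hLf] using h3) (by simpa [hLf] using h4)
  -- basic Fin inequalities
  have hfin20 : ∀ m : Fin (p + 1), m + 2 ≠ m := by
    intro m h
    have h2 : (2 : Fin (p + 1)) = 0 := by
      have := congrArg (fun z => z - m) h
      simpa [add_comm, add_sub_cancel_right] using this
    have : ((2 : ℕ) : Fin (p + 1)) = ((0 : ℕ) : Fin (p + 1)) := by
      simpa using h2
    have := congrArg Fin.val this
    rw [Fin.val_cast_of_lt (by omega), Fin.val_cast_of_lt (by omega)] at this
    omega
  have hfin10 : ∀ m : Fin (p + 1), m + 1 ≠ m := by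
    intro m h
    have h2 : (1 : Fin (p + 1)) = 0 := by
      have := congrArg (fun z => z - m) h
      simpa [add_comm, add_sub_cancel_right] using this
    have : ((1 : ℕ) : Fin (p + 1)) = ((0 : ℕ) : Fin (p + 1)) := by simpa using h2
    have := congrArg Fin.val this
    rw [Fin.val_cast_of_lt (by omega), Fin.val_cast_of_lt (by omega)] at this
    omega
  have hfin21 : ∀ m : Fin (p + 1), m + 2 ≠ m + 1 := by
    intro m h
    have : m + 1 + 1 = m + 1 := by
      rw [show (2 : Fin (p+1)) = 1 + 1 by norm_num, ← add_assoc] at h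
      exact h
    exact hfin10 (m + 1) this
  have hfin02 : ∀ m : Fin (p + 1), m ≠ m + 1 + 1 := by
    intro m h
    apply hfin20 m
    rw [show (2 : Fin (p+1)) = 1 + 1 by norm_num, ← add_assoc]
    exact h.symm
  -- dichotomy per edge
  have hdich : ∀ m : Fin (p + 1),
      (∀ i, i ≠ m → i ≠ m + 1 → 0 < Lf m (u i)) ∨
      (∀ i, i ≠ m → i ≠ m + 1 → Lf m (u i) < 0) := by
    intro m
    rcases lt_trichotomy (Lf m (u (m + 2))) 0 with h | h | h
    · right; intro i him him1
      rcases lt_trichotomy (Lf m (u i)) 0 with h' | h' | h'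
      · exact h'
      · exact absurd h' (hA2 m i him him1)
      · exact absurd (hA3' m (u i) (u (m + 2)) (hmem i) (hmem _) h' h) (fun f => f)
    · exact absurd h (hA2 m (m + 2) (hfin20 m) (hfin21 m))
    · left; intro i him him1
      rcases lt_trichotomy (Lf m (u i)) 0 with h' | h' | h'
      · exact absurd (hA3' m (u (m + 2)) (u i) (hmem _) (hmem i) h h') (fun f => f)
      · exact absurd h' (hA2 m i him him1)
      · exact h'
  -- the key identity linking consecutive edges
  have hkey : ∀ m : Fin (p + 1), Lf m (u (m + 2)) = Lf (m + 1) (u m) := by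
    intro m
    have h2 : (m + 2 : Fin (p + 1)) = (m + 1) + 1 := by
      rw [show (2 : Fin (p+1)) = 1 + 1 by norm_num, ← add_assoc]
    simp only [hLf, h2]
    ring
  -- uniform orientation
  have hstepPos : ∀ m : Fin (p + 1),
      (∀ i, i ≠ m → i ≠ m + 1 → 0 < Lf m (u i)) →
      (∀ i, i ≠ m + 1 → i ≠ m + 1 + 1 → 0 < Lf (m + 1) (u i)) := by
    intro m hm
    have h1 : 0 < Lf m (u (m + 2)) := hm (m + 2) (hfin20 m) (hfin21 m)
    have h2 : 0 < Lf (m + 1) (u m) := by rw [← hkey m]; exact h1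
    rcases hdich (m + 1) with h | h
    · exact h
    · exfalso
      have := h m (hfin10 m).symm (hfin02 m)
      linarith
  have hstepNeg : ∀ m : Fin (p + 1),
      (∀ i, i ≠ m → i ≠ m + 1 → Lf m (u i) < 0) →
      (∀ i, i ≠ m + 1 → i ≠ m + 1 + 1 → Lf (m + 1) (u i) < 0) := by
    intro m hm
    have h1 : Lf m (u (m + 2)) < 0 := hm (m + 2) (hfin20 m) (hfin21 m)
    have h2 : Lf (m + 1) (u m) < 0 := by rw [← hkey m]; exact h1
    rcases hdich (m + 1) with h | h
    · exfalso
      have := h m (hfin10 m).symm (hfin02 m)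
      linarith
    · exact h
  have hglobal :
      (∀ m : Fin (p + 1), ∀ i, i ≠ m → i ≠ m + 1 → 0 < Lf m (u i)) ∨
      (∀ m : Fin (p + 1), ∀ i, i ≠ m → i ≠ m + 1 → Lf m (u i) < 0) := by
    rcases hdich 0 with h0 | h0
    · left
      have hnatstep : ∀ n : ℕ, ∀ i, i ≠ (n : Fin (p+1)) → i ≠ (n : Fin (p+1)) + 1 →
          0 < Lf (n : Fin (p+1)) (u i) := by
        intro n
        induction n with
        | zero => simpa using h0
        | succ n ih =>
          have hc : ((n + 1 : ℕ) : Fin (p + 1)) = (n : Fin (p+1)) + 1 := by push_cast; ring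
          rw [hc]
          exact hstepPos _ ih
      intro m
      have := hnatstep m.val
      rwa [Fin.cast_val_eq_self] at this
    · right
      have hnatstep : ∀ n : ℕ, ∀ i, i ≠ (n : Fin (p+1)) → i ≠ (n : Fin (p+1)) + 1 →
          Lf (n : Fin (p+1)) (u i) < 0 := by
        intro n
        induction n with
        | zero => simpa using h0
        | succ n ih =>
          have hc : ((n + 1 : ℕ) : Fin (p + 1)) = (n : Fin (p+1)) + 1 := by push_cast; ring
          rw [hc]
          exact hstepNeg _ ih
      intro m
      have := hnatstep m.val
      rwa [Fin.cast_val_eq_self] at this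
  -- index bookkeeping
  set J : ℕ := (j : ℕ) with hJ
  have hjval : (j : Fin (p + 1)) = ((J : ℕ) : Fin (p + 1)) := by
    rw [hJ, Fin.cast_val_eq_self]
  set jm : Fin (p + 1) := ((J - 1 : ℕ) : Fin (p + 1)) with hjm
  have hjmval : (jm : ℕ) = J - 1 := by
    rw [hjm, Fin.val_cast_of_lt (by omega)]
  have hjmadd : jm + 1 = j := by
    rw [hjm, show ((J - 1 : ℕ) : Fin (p+1)) + 1 = ((J - 1 + 1 : ℕ) : Fin (p+1)) by push_cast; ring,
      show J - 1 + 1 = J by omega, hjval]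
  have hjsub : j - 1 = jm := by
    rw [← hjmadd]; ring
  have hlast1 : (Fin.last p) + 1 = 0 := by
    apply Fin.ext
    rw [Fin.add_def]
    simp [Fin.last]
  -- component values of the first edge
  have hfirstE :
      ((u 1 0 - u 0 0 = -1) ∧ (u 1 1 - u 0 1 = 0)) ∨
      ((u 1 0 - u 0 0 = 0) ∧ (u 1 1 - u 0 1 = -1)) ∨
      ((u 1 0 - u 0 0 = -1) ∧ (u 1 1 - u 0 1 = -1)) := by
    rcases hfirst with h | h | h
    · left
      constructor
      · have := congrFun h 0; simp [Pi.sub_apply] at this; linarith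
      · have := congrFun h 1; simp [Pi.sub_apply] at this; linarith
    · right; left
      constructor
      · have := congrFun h 0; simp [Pi.sub_apply] at this; linarith
      · have := congrFun h 1; simp [Pi.sub_apply] at this; linarith
    · right; right
      constructor
      · have := congrFun h 0; simp [Pi.sub_apply] at this; linarith
      · have := congrFun h 1; simp [Pi.sub_apply] at this; linarith
  -- distinctness of the relevant indices
  have hval0 : ((0 : Fin (p + 1)) : ℕ) = 0 := rfl
  have hval1 : ((1 : Fin (p + 1)) : ℕ) = 1 := by
    rw [show (1 : Fin (p+1)) = ((1:ℕ) : Fin (p+1)) by norm_num, Fin.val_cast_of_lt (by omega)]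
  have hvallast : ((Fin.last p : Fin (p + 1)) : ℕ) = p := rfl
  have hne_last0 : (Fin.last p : Fin (p+1)) ≠ 0 := Fin.ne_of_val_ne (by omega)
  have hne_last1 : (Fin.last p : Fin (p+1)) ≠ (0 : Fin (p+1)) + 1 := by
    rw [zero_add]; exact Fin.ne_of_val_ne (by rw [hvallast, hval1]; omega)
  have hne_lastjm : (Fin.last p : Fin (p+1)) ≠ jm :=
    Fin.ne_of_val_ne (by rw [hvallast, hjmval]; omega)
  have hne_lastj : (Fin.last p : Fin (p+1)) ≠ jm + 1 := by
    rw [hjmadd]; exact Fin.ne_of_val_ne (by rw [hvallast]; omega)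
  have hne_0jm : (0 : Fin (p+1)) ≠ jm := Fin.ne_of_val_ne (by rw [hval0, hjmval]; omega)
  have hne_0j : (0 : Fin (p+1)) ≠ jm + 1 := by
    rw [hjmadd]; exact Fin.ne_of_val_ne (by rw [hval0]; omega)
  have hne_jmlast : jm ≠ Fin.last p := hne_lastjm.symm
  have hne_jm0 : jm ≠ (Fin.last p) + 1 := by rw [hlast1]; exact hne_0jm.symm
  -- extract the five side facts, in both orientation cases
  have hL0 : u (Fin.last p) 0 = 0 := by rw [hlast]; rfl
  have hL1 : u (Fin.last p) 1 = 0 := by rw [hlast]; rfl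
  have hu0 : u ((Fin.last p) + 1) = u 0 := by rw [hlast1]
  rw [hjsub]
  -- final numeric step
  have hfinish : u j 0 < u jm 0 → u j 1 < u jm 1 →
      u j 0 + u j 1 + 2 ≤ u jm 0 + u jm 1 := by
    intro h1 h2
    obtain ⟨n1, hn1⟩ := hnat j 0
    obtain ⟨n2, hn2⟩ := hnat j 1
    obtain ⟨m1, hm1⟩ := hnat jm 0
    obtain ⟨m2, hm2⟩ := hnat jm 1
    rw [hn1, hm1] at h1
    rw [hn2, hm2] at h2
    rw [hn1, hn2, hm1, hm2]
    have g1 : n1 < m1 := by exact_mod_cast h1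
    have g2 : n2 < m2 := by exact_mod_cast h2
    have : n1 + n2 + 2 ≤ m1 + m2 := by omega
    exact_mod_cast this
  by_cases hJ2 : J = 2
  · -- use coreJ1 with b = u jm = u 1, d = u j
    have hjm1 : jm = 1 := by
      apply Fin.ext; rw [hjmval, hval1]; omega
    have hfirstE' := hfirstE
    rw [← hjm1] at hfirstE'
    rcases hglobal with hPos | hNeg
    · have h3 := hPos 0 (Fin.last p) hne_last0 hne_last1
      have h4 := hPos jm 0 hne_0jm hne_0j
      have h6 := hPos jm (Fin.last p) hne_lastjm hne_lastj
      simp only [hLf, zero_add, hjmadd, hL0, hL1] at h3 h4 h6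
      rw [← hjm1] at h3
      have := coreJ1 (u 0 0) (u 0 1) (u jm 0) (u jm 1) (u j 0) (u j 1)
        (u jm 0 - u 0 0) (u jm 1 - u 0 1) (hnn jm 0) (hnn jm 1) hfirstE' rfl rfl
        (by linarith) (by linarith) (by linarith)
      exact hfinish this.1 this.2
    · have h3 := hNeg 0 (Fin.last p) hne_last0 hne_last1
      have h4 := hNeg jm 0 hne_0jm hne_0j
      have h6 := hNeg jm (Fin.last p) hne_lastjm hne_lastj
      simp only [hLf, zero_add, hjmadd, hL0, hL1] at h3 h4 h6
      rw [← hjm1] at h3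
      have hE' : ((u jm 1 - u 0 1 = -1) ∧ (u jm 0 - u 0 0 = 0)) ∨
          ((u jm 1 - u 0 1 = 0) ∧ (u jm 0 - u 0 0 = -1)) ∨
          ((u jm 1 - u 0 1 = -1) ∧ (u jm 0 - u 0 0 = -1)) := by
        rcases hfirstE' with ⟨hx, hy⟩ | ⟨hx, hy⟩ | ⟨hx, hy⟩
        · exact Or.inr (Or.inl ⟨hy, hx⟩)
        · exact Or.inl ⟨hy, hx⟩
        · exact Or.inr (Or.inr ⟨hy, hx⟩)
      have := coreJ1 (u 0 1) (u 0 0) (u jm 1) (u jm 0) (u j 1) (u j 0)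
        (u jm 1 - u 0 1) (u jm 0 - u 0 0) (hnn jm 1) (hnn jm 0) hE' rfl rfl
        (by linarith) (by linarith) (by linarith)
      exact hfinish this.2 this.1
  · -- J ≥ 3 : use corePos
    have hJ3 : 3 ≤ J := by omega
    have hne_jm_0 : jm ≠ 0 := Fin.ne_of_val_ne (by rw [hjmval, hval0]; omega)
    have hne_jm_1 : jm ≠ (0 : Fin (p+1)) + 1 := by
      rw [zero_add]; exact Fin.ne_of_val_ne (by rw [hjmval, hval1]; omega)
    rcases hglobal with hPos | hNeg
    · have h3 := hPos 0 (Fin.last p) hne_last0 hne_last1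
      have h1 := hPos 0 jm hne_jm_0 hne_jm_1
      have h4 := hPos jm 0 hne_0jm hne_0j
      have h6 := hPos jm (Fin.last p) hne_lastjm hne_lastj
      have h7 := hPos (Fin.last p) jm hne_jmlast hne_jm0
      simp only [hLf, zero_add, hjmadd, hu0, hL0, hL1] at h3 h1 h4 h6 h7
      have := corePos (u 0 0) (u 0 1) (u jm 0) (u jm 1) (u j 0) (u j 1)
        (u 1 0 - u 0 0) (u 1 1 - u 0 1)
        (hnn 0 0) (hnn 0 1) (hnn jm 0) (hnn jm 1) hfirstE
        (by linarith) (by linarith) (by linarith) (by linarith) (by linarith)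
      exact hfinish this.1 this.2
    · have h3 := hNeg 0 (Fin.last p) hne_last0 hne_last1
      have h1 := hNeg 0 jm hne_jm_0 hne_jm_1
      have h4 := hNeg jm 0 hne_0jm hne_0j
      have h6 := hNeg jm (Fin.last p) hne_lastjm hne_lastj
      have h7 := hNeg (Fin.last p) jm hne_jmlast hne_jm0
      simp only [hLf, zero_add, hjmadd, hu0, hL0, hL1] at h3 h1 h4 h6 h7
      have hE' : ((u 1 1 - u 0 1 = -1) ∧ (u 1 0 - u 0 0 = 0)) ∨
          ((u 1 1 - u 0 1 = 0) ∧ (u 1 0 - u 0 0 = -1)) ∨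
          ((u 1 1 - u 0 1 = -1) ∧ (u 1 0 - u 0 0 = -1)) := by
        rcases hfirstE with ⟨hx, hy⟩ | ⟨hx, hy⟩ | ⟨hx, hy⟩
        · exact Or.inr (Or.inl ⟨hy, hx⟩)
        · exact Or.inl ⟨hy, hx⟩
        · exact Or.inr (Or.inr ⟨hy, hx⟩)
      have := corePos (u 0 1) (u 0 0) (u jm 1) (u jm 0) (u j 1) (u j 0)
        (u 1 1 - u 0 1) (u 1 0 - u 0 0)
        (hnn 0 1) (hnn 0 0) (hnn jm 1) (hnn jm 0) hE'
        (by linarith) (by linarith) (by linarith) (by linarith) (by linarith)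
      exact hfinish this.2 this.1
end
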